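/- arXiv:1612.02389 — 5 statements merged into one kernel-verified Lean document; each statement's English description precedes it below -/
import Mathlib

section
/- Let ω_1, ..., ω_ℓ be i.i.d. real random variables with P[ω_1 ≥ x] ≤ C x^{-γ} for all x ≥ 1, where γ ∈ (1,2) and C > 0. For M > 0 and V(n) := e^{M²} (ℓ (log ℓ) n)^{1/(2γ)}, let A_ℓ be the event that there exist i < j in {1,...,ℓ} with min(ω_i, ω_j) ≥ V(j-i). Then P[A_ℓ] ≤ C' e^{-2γM²} for a constant C' depending only on C and γ (uniformly in ℓ ≥ 2). -/
open MeasureTheory ProbabilityTheory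

open Finset in
lemma pair_sum_le (ℓ : ℕ) (hℓ : 2 ≤ ℓ) :
    ∑ p ∈ (Finset.Icc 1 ℓ ×ˢ Finset.Icc 1 ℓ).filter (fun p => p.1 < p.2),
      ((p.2 : ℝ) - (p.1 : ℝ))⁻¹ ≤ 3 * ℓ * Real.log ℓ := by
  set S := (Finset.Icc 1 ℓ ×ˢ Finset.Icc 1 ℓ).filter (fun p : ℕ × ℕ => p.1 < p.2) with hS
  have hmem : ∀ p ∈ S, p.1 < p.2 ∧ p.1 ≤ ℓ ∧ p.2 ≤ ℓ ∧ 1 ≤ p.1 := by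
    intro p hp
    simp only [hS, Finset.mem_filter, Finset.mem_product, Finset.mem_Icc] at hp
    omega
  -- rewrite terms as Nat casts
  have h1 : ∑ p ∈ S, ((p.2 : ℝ) - (p.1 : ℝ))⁻¹
      = ∑ p ∈ S, ((((p.2 - p.1 : ℕ) : ℝ))⁻¹) := by
    refine Finset.sum_congr rfl fun p hp => ?_
    have := (hmem p hp).1
    rw [Nat.cast_sub this.le]
  rw [h1]
  have hinj : Set.InjOn (fun p : ℕ × ℕ => (p.2 - p.1, p.2)) S := by
    intro p hp q hq h
    have hp' := hmem p hp; have hq' := hmem q hq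
    simp only [Prod.mk.injEq] at h
    have : p.1 = q.1 := by omega
    exact Prod.ext this h.2
  have h2 : ∑ p ∈ S, (((p.2 - p.1 : ℕ) : ℝ))⁻¹
      = ∑ q ∈ S.image (fun p : ℕ × ℕ => (p.2 - p.1, p.2)), ((q.1 : ℝ))⁻¹ := by
    rw [Finset.sum_image ?_]
    intro p hp q hq h; exact hinj hp hq h
  rw [h2]
  have h3 : ∑ q ∈ S.image (fun p : ℕ × ℕ => (p.2 - p.1, p.2)), ((q.1 : ℝ))⁻¹
      ≤ ∑ q ∈ Finset.Icc 1 ℓ ×ˢ Finset.Icc 1 ℓ, ((q.1 : ℝ))⁻¹ := by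
    refine Finset.sum_le_sum_of_subset_of_nonneg ?_ (fun q _ _ => by positivity)
    intro q hq
    simp only [Finset.mem_image] at hq
    obtain ⟨p, hp, rfl⟩ := hq
    have := hmem p hp
    simp only [Finset.mem_product, Finset.mem_Icc]
    omega
  refine h3.trans ?_
  have h4 : ∑ q ∈ Finset.Icc 1 ℓ ×ˢ Finset.Icc 1 ℓ, ((q.1 : ℝ))⁻¹
      = (ℓ : ℝ) * ∑ k ∈ Finset.Icc 1 ℓ, ((k : ℝ))⁻¹ := by
    rw [Finset.sum_product, Finset.mul_sum]
    simp [Finset.sum_const, Nat.card_Icc, nsmul_eq_mul]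
  rw [h4]
  have h5 : ∑ k ∈ Finset.Icc 1 ℓ, ((k : ℝ))⁻¹ = (harmonic ℓ : ℝ) := by
    simp only [harmonic_eq_sum_Icc, Rat.cast_sum, Rat.cast_inv, Rat.cast_natCast]
  rw [h5]
  have h6 : (harmonic ℓ : ℝ) ≤ 1 + Real.log ℓ := harmonic_le_one_add_log ℓ
  have hlog : Real.log 2 ≤ Real.log ℓ := by
    apply Real.log_le_log (by norm_num)
    exact_mod_cast hℓ
  have hlog2 : (0.6931471803 : ℝ) < Real.log 2 := Real.log_two_gt_d9
  have h7 : 1 + Real.log ℓ ≤ 3 * Real.log ℓ := by nlinarith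
  have hℓ0 : (0:ℝ) ≤ ℓ := by positivity
  calc (ℓ : ℝ) * (harmonic ℓ : ℝ) ≤ (ℓ : ℝ) * (3 * Real.log ℓ) := by
        apply mul_le_mul_of_nonneg_left (h6.trans h7) hℓ0
    _ = 3 * ℓ * Real.log ℓ := by ring



/-- Union bound for dual peaks: if `ω_1,…,ω_ℓ` are i.i.d. with
`P[ω ≥ x] ≤ C x^{-γ}` (`γ ∈ (1,2)`) and
`V(n) = e^{M²}(ℓ (log ℓ) n)^{1/(2γ)}`, then the probability that some pair
`i < j ≤ ℓ` satisfies `min(ω_i,ω_j) ≥ V(j-i)` is at most `C' e^{-2γM²}`,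
uniformly in `ℓ ≥ 2` and `M > 0`. -/
theorem dual_peak_probability_bound
    {Ω : Type*} [MeasurableSpace Ω] (μ : Measure Ω) [IsProbabilityMeasure μ]
    (ω : ℕ → Ω → ℝ) (hωmeas : ∀ n, Measurable (ω n))
    (hωindep : iIndepFun ω μ)
    (hωid : ∀ n, Measure.map (ω n) μ = Measure.map (ω 1) μ)
    (γ : ℝ) (hγ1 : 1 < γ) (hγ2 : γ < 2) (C : ℝ) (hC : 0 < C)
    (htail : ∀ x : ℝ, 1 ≤ x → (μ {w | x ≤ ω 1 w}).toReal ≤ C * x ^ (-γ)) :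
    ∃ C' > 0, ∀ ℓ : ℕ, 2 ≤ ℓ → ∀ M : ℝ, 0 < M →
      (μ {w | ∃ i j : ℕ, 1 ≤ i ∧ i < j ∧ j ≤ ℓ ∧
          Real.exp (M ^ 2) *
            ((ℓ : ℝ) * Real.log ℓ * ((j : ℝ) - i)) ^ (1 / (2 * γ))
          ≤ min (ω i w) (ω j w)}).toReal
        ≤ C' * Real.exp (-2 * γ * M ^ 2) := by
  have hγ0 : 0 < γ := by linarith
  refine ⟨3 * C ^ 2, by positivity, ?_⟩
  intro ℓ hℓ M hM
  set S := (Finset.Icc 1 ℓ ×ˢ Finset.Icc 1 ℓ).filter (fun p : ℕ × ℕ => p.1 < p.2) with hS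
  set V : ℕ × ℕ → ℝ := fun p =>
    Real.exp (M ^ 2) * ((ℓ : ℝ) * Real.log ℓ * ((p.2 : ℝ) - p.1)) ^ (1 / (2 * γ)) with hV
  set E : ℕ × ℕ → Set Ω := fun p => ω p.1 ⁻¹' Set.Ici (V p) ∩ ω p.2 ⁻¹' Set.Ici (V p) with hE
  have hℓ1 : (1:ℝ) < ℓ := by exact_mod_cast Nat.lt_of_lt_of_le one_lt_two hℓ
  have hlogℓ : 0 < Real.log ℓ := Real.log_pos hℓ1
  -- basic facts on S
  have hmem : ∀ p ∈ S, p.1 < p.2 ∧ p.1 ≤ ℓ ∧ p.2 ≤ ℓ ∧ 1 ≤ p.1 := by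
    intro p hp
    simp only [hS, Finset.mem_filter, Finset.mem_product, Finset.mem_Icc] at hp
    omega
  -- positivity of X and V and tail bound per pair
  have hX : ∀ p ∈ S, (1:ℝ) ≤ (ℓ : ℝ) * Real.log ℓ * ((p.2 : ℝ) - p.1) := by
    intro p hp
    obtain ⟨h1, _, _, _⟩ := hmem p hp
    have hn : (1:ℝ) ≤ (p.2 : ℝ) - p.1 := by
      have : (p.1 : ℝ) + 1 ≤ p.2 := by exact_mod_cast h1
      linarith
    have h2 : (2:ℝ) ≤ ℓ := by exact_mod_cast hℓ
    have hlog2 : Real.log 2 ≤ Real.log ℓ := Real.log_le_log (by norm_num) (by exact_mod_cast hℓ)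
    have hl2 : (0.6931471803 : ℝ) < Real.log 2 := Real.log_two_gt_d9
    have ha : (2:ℝ) * Real.log 2 ≤ (ℓ:ℝ) * Real.log ℓ :=
      mul_le_mul h2 hlog2 (by linarith) (by linarith)
    have hb : (1:ℝ) ≤ (ℓ:ℝ) * Real.log ℓ := by linarith
    calc (1:ℝ) ≤ (ℓ:ℝ) * Real.log ℓ := hb
      _ ≤ (ℓ:ℝ) * Real.log ℓ * ((p.2 : ℝ) - p.1) := le_mul_of_one_le_right (by linarith) hn
  have hVone : ∀ p ∈ S, (1:ℝ) ≤ V p := by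
    intro p hp
    have hx := hX p hp
    have h1 : (1:ℝ) ≤ ((ℓ : ℝ) * Real.log ℓ * ((p.2 : ℝ) - p.1)) ^ (1 / (2 * γ)) := by
      apply Real.one_le_rpow hx (by positivity)
    have h2 : (1:ℝ) ≤ Real.exp (M ^ 2) := Real.one_le_exp (by positivity)
    calc (1:ℝ) = 1 * 1 := by ring
      _ ≤ Real.exp (M ^ 2) * ((ℓ : ℝ) * Real.log ℓ * ((p.2 : ℝ) - p.1)) ^ (1 / (2 * γ)) :=
          mul_le_mul h2 h1 zero_le_one (by positivity)
  -- single tail probability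
  have hsingle : ∀ (k : ℕ) (p : ℕ × ℕ), p ∈ S →
      (μ (ω k ⁻¹' Set.Ici (V p))).toReal ≤ C * (V p) ^ (-γ) := by
    intro k p hp
    have : μ (ω k ⁻¹' Set.Ici (V p)) = μ (ω 1 ⁻¹' Set.Ici (V p)) := by
      rw [← Measure.map_apply (hωmeas k) measurableSet_Ici, hωid k,
        Measure.map_apply (hωmeas 1) measurableSet_Ici]
    rw [this]
    have heq : ω 1 ⁻¹' Set.Ici (V p) = {w | V p ≤ ω 1 w} := rfl
    rw [heq]
    exact htail _ (hVone p hp)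
  -- V^{-γ} squared computation
  have hVpow : ∀ p ∈ S, (C * (V p) ^ (-γ)) * (C * (V p) ^ (-γ))
      = C ^ 2 * Real.exp (-2 * γ * M ^ 2) * ((ℓ : ℝ) * Real.log ℓ * ((p.2 : ℝ) - p.1))⁻¹ := by
    intro p hp
    have hx := hX p hp
    have hx0 : (0:ℝ) < (ℓ : ℝ) * Real.log ℓ * ((p.2 : ℝ) - p.1) := by linarith
    have hV0 : 0 < V p := lt_of_lt_of_le one_pos (hVone p hp)
    have key : (V p) ^ (-γ) * (V p) ^ (-γ)
        = Real.exp (-2 * γ * M ^ 2) * ((ℓ : ℝ) * Real.log ℓ * ((p.2 : ℝ) - p.1))⁻¹ := by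
      rw [← Real.rpow_add hV0]
      have : -γ + -γ = -(2*γ) := by ring
      rw [this, hV]
      rw [Real.mul_rpow (Real.exp_nonneg _) (Real.rpow_nonneg hx0.le _)]
      rw [← Real.exp_mul, ← Real.rpow_mul hx0.le]
      have he : M ^ 2 * -(2 * γ) = -2 * γ * M ^ 2 := by ring
      have hf : 1 / (2 * γ) * -(2 * γ) = -1 := by field_simp
      rw [he, hf, Real.rpow_neg_one]
    calc (C * (V p) ^ (-γ)) * (C * (V p) ^ (-γ))
        = C ^ 2 * ((V p) ^ (-γ) * (V p) ^ (-γ)) := by ring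
      _ = C ^ 2 * Real.exp (-2 * γ * M ^ 2) * ((ℓ : ℝ) * Real.log ℓ * ((p.2 : ℝ) - p.1))⁻¹ := by
          rw [key]; ring
  -- per-pair bound
  have hpair : ∀ p ∈ S, (μ (E p)).toReal
      ≤ C ^ 2 * Real.exp (-2 * γ * M ^ 2) * ((ℓ : ℝ) * Real.log ℓ * ((p.2 : ℝ) - p.1))⁻¹ := by
    intro p hp
    have hne : p.1 ≠ p.2 := Nat.ne_of_lt (hmem p hp).1
    have hindep : IndepFun (ω p.1) (ω p.2) μ := hωindep.indepFun hne
    have hmul : μ (E p) = μ (ω p.1 ⁻¹' Set.Ici (V p)) * μ (ω p.2 ⁻¹' Set.Ici (V p)) :=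
      hindep.measure_inter_preimage_eq_mul _ _ measurableSet_Ici measurableSet_Ici
    rw [hE] at hmul ⊢
    rw [hmul, ENNReal.toReal_mul]
    rw [← hVpow p hp]
    exact mul_le_mul (hsingle _ p hp) (hsingle _ p hp) ENNReal.toReal_nonneg
      (mul_nonneg hC.le (Real.rpow_nonneg (le_trans zero_le_one (hVone p hp)) _))
  -- union bound
  have hsub : {w | ∃ i j : ℕ, 1 ≤ i ∧ i < j ∧ j ≤ ℓ ∧
      Real.exp (M ^ 2) * ((ℓ : ℝ) * Real.log ℓ * ((j : ℝ) - i)) ^ (1 / (2 * γ))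
      ≤ min (ω i w) (ω j w)} ⊆ ⋃ p ∈ S, E p := by
    intro w hw
    obtain ⟨i, j, h1, h2, h3, h4⟩ := hw
    have hpS : (i, j) ∈ S := by
      simp only [hS, Finset.mem_filter, Finset.mem_product, Finset.mem_Icc]
      omega
    refine Set.mem_biUnion hpS ?_
    rw [le_min_iff] at h4
    exact ⟨h4.1, h4.2⟩
  have hmeasle : (μ {w | ∃ i j : ℕ, 1 ≤ i ∧ i < j ∧ j ≤ ℓ ∧
      Real.exp (M ^ 2) * ((ℓ : ℝ) * Real.log ℓ * ((j : ℝ) - i)) ^ (1 / (2 * γ))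
      ≤ min (ω i w) (ω j w)}).toReal ≤ ∑ p ∈ S, (μ (E p)).toReal := by
    have h1 : μ _ ≤ ∑ p ∈ S, μ (E p) :=
      (measure_mono hsub).trans (measure_biUnion_finset_le S E)
    have h2 : ∑ p ∈ S, μ (E p) ≠ ⊤ :=
      ENNReal.sum_ne_top.mpr fun p _ => measure_ne_top μ _
    calc _ ≤ (∑ p ∈ S, μ (E p)).toReal := ENNReal.toReal_mono h2 h1
      _ = ∑ p ∈ S, (μ (E p)).toReal := ENNReal.toReal_sum fun p _ => measure_ne_top μ _
  refine hmeasle.trans ?_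
  -- final summation
  have hfinal : ∑ p ∈ S, C ^ 2 * Real.exp (-2 * γ * M ^ 2) * ((ℓ : ℝ) * Real.log ℓ * ((p.2 : ℝ) - p.1))⁻¹
      ≤ 3 * C ^ 2 * Real.exp (-2 * γ * M ^ 2) := by
    have hps := pair_sum_le ℓ hℓ
    have hrw : ∀ p ∈ S, C ^ 2 * Real.exp (-2 * γ * M ^ 2) * ((ℓ : ℝ) * Real.log ℓ * ((p.2 : ℝ) - p.1))⁻¹
        = (C ^ 2 * Real.exp (-2 * γ * M ^ 2) * ((ℓ : ℝ) * Real.log ℓ)⁻¹) * ((p.2 : ℝ) - p.1)⁻¹ := by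
      intro p hp
      rw [mul_inv]
      ring
    rw [Finset.sum_congr rfl hrw, ← Finset.mul_sum]
    have hpos : (0:ℝ) ≤ C ^ 2 * Real.exp (-2 * γ * M ^ 2) * ((ℓ : ℝ) * Real.log ℓ)⁻¹ := by positivity
    calc _ ≤ (C ^ 2 * Real.exp (-2 * γ * M ^ 2) * ((ℓ : ℝ) * Real.log ℓ)⁻¹) * (3 * ℓ * Real.log ℓ) :=
          mul_le_mul_of_nonneg_left hps hpos
      _ = 3 * C ^ 2 * Real.exp (-2 * γ * M ^ 2) *
            (((ℓ : ℝ) * Real.log ℓ)⁻¹ * ((ℓ : ℝ) * Real.log ℓ)) := by ring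
      _ = 3 * C ^ 2 * Real.exp (-2 * γ * M ^ 2) := by
          rw [inv_mul_cancel₀ (by positivity)]; ring
  exact (Finset.sum_le_sum hpair).trans (by simpa using hfinal)
end

section
/- Under the same renewal bounds c n^{α-1} ≤ u(n) ≤ C n^{α-1}, there is a constant C' such that for all r ≥ 2: E[Σ_{i=1}^{r} Σ_{1≤j<k≤⌈r^{α/4}⌉} j^{-α/2} k^{-α} 1_{i∈τ, i+j∈τ, i+k∈τ}] ≤ C' r^{3α/2} log r. -/
open MeasureTheory ProbabilityTheory Finset Set

lemma rpow_step' {β : ℝ} (hβ0 : 0 < β) (hβ1 : β ≤ 1) (N : ℕ) :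
    β * ((N:ℝ)+1) ^ (β - 1) + (N:ℝ) ^ β ≤ ((N:ℝ)+1) ^ β := by
  have ha0 : (0:ℝ) < (N:ℝ)+1 := by positivity
  have ha : (1:ℝ) ≤ (N:ℝ)+1 := by
    have : (0:ℝ) ≤ (N:ℝ) := Nat.cast_nonneg N
    linarith
  have hs : (-1:ℝ) ≤ -(1/((N:ℝ)+1)) := by
    rw [neg_le_neg_iff]
    exact div_le_one_of_le₀ ha (le_of_lt ha0)
  have hb := rpow_one_add_le_one_add_mul_self hs (le_of_lt hβ0) hβ1
  have h1 : (N:ℝ) = ((N:ℝ)+1) * (1 + -(1/((N:ℝ)+1))) := by field_simp; ring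
  have h3 : ((N:ℝ)+1) ^ (β-1) = ((N:ℝ)+1) ^ β / ((N:ℝ)+1) := by
    rw [Real.rpow_sub ha0, Real.rpow_one]
  have key : ((N:ℝ)) ^ β ≤ ((N:ℝ)+1) ^ β - β * ((N:ℝ)+1) ^ (β-1) := by
    calc (N:ℝ) ^ β = (((N:ℝ)+1) * (1 + -(1/((N:ℝ)+1)))) ^ β := by rw [← h1]
      _ = ((N:ℝ)+1)^β * (1 + -(1/((N:ℝ)+1)))^β :=
          Real.mul_rpow (le_of_lt ha0) (by linarith)
      _ ≤ ((N:ℝ)+1)^β * (1 + β * -(1/((N:ℝ)+1))) :=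
          mul_le_mul_of_nonneg_left hb (Real.rpow_nonneg (le_of_lt ha0) β)
      _ = ((N:ℝ)+1)^β - β * ((N:ℝ)+1)^(β-1) := by rw [h3]; field_simp; ring
  linarith

lemma sum_rpow_le' {β : ℝ} (hβ0 : 0 < β) (hβ1 : β ≤ 1) (N : ℕ) :
    ∑ n ∈ Finset.Icc 1 N, (n:ℝ) ^ (β - 1) ≤ (N:ℝ) ^ β / β := by
  induction N with
  | zero => simp [Real.zero_rpow hβ0.ne']
  | succ N ih =>
    rw [Finset.sum_Icc_succ_top (Nat.le_add_left 1 N)]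
    have step := rpow_step' hβ0 hβ1 N
    have h2 : ((N:ℝ)+1) ^ (β-1) ≤ ((N:ℝ)+1) ^ β / β - (N:ℝ)^β / β := by
      rw [div_sub_div_same, le_div_iff₀ hβ0]
      linarith
    push_cast
    linarith

lemma arith_bound {α C : ℝ} (hα0 : 0 < α) (hα1 : α < 1) (hC : 0 < C)
    (r M : ℕ) (hr : 2 ≤ r) (hM1 : 1 ≤ M) (hM : (M:ℝ) ≤ 2*(r:ℝ)^(α/4)) :
    ∑ i ∈ Finset.Icc 1 r, ∑ j ∈ Finset.Icc 1 M, ∑ k ∈ Finset.Icc (j+1) M,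
      (j:ℝ)^(-(α/2)) * (k:ℝ)^(-α) * (C * (i:ℝ)^(α-1))
      ≤ (4*C/(α*((1-α/2)*(1-α)))) * (r:ℝ)^(3*α/2) := by
  have hrpos : (0:ℝ) < (r:ℝ) := by
    have : (0:ℕ) < r := by omega
    exact_mod_cast this
  have hM1' : (1:ℝ) ≤ (M:ℝ) := by exact_mod_cast hM1
  have hd1 : (0:ℝ) < 1 - α/2 := by linarith
  have hd2 : (0:ℝ) < 1 - α := by linarith
  -- enlarge the k-range
  have step1 : ∑ i ∈ Finset.Icc 1 r, ∑ j ∈ Finset.Icc 1 M, ∑ k ∈ Finset.Icc (j+1) M,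
      (j:ℝ)^(-(α/2)) * (k:ℝ)^(-α) * (C * (i:ℝ)^(α-1))
      ≤ ∑ i ∈ Finset.Icc 1 r, ∑ j ∈ Finset.Icc 1 M, ∑ k ∈ Finset.Icc 1 M,
      (j:ℝ)^(-(α/2)) * (k:ℝ)^(-α) * (C * (i:ℝ)^(α-1)) := by
    refine Finset.sum_le_sum fun i _ => Finset.sum_le_sum fun j _ => ?_
    refine Finset.sum_le_sum_of_subset_of_nonneg
      (Finset.Icc_subset_Icc (by omega) le_rfl) fun k _ _ => by positivity
  have factor : ∑ i ∈ Finset.Icc 1 r, ∑ j ∈ Finset.Icc 1 M, ∑ k ∈ Finset.Icc 1 M,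
      (j:ℝ)^(-(α/2)) * (k:ℝ)^(-α) * (C * (i:ℝ)^(α-1))
      = (∑ i ∈ Finset.Icc 1 r, C * (i:ℝ)^(α-1)) *
        ((∑ j ∈ Finset.Icc 1 M, (j:ℝ)^(-(α/2))) * (∑ k ∈ Finset.Icc 1 M, (k:ℝ)^(-α))) := by
    rw [Finset.sum_mul]
    refine Finset.sum_congr rfl fun i _ => ?_
    rw [Finset.sum_mul_sum, Finset.mul_sum]
    refine Finset.sum_congr rfl fun j _ => ?_
    rw [Finset.mul_sum]
    refine Finset.sum_congr rfl fun k _ => ?_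
    ring
  have hSI : ∑ i ∈ Finset.Icc 1 r, C * (i:ℝ)^(α-1) ≤ C * ((r:ℝ)^α / α) := by
    rw [← Finset.mul_sum]
    exact mul_le_mul_of_nonneg_left (sum_rpow_le' hα0 (le_of_lt hα1) r) (le_of_lt hC)
  have hSJ : ∑ j ∈ Finset.Icc 1 M, (j:ℝ)^(-(α/2)) ≤ (M:ℝ) / (1 - α/2) := by
    have h := sum_rpow_le' hd1 (by linarith) M
    have he : ∀ j : ℕ, (j:ℝ)^((1-α/2)-1) = (j:ℝ)^(-(α/2)) := fun j => by
      rw [show (1-α/2)-1 = -(α/2) by ring]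
    simp only [he] at h
    refine h.trans ?_
    gcongr
    calc (M:ℝ)^(1-α/2) ≤ (M:ℝ)^(1:ℝ) :=
          Real.rpow_le_rpow_of_exponent_le hM1' (by linarith)
      _ = (M:ℝ) := Real.rpow_one _
  have hSK : ∑ k ∈ Finset.Icc 1 M, (k:ℝ)^(-α) ≤ (M:ℝ) / (1 - α) := by
    have h := sum_rpow_le' hd2 (by linarith) M
    have he : ∀ k : ℕ, (k:ℝ)^((1-α)-1) = (k:ℝ)^(-α) := fun k => by
      rw [show (1-α)-1 = -α by ring]
    simp only [he] at h
    refine h.trans ?_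
    gcongr
    calc (M:ℝ)^(1-α) ≤ (M:ℝ)^(1:ℝ) :=
          Real.rpow_le_rpow_of_exponent_le hM1' (by linarith)
      _ = (M:ℝ) := Real.rpow_one _
  have hSJ0 : (0:ℝ) ≤ ∑ j ∈ Finset.Icc 1 M, (j:ℝ)^(-(α/2)) :=
    Finset.sum_nonneg fun j _ => by positivity
  have hSK0 : (0:ℝ) ≤ ∑ k ∈ Finset.Icc 1 M, (k:ℝ)^(-α) :=
    Finset.sum_nonneg fun k _ => by positivity
  have hSI0 : (0:ℝ) ≤ ∑ i ∈ Finset.Icc 1 r, C * (i:ℝ)^(α-1) :=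
    Finset.sum_nonneg fun i _ => by positivity
  have step2 : (∑ i ∈ Finset.Icc 1 r, C * (i:ℝ)^(α-1)) *
        ((∑ j ∈ Finset.Icc 1 M, (j:ℝ)^(-(α/2))) * (∑ k ∈ Finset.Icc 1 M, (k:ℝ)^(-α)))
      ≤ (C * ((r:ℝ)^α / α)) * ((2*(r:ℝ)^(α/4) / (1-α/2)) * (2*(r:ℝ)^(α/4) / (1-α))) := by
    have hJ2 : ∑ j ∈ Finset.Icc 1 M, (j:ℝ)^(-(α/2)) ≤ 2*(r:ℝ)^(α/4) / (1-α/2) :=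
      hSJ.trans (by gcongr)
    have hK2 : ∑ k ∈ Finset.Icc 1 M, (k:ℝ)^(-α) ≤ 2*(r:ℝ)^(α/4) / (1-α) :=
      hSK.trans (by gcongr)
    have h1 : (0:ℝ) ≤ 2*(r:ℝ)^(α/4) / (1-α/2) := by positivity
    exact mul_le_mul hSI (mul_le_mul hJ2 hK2 hSK0 h1) (mul_nonneg hSJ0 hSK0) (by positivity)
  have hfin : (C * ((r:ℝ)^α / α)) * ((2*(r:ℝ)^(α/4) / (1-α/2)) * (2*(r:ℝ)^(α/4) / (1-α)))
      = (4*C/(α*((1-α/2)*(1-α)))) * (r:ℝ)^(3*α/2) := by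
    have hmul : (r:ℝ)^α * ((r:ℝ)^(α/4) * (r:ℝ)^(α/4)) = (r:ℝ)^(3*α/2) := by
      rw [← Real.rpow_add hrpos, ← Real.rpow_add hrpos,
        show α + (α/4 + α/4) = 3*α/2 by ring]
    rw [← hmul]
    field_simp
    ring
  calc _ ≤ _ := step1
    _ = _ := factor
    _ ≤ _ := step2
    _ = _ := hfin

/-- Three-point sum estimate for a renewal process with `c n^{α-1} ≤ u(n) ≤ C n^{α-1}`:
`E[Σ_{i=1}^r Σ_{1≤j<k≤⌈r^{α/4}⌉} j^{-α/2} k^{-α} 1_{i∈τ, i+j∈τ, i+k∈τ}] ≤ C' r^{3α/2} log r`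
for `r ≥ 2`. -/
theorem renewal_three_point_sum_bound
    {Ω : Type*} [MeasurableSpace Ω] (μ : Measure Ω) [IsProbabilityMeasure μ]
    (ξ : ℕ → Ω → ℕ) (hξmeas : ∀ n, Measurable (ξ n))
    (hξindep : iIndepFun ξ μ)
    (hξid : ∀ n, Measure.map (ξ n) μ = Measure.map (ξ 0) μ)
    (hξpos : ∀ n w, 1 ≤ ξ n w)
    (inτ : ℕ → Ω → Prop)
    (hinτ : ∀ n w, inτ n w ↔ ∃ k : ℕ, (∑ m ∈ Finset.range k, ξ m w) = n)
    (u : ℕ → ℝ) (hu : ∀ n, u n = (μ {w | inτ n w}).toReal)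
    (α : ℝ) (hα0 : 0 < α) (hα1 : α < 1) (c C : ℝ) (hc : 0 < c) (hcC : c ≤ C)
    (hlow : ∀ n : ℕ, 1 ≤ n → c * (n : ℝ) ^ (α - 1) ≤ u n)
    (hup : ∀ n : ℕ, 1 ≤ n → u n ≤ C * (n : ℝ) ^ (α - 1)) :
    ∃ C' > 0, ∀ r : ℕ, 2 ≤ r →
      ∫ w, (∑ i ∈ Finset.Icc 1 r, ∑ j ∈ Finset.Icc 1 ⌈(r : ℝ) ^ (α / 4)⌉₊,
          ∑ k ∈ Finset.Icc (j + 1) ⌈(r : ℝ) ^ (α / 4)⌉₊,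
            (j : ℝ) ^ (-(α / 2)) * (k : ℝ) ^ (-α) *
              Set.indicator {w' | inτ i w' ∧ inτ (i + j) w' ∧ inτ (i + k) w'}
                (fun _ => (1:ℝ)) w) ∂μ
        ≤ C' * (r : ℝ) ^ (3 * α / 2) * Real.log r := by
  classical
  have hC : 0 < C := lt_of_lt_of_le hc hcC
  have hmeasτ : ∀ n, MeasurableSet {w | inτ n w} := by
    intro n
    have hset : {w | inτ n w} = ⋃ k : ℕ, (fun w => ∑ m ∈ Finset.range k, ξ m w) ⁻¹' {n} := by
      ext w
      simp [hinτ n w, Set.mem_iUnion]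
    rw [hset]
    exact MeasurableSet.iUnion fun k =>
      (Finset.measurable_sum (Finset.range k) (fun m _ => hξmeas m))
        (measurableSet_singleton n)
  have hS : ∀ i j k : ℕ, MeasurableSet {w | inτ i w ∧ inτ (i+j) w ∧ inτ (i+k) w} :=
    fun i j k => (hmeasτ i).inter ((hmeasτ (i+j)).inter (hmeasτ (i+k)))
  have hlog2 : (0:ℝ) < Real.log 2 := Real.log_pos (by norm_num)
  set K : ℝ := 4*C/(α*((1-α/2)*(1-α))) with hK
  have hd1 : (0:ℝ) < 1 - α/2 := by linarith
  have hd2 : (0:ℝ) < 1 - α := by linarith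
  have hKpos : 0 < K := by positivity
  refine ⟨K / Real.log 2, by positivity, fun r hr => ?_⟩
  set M : ℕ := ⌈(r : ℝ) ^ (α / 4)⌉₊ with hMdef
  have hrpos : (0:ℝ) < (r:ℝ) := by
    have : (0:ℕ) < r := by omega
    exact_mod_cast this
  have hr1 : (1:ℝ) ≤ (r:ℝ) := by
    have : (1:ℕ) ≤ r := by omega
    exact_mod_cast this
  have hx1 : (1:ℝ) ≤ (r:ℝ) ^ (α/4) := Real.one_le_rpow hr1 (by positivity)
  have hM1 : 1 ≤ M := Nat.one_le_ceil_iff.mpr (by linarith)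
  have hMle : (M:ℝ) ≤ 2*(r:ℝ)^(α/4) := by
    have h := Nat.ceil_lt_add_one (le_of_lt (lt_of_lt_of_le one_pos hx1) : (0:ℝ) ≤ (r:ℝ)^(α/4))
    calc (M:ℝ) ≤ (r:ℝ)^(α/4) + 1 := le_of_lt h
      _ ≤ 2*(r:ℝ)^(α/4) := by linarith
  -- integrability
  have hint : ∀ i j k : ℕ, Integrable (fun w =>
      (j : ℝ) ^ (-(α / 2)) * (k : ℝ) ^ (-α) *
        Set.indicator {w' | inτ i w' ∧ inτ (i + j) w' ∧ inτ (i + k) w'}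
          (fun _ => (1:ℝ)) w) μ := fun i j k =>
    ((integrable_const (1:ℝ)).indicator (hS i j k)).const_mul _
  -- compute the integral
  have hcalc : ∫ w, (∑ i ∈ Finset.Icc 1 r, ∑ j ∈ Finset.Icc 1 M,
      ∑ k ∈ Finset.Icc (j + 1) M,
        (j : ℝ) ^ (-(α / 2)) * (k : ℝ) ^ (-α) *
          Set.indicator {w' | inτ i w' ∧ inτ (i + j) w' ∧ inτ (i + k) w'}
            (fun _ => (1:ℝ)) w) ∂μ
      = ∑ i ∈ Finset.Icc 1 r, ∑ j ∈ Finset.Icc 1 M, ∑ k ∈ Finset.Icc (j + 1) M,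
        (j : ℝ) ^ (-(α / 2)) * (k : ℝ) ^ (-α) *
          (μ {w | inτ i w ∧ inτ (i+j) w ∧ inτ (i+k) w}).toReal := by
    rw [integral_finset_sum _ (fun i _ => integrable_finset_sum _
      (fun j _ => integrable_finset_sum _ (fun k _ => hint i j k)))]
    refine Finset.sum_congr rfl fun i _ => ?_
    rw [integral_finset_sum _ (fun j _ => integrable_finset_sum _ (fun k _ => hint i j k))]
    refine Finset.sum_congr rfl fun j _ => ?_
    rw [integral_finset_sum _ (fun k _ => hint i j k)]
    refine Finset.sum_congr rfl fun k _ => ?_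
    rw [integral_const_mul, integral_indicator_const (1:ℝ) (hS i j k), smul_eq_mul, mul_one, measureReal_def]
  -- bound the probability
  have hP : ∀ i : ℕ, 1 ≤ i → ∀ j k : ℕ,
      (μ {w | inτ i w ∧ inτ (i+j) w ∧ inτ (i+k) w}).toReal ≤ C * (i:ℝ)^(α-1) := by
    intro i hi j k
    have hsub : {w | inτ i w ∧ inτ (i+j) w ∧ inτ (i+k) w} ⊆ {w | inτ i w} :=
      fun w hw => hw.1
    have h1 : (μ {w | inτ i w ∧ inτ (i+j) w ∧ inτ (i+k) w}).toReal
        ≤ (μ {w | inτ i w}).toReal :=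
      ENNReal.toReal_mono (measure_ne_top μ _) (measure_mono hsub)
    have h2 : (μ {w | inτ i w}).toReal ≤ C * (i:ℝ)^(α-1) := (hu i) ▸ hup i hi
    exact h1.trans h2
  rw [hcalc]
  have hbound : ∑ i ∈ Finset.Icc 1 r, ∑ j ∈ Finset.Icc 1 M, ∑ k ∈ Finset.Icc (j + 1) M,
        (j : ℝ) ^ (-(α / 2)) * (k : ℝ) ^ (-α) *
          (μ {w | inτ i w ∧ inτ (i+j) w ∧ inτ (i+k) w}).toReal
      ≤ ∑ i ∈ Finset.Icc 1 r, ∑ j ∈ Finset.Icc 1 M, ∑ k ∈ Finset.Icc (j + 1) M,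
        (j : ℝ) ^ (-(α / 2)) * (k : ℝ) ^ (-α) * (C * (i:ℝ)^(α-1)) := by
    refine Finset.sum_le_sum fun i hi => Finset.sum_le_sum fun j _ =>
      Finset.sum_le_sum fun k _ => ?_
    exact mul_le_mul_of_nonneg_left (hP i (Finset.mem_Icc.mp hi).1 j k) (by positivity)
  have harith := arith_bound hα0 hα1 hC r M hr hM1 hMle
  have hfinal : K * (r:ℝ)^(3*α/2) ≤ K / Real.log 2 * (r:ℝ)^(3*α/2) * Real.log r := by
    have hlogr : Real.log 2 ≤ Real.log r :=
      Real.log_le_log (by norm_num) (by exact_mod_cast hr)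
    have heq : K * (r:ℝ)^(3*α/2) = (K / Real.log 2 * (r:ℝ)^(3*α/2)) * Real.log 2 := by
      field_simp
    rw [heq]
    exact mul_le_mul_of_nonneg_left hlogr (by positivity)
  calc _ ≤ _ := hbound
    _ ≤ K * (r:ℝ)^(3*α/2) := harith
    _ ≤ _ := hfinal
end

section
/- Let τ be a renewal process with u(n) = P[n∈τ], and for i ≥ 1 define U_i := 1_{i∈τ} · Σ_{j=1}^{m} j^{-α} (1_{i+j∈τ} - u(j)) where m = ⌈r^{α/4}⌉ and α ∈ (0,1). If i_2 - i_1 ≥ m then E[U_{i_1} U_{i_2}] = 0. -/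
open MeasureTheory ProbabilityTheory Finset Set

namespace RenewalDecorrAux

set_option linter.unusedSectionVars false

variable {Ω : Type*} [MeasurableSpace Ω]

/-- partial sums of the increments -/
def Sp (ξ : ℕ → Ω → ℕ) (k : ℕ) (w : Ω) : ℕ := ∑ t ∈ Finset.range k, ξ t w

lemma Sp_measurable (ξ : ℕ → Ω → ℕ) (hξ : ∀ n, Measurable (ξ n)) (k : ℕ) :
    Measurable (Sp ξ k) :=
  Finset.measurable_sum _ fun i _ => hξ i

lemma Sp_strictMono (ξ : ℕ → Ω → ℕ) (hξpos : ∀ n w, 1 ≤ ξ n w) (w : Ω) :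
    StrictMono fun k => Sp ξ k w := by
  apply strictMono_nat_of_lt_succ
  intro n
  have := hξpos n w
  simp only [Sp, Finset.sum_range_succ]
  omega

lemma Sp_le (ξ : ℕ → Ω → ℕ) (hξpos : ∀ n w, 1 ≤ ξ n w) (k : ℕ) (w : Ω) :
    k ≤ Sp ξ k w := by
  calc k = ∑ _t ∈ Finset.range k, 1 := by simp
  _ ≤ ∑ t ∈ Finset.range k, ξ t w := Finset.sum_le_sum fun t _ => hξpos t w

lemma Sp_add (ξ : ℕ → Ω → ℕ) (k l : ℕ) (w : Ω) :
    Sp ξ (k + l) w = Sp ξ k w + ∑ t ∈ Finset.range l, ξ (k + t) w :=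
  Finset.sum_range_add _ k l

lemma block_ge (ξ : ℕ → Ω → ℕ) (hξpos : ∀ n w, 1 ≤ ξ n w) (k l : ℕ) (w : Ω) :
    l ≤ ∑ t ∈ Finset.range l, ξ (k + t) w := by
  calc l = ∑ _t ∈ Finset.range l, 1 := by simp
  _ ≤ ∑ t ∈ Finset.range l, ξ (k + t) w := Finset.sum_le_sum fun t _ => hξpos _ w

/-- extend a vector `Fin j → ℕ` to `ℕ → ℕ` by zero -/
def vext (j : ℕ) (v : Fin j → ℕ) (t : ℕ) : ℕ := if h : t < j then v ⟨t, h⟩ else 0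

/-- the law of a block `(ξ k, …, ξ (k+j-1))` of an i.i.d. sequence does not depend on `k` -/
lemma block_law (μ : Measure Ω) (ξ : ℕ → Ω → ℕ) (hξmeas : ∀ n, Measurable (ξ n))
    (hξindep : iIndepFun ξ μ)
    (hξid : ∀ n, Measure.map (ξ n) μ = Measure.map (ξ 0) μ)
    (j k : ℕ) (T : Set (Fin j → ℕ)) :
    μ ((fun w (t : Fin j) => ξ (k + (t : ℕ)) w) ⁻¹' T)
      = μ ((fun w (t : Fin j) => ξ (0 + (t : ℕ)) w) ⁻¹' T) := by
  -- the probability of an atom does not depend on `k`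
  have hsing : ∀ (k : ℕ) (a : Fin j → ℕ),
      μ ((fun w (t : Fin j) => ξ (k + (t : ℕ)) w) ⁻¹' {a})
        = ∏ t ∈ Finset.range j,
            Measure.map (ξ 0) μ {n | ∀ t' : Fin j, (t' : ℕ) = t → n = a t'} := by
    intro k a
    have hpre : (fun w (t : Fin j) => ξ (k + (t : ℕ)) w) ⁻¹' {a}
        = ⋂ i ∈ Finset.image (fun t => k + t) (Finset.range j),
            ξ i ⁻¹' {n | ∀ t' : Fin j, k + (t' : ℕ) = i → n = a t'} := by
      ext w
      simp only [Set.mem_preimage, Set.mem_singleton_iff, funext_iff, Set.mem_iInter,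
        Finset.mem_image, Finset.mem_range, Set.mem_setOf_eq]
      constructor
      · rintro h i ⟨t, ht, rfl⟩ t' ht'
        have h1 : (t' : ℕ) = t := by omega
        have : t' = (⟨t, ht⟩ : Fin j) := Fin.ext h1
        subst this
        exact h ⟨t, ht⟩
      · intro h t
        exact h (k + t) ⟨t, t.2, rfl⟩ t rfl
    rw [hpre, hξindep.measure_inter_preimage_eq_mul _
        (fun i _ => (Set.to_countable _).measurableSet)]
    rw [Finset.prod_image (by intro x _ y _ h; exact Nat.add_left_cancel h)]
    refine Finset.prod_congr rfl fun t ht => ?_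
    rw [← Measure.map_apply (hξmeas (k + t)) ((Set.to_countable _).measurableSet), hξid (k + t)]
    congr 1
    ext n
    simp only [Set.mem_setOf_eq]
    constructor
    · intro h t' ht'; exact h t' (by omega)
    · intro h t' ht'; exact h t' (by omega)
  -- decompose the preimage of `T` into atoms
  have hdecomp : ∀ k : ℕ,
      μ ((fun w (t : Fin j) => ξ (k + (t : ℕ)) w) ⁻¹' T)
        = ∑' a : T, μ ((fun w (t : Fin j) => ξ (k + (t : ℕ)) w) ⁻¹' {(a : Fin j → ℕ)}) := by
    intro k
    have hT : (fun w (t : Fin j) => ξ (k + (t : ℕ)) w) ⁻¹' T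
        = ⋃ a ∈ T, (fun w (t : Fin j) => ξ (k + (t : ℕ)) w) ⁻¹' {a} := by
      ext w; simp
    rw [hT, measure_biUnion (Set.to_countable T) ?_ ?_]
    · intro a _ b _ hab
      exact Set.disjoint_left.mpr fun w hwa hwb => hab (by
        simp only [Set.mem_preimage, Set.mem_singleton_iff] at hwa hwb
        rw [← hwa, ← hwb])
    · intro a _
      exact (measurable_pi_lambda (fun w (t : Fin j) => ξ (k + (t : ℕ)) w)
        (fun t => hξmeas (k + t))) (measurableSet_singleton a)
  rw [hdecomp k, hdecomp 0]
  exact tsum_congr fun a => by rw [hsing k a, hsing 0 a]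

lemma abs_ite_le {P : Prop} [Decidable P] : |(if P then (1:ℝ) else 0)| ≤ 1 := by
  split <;> simp

lemma decorr_step {Ω : Type*} [MeasurableSpace Ω] {μ : Measure Ω}
    {X Y : Ω → ℝ} {c : ℝ} (hXY : IndepFun X Y μ)
    (hXint : Integrable X μ) (hYint : Integrable Y μ)
    (hXYint : Integrable (fun w => X w * Y w) μ)
    (hEY : ∫ w, Y w ∂μ = c) :
    ∫ w, X w * (Y w - c) ∂μ = 0 := by
  have h2 := hXY.integral_mul_eq_mul_integral hXint.aestronglyMeasurable hYint.aestronglyMeasurable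
  rw [Pi.mul_def] at h2
  calc ∫ w, X w * (Y w - c) ∂μ = ∫ w, (X w * Y w - c * X w) ∂μ :=
        integral_congr_ae (Filter.Eventually.of_forall fun w => by ring)
    _ = (∫ w, X w * Y w ∂μ) - ∫ w, c * X w ∂μ := integral_sub hXYint (hXint.const_mul c)
    _ = (∫ w, X w ∂μ) * c - c * ∫ w, X w ∂μ := by rw [h2, hEY, integral_const_mul]
    _ = 0 := by ring

end RenewalDecorrAux

open RenewalDecorrAux in
/-- Decorrelation of the renewal fluctuations
`U_i = 1_{i∈τ} Σ_{j=1}^m j^{-α}(1_{i+j∈τ} - u(j))` with `m = ⌈r^{α/4}⌉`: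
if `i₂ - i₁ ≥ m` then `E[U_{i₁} U_{i₂}] = 0`. -/
theorem renewal_fluctuation_decorrelation
    {Ω : Type*} [MeasurableSpace Ω] (μ : Measure Ω) [IsProbabilityMeasure μ]
    (ξ : ℕ → Ω → ℕ) (hξmeas : ∀ n, Measurable (ξ n))
    (hξindep : iIndepFun ξ μ)
    (hξid : ∀ n, Measure.map (ξ n) μ = Measure.map (ξ 0) μ)
    (hξpos : ∀ n w, 1 ≤ ξ n w)
    (inτ : ℕ → Ω → Prop)
    (hinτ : ∀ n w, inτ n w ↔ ∃ k : ℕ, (∑ m' ∈ Finset.range k, ξ m' w) = n)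
    (u : ℕ → ℝ) (hu : ∀ n, u n = (μ {w | inτ n w}).toReal)
    (α : ℝ) (hα0 : 0 < α) (hα1 : α < 1)
    (r : ℕ) (hr : 2 ≤ r) (m : ℕ) (hm : m = ⌈(r : ℝ) ^ (α / 4)⌉₊)
    (U : ℕ → Ω → ℝ)
    (hU : ∀ i w, U i w =
      Set.indicator {w' | inτ i w'} (fun _ => (1:ℝ)) w *
        ∑ j ∈ Finset.Icc 1 m, (j : ℝ) ^ (-α) *
          (Set.indicator {w' | inτ (i + j) w'} (fun _ => (1:ℝ)) w - u j))
    (i₁ i₂ : ℕ) (hi₁ : 1 ≤ i₁) (hle : i₁ ≤ i₂) (hgap : m ≤ i₂ - i₁) :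
    ∫ w, U i₁ w * U i₂ w ∂μ = 0 := by
  classical
  have him : i₁ + m ≤ i₂ := by omega
  -- measurability of the renewal events
  have hmeasτ : ∀ n, MeasurableSet {w | inτ n w} := by
    intro n
    have h : {w | inτ n w} = ⋃ k, (Sp ξ k) ⁻¹' {n} := by
      ext w
      simp only [Set.mem_setOf_eq, hinτ n w, Set.mem_iUnion, Set.mem_preimage,
        Set.mem_singleton_iff]
      rfl
    rw [h]
    exact MeasurableSet.iUnion fun k =>
      (Sp_measurable ξ hξmeas k) (measurableSet_singleton n)
  have hUmeas : ∀ i, Measurable (U i) := by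
    intro i
    have h : U i = fun w => Set.indicator {w' | inτ i w'} (fun _ => (1:ℝ)) w *
        ∑ j ∈ Finset.Icc 1 m, (j:ℝ)^(-α) *
          (Set.indicator {w' | inτ (i+j) w'} (fun _ => (1:ℝ)) w - u j) := funext (hU i)
    rw [h]
    exact (measurable_const.indicator (hmeasτ i)).mul <|
      Finset.measurable_sum _ fun j _ =>
        ((measurable_const.indicator (hmeasτ (i+j))).sub measurable_const).const_mul _
  have hind_le : ∀ (s : Set Ω) (w : Ω), |Set.indicator s (fun _ => (1:ℝ)) w| ≤ 1 := by
    intro s w; rw [Set.indicator_apply]; split <;> simp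
  have hrpow_nonneg : ∀ j : ℕ, (0:ℝ) ≤ (j:ℝ)^(-α) :=
    fun j => Real.rpow_nonneg (Nat.cast_nonneg j) _
  set C : ℝ := ∑ j ∈ Finset.Icc 1 m, (j:ℝ)^(-α) * (1 + |u j|) with hC
  have hCnn : 0 ≤ C :=
    Finset.sum_nonneg fun j _ => mul_nonneg (hrpow_nonneg j) (by positivity)
  have hUbd : ∀ i w, |U i w| ≤ C := by
    intro i w
    rw [hU i w, abs_mul]
    have h1 : |Set.indicator {w' | inτ i w'} (fun _ => (1:ℝ)) w| ≤ 1 := hind_le _ _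
    have h2 : |∑ j ∈ Finset.Icc 1 m, (j:ℝ)^(-α) *
        (Set.indicator {w' | inτ (i+j) w'} (fun _ => (1:ℝ)) w - u j)| ≤ C := by
      refine (Finset.abs_sum_le_sum_abs _ _).trans ?_
      rw [hC]
      refine Finset.sum_le_sum fun j _ => ?_
      rw [abs_mul, abs_of_nonneg (hrpow_nonneg j)]
      refine mul_le_mul_of_nonneg_left ?_ (hrpow_nonneg j)
      calc |Set.indicator {w' | inτ (i+j) w'} (fun _ => (1:ℝ)) w - u j|
          ≤ |Set.indicator {w' | inτ (i+j) w'} (fun _ => (1:ℝ)) w| + |u j| := abs_sub _ _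
        _ ≤ 1 + |u j| := by have := hind_le {w' | inτ (i+j) w'} w; linarith
    calc |Set.indicator {w' | inτ i w'} (fun _ => (1:ℝ)) w| *
        |∑ j ∈ Finset.Icc 1 m, (j:ℝ)^(-α) *
          (Set.indicator {w' | inτ (i+j) w'} (fun _ => (1:ℝ)) w - u j)|
        ≤ 1 * C := mul_le_mul h1 h2 (abs_nonneg _) one_pos.le
      _ = C := one_mul C
  -- integrability from boundedness
  have hint : ∀ (f : Ω → ℝ), Measurable f → ∀ (D : ℝ), (∀ w, |f w| ≤ D) → Integrable f μ :=
    fun f hf D hD =>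
      (integrable_const D).mono' hf.aestronglyMeasurable (Filter.Eventually.of_forall hD)
  --------------------------------------------------------------------------
  -- the core decorrelation identity, for each `j ≥ 1` and each `k`
  --------------------------------------------------------------------------
  have core : ∀ (j k : ℕ), 1 ≤ j →
      ∫ w, (U i₁ w * (if Sp ξ k w = i₂ then (1:ℝ) else 0)) *
        ((if ∃ l, l ≤ j ∧ ∑ t ∈ Finset.range l, ξ (k + t) w = j then (1:ℝ) else 0) - u j) ∂μ
        = 0 := by
    intro j k hj1
    -- `X = φ ∘ V` where `V` is the vector of the first `k` increments
    have hXeq : (fun w => U i₁ w * (if Sp ξ k w = i₂ then (1:ℝ) else 0))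
        = (fun v : Fin k → ℕ =>
            ((if ∃ l, l ≤ k ∧ ∑ t ∈ Finset.range l, vext k v t = i₁ then (1:ℝ) else 0) *
              ∑ j' ∈ Finset.Icc 1 m, (j' : ℝ) ^ (-α) *
                ((if ∃ l, l ≤ k ∧ ∑ t ∈ Finset.range l, vext k v t = i₁ + j' then (1:ℝ)
                  else 0) - u j')) *
            (if (∑ t ∈ Finset.range k, vext k v t) = i₂ then (1:ℝ) else 0))
          ∘ (fun w (t : Fin k) => ξ (t : ℕ) w) := by
      funext w
      simp only [Function.comp_apply]
      have hsv : ∀ l, l ≤ k →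
          ∑ t ∈ Finset.range l, vext k (fun t : Fin k => ξ (t:ℕ) w) t = Sp ξ l w := by
        intro l hl
        refine Finset.sum_congr rfl fun t ht => ?_
        have htk : t < k := lt_of_lt_of_le (Finset.mem_range.mp ht) hl
        simp [vext, htk, Sp]
      have hcond : ∀ c : ℕ,
          (∃ l, l ≤ k ∧ ∑ t ∈ Finset.range l, vext k (fun t : Fin k => ξ (t:ℕ) w) t = c)
            ↔ (∃ l, l ≤ k ∧ Sp ξ l w = c) := by
        intro c
        constructor
        · rintro ⟨l, hl, h⟩; exact ⟨l, hl, by rw [← hsv l hl]; exact h⟩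
        · rintro ⟨l, hl, h⟩; exact ⟨l, hl, by rw [hsv l hl]; exact h⟩
      by_cases hAk : Sp ξ k w = i₂
      · have hA1 : (if Sp ξ k w = i₂ then (1:ℝ) else 0) = 1 := if_pos hAk
        have hA2 : (if (∑ t ∈ Finset.range k, vext k (fun t : Fin k => ξ (t:ℕ) w) t) = i₂
            then (1:ℝ) else 0) = 1 := by rw [hsv k le_rfl]; exact if_pos hAk
        rw [hA1, hA2, mul_one, mul_one]
        rw [hU i₁ w]
        have key : ∀ n, n ≤ i₂ → (Set.indicator {w' | inτ n w'} (fun _ => (1:ℝ)) w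
            = if (∃ l, l ≤ k ∧ ∑ t ∈ Finset.range l,
                vext k (fun t : Fin k => ξ (t:ℕ) w) t = n) then (1:ℝ) else 0) := by
          intro n hn
          rw [Set.indicator_apply]
          simp only [Set.mem_setOf_eq]
          refine if_congr ?_ rfl rfl
          rw [hcond n]
          constructor
          · intro h
            obtain ⟨l, hl⟩ := (hinτ n w).1 h
            have hl' : Sp ξ l w = n := hl
            refine ⟨l, ?_, hl'⟩
            have hle' : Sp ξ l w ≤ Sp ξ k w := by omega
            exact (Sp_strictMono ξ hξpos w).le_iff_le.mp hle'
          · rintro ⟨l, _, h⟩; exact (hinτ n w).2 ⟨l, h⟩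
        rw [key i₁ hle]
        congr 1
        refine Finset.sum_congr rfl fun j' hj' => ?_
        have hj'm : j' ≤ m := (Finset.mem_Icc.mp hj').2
        rw [key (i₁ + j') (by omega)]
      · have hA1 : (if Sp ξ k w = i₂ then (1:ℝ) else 0) = 0 := if_neg hAk
        have hA2 : (if (∑ t ∈ Finset.range k, vext k (fun t : Fin k => ξ (t:ℕ) w) t) = i₂
            then (1:ℝ) else 0) = 0 := by rw [hsv k le_rfl]; exact if_neg hAk
        rw [hA1, hA2, mul_zero, mul_zero]
    -- `Y = ψ ∘ W` where `W` is the block of increments `ξ k, …, ξ (k+j-1)`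
    have hsW : ∀ (k' : ℕ) (w : Ω) (l : ℕ), l ≤ j →
        ∑ t ∈ Finset.range l, vext j (fun t : Fin j => ξ (k' + (t:ℕ)) w) t
          = ∑ t ∈ Finset.range l, ξ (k' + t) w := by
      intro k' w l hl
      refine Finset.sum_congr rfl fun t ht => ?_
      have htj : t < j := lt_of_lt_of_le (Finset.mem_range.mp ht) hl
      simp [vext, htj]
    have hWcond : ∀ (k' : ℕ) (w : Ω),
        (∃ l, l ≤ j ∧ ∑ t ∈ Finset.range l,
            vext j (fun t : Fin j => ξ (k' + (t:ℕ)) w) t = j)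
          ↔ (∃ l, l ≤ j ∧ ∑ t ∈ Finset.range l, ξ (k' + t) w = j) := by
      intro k' w
      constructor
      · rintro ⟨l, hl, h⟩; exact ⟨l, hl, by rw [← hsW k' w l hl]; exact h⟩
      · rintro ⟨l, hl, h⟩; exact ⟨l, hl, by rw [hsW k' w l hl]; exact h⟩
    have hYeq : (fun w => if ∃ l, l ≤ j ∧ ∑ t ∈ Finset.range l, ξ (k + t) w = j
          then (1:ℝ) else 0)
        = (fun v : Fin j → ℕ =>
            if ∃ l, l ≤ j ∧ ∑ t ∈ Finset.range l, vext j v t = j then (1:ℝ) else 0)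
          ∘ (fun w (t : Fin j) => ξ (k + (t:ℕ)) w) := by
      funext w
      simp only [Function.comp_apply]
      exact (if_congr (hWcond k w) rfl rfl).symm
    -- independence of the two blocks
    have hdisj : Disjoint (Finset.range k) (Finset.Ico k (k+j)) := by
      rw [Finset.disjoint_left]
      intro a ha hb
      rw [Finset.mem_range] at ha
      rw [Finset.mem_Ico] at hb
      omega
    have h0 := hξindep.indepFun_finset (Finset.range k) (Finset.Ico k (k+j)) hdisj hξmeas
    have hVW : IndepFun (fun w (t : Fin k) => ξ (t:ℕ) w)
        (fun w (t : Fin j) => ξ (k + (t:ℕ)) w) μ := by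
      have hg : Measurable (fun (v : ↥(Finset.range k) → ℕ) (t : Fin k) =>
          v ⟨(t:ℕ), Finset.mem_range.mpr t.isLt⟩) :=
        measurable_pi_lambda _ fun t => measurable_pi_apply _
      have hh : Measurable (fun (v : ↥(Finset.Ico k (k+j)) → ℕ) (t : Fin j) =>
          v ⟨k + (t:ℕ), Finset.mem_Ico.mpr ⟨Nat.le_add_right _ _, by omega⟩⟩) :=
        measurable_pi_lambda _ fun t => measurable_pi_apply _
      exact h0.comp hg hh
    have hXY : IndepFun (fun w => U i₁ w * (if Sp ξ k w = i₂ then (1:ℝ) else 0))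
        (fun w => if ∃ l, l ≤ j ∧ ∑ t ∈ Finset.range l, ξ (k + t) w = j
          then (1:ℝ) else 0) μ := by
      rw [hXeq, hYeq]
      exact hVW.comp (measurable_of_countable _) (measurable_of_countable _)
    -- measurability and integrability
    have hXmeas : Measurable (fun w => U i₁ w * (if Sp ξ k w = i₂ then (1:ℝ) else 0)) := by
      rw [hXeq]
      exact (measurable_of_countable _).comp (measurable_pi_lambda _ fun t => hξmeas _)
    have hYmeas : Measurable (fun w => if ∃ l, l ≤ j ∧
        ∑ t ∈ Finset.range l, ξ (k + t) w = j then (1:ℝ) else 0) := by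
      rw [hYeq]
      exact (measurable_of_countable _).comp (measurable_pi_lambda _ fun t => hξmeas _)
    have hXbd : ∀ w, |U i₁ w * (if Sp ξ k w = i₂ then (1:ℝ) else 0)| ≤ C := by
      intro w
      rw [abs_mul]
      calc |U i₁ w| * |if Sp ξ k w = i₂ then (1:ℝ) else 0| ≤ C * 1 :=
            mul_le_mul (hUbd i₁ w) abs_ite_le (abs_nonneg _) hCnn
        _ = C := mul_one C
    have hXint : Integrable (fun w => U i₁ w * (if Sp ξ k w = i₂ then (1:ℝ) else 0)) μ :=
      hint _ hXmeas C hXbd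
    have hYint : Integrable (fun w => if ∃ l, l ≤ j ∧
        ∑ t ∈ Finset.range l, ξ (k + t) w = j then (1:ℝ) else 0) μ :=
      hint _ hYmeas 1 (fun w => abs_ite_le)
    have hXYint : Integrable (fun w =>
        (U i₁ w * (if Sp ξ k w = i₂ then (1:ℝ) else 0)) *
          (if ∃ l, l ≤ j ∧ ∑ t ∈ Finset.range l, ξ (k + t) w = j
            then (1:ℝ) else 0)) μ := by
      refine hint _ (hXmeas.mul hYmeas) C fun w => ?_
      rw [abs_mul]
      calc |U i₁ w * (if Sp ξ k w = i₂ then (1:ℝ) else 0)| *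
          |if ∃ l, l ≤ j ∧ ∑ t ∈ Finset.range l, ξ (k + t) w = j then (1:ℝ) else 0|
          ≤ C * 1 := mul_le_mul (hXbd w) abs_ite_le (abs_nonneg _) hCnn
        _ = C := mul_one C
    -- the expectation of `Y` is `u j`
    have hEY : ∫ w, (if ∃ l, l ≤ j ∧ ∑ t ∈ Finset.range l, ξ (k + t) w = j
        then (1:ℝ) else 0) ∂μ = u j := by
      have hB : MeasurableSet ((fun w (t : Fin j) => ξ (k + (t:ℕ)) w) ⁻¹'
          {v : Fin j → ℕ | ∃ l, l ≤ j ∧ ∑ t ∈ Finset.range l, vext j v t = j}) :=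
        (measurable_pi_lambda _ fun t => hξmeas _) ((Set.to_countable _).measurableSet)
      have hpt : ∀ w, (if ∃ l, l ≤ j ∧ ∑ t ∈ Finset.range l, ξ (k + t) w = j
          then (1:ℝ) else 0)
          = Set.indicator ((fun w (t : Fin j) => ξ (k + (t:ℕ)) w) ⁻¹'
              {v : Fin j → ℕ | ∃ l, l ≤ j ∧ ∑ t ∈ Finset.range l, vext j v t = j})
              (fun _ => (1:ℝ)) w := by
        intro w
        rw [Set.indicator_apply]
        refine (if_congr ?_ rfl rfl).symm
        simp only [Set.mem_preimage, Set.mem_setOf_eq]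
        exact hWcond k w
      rw [integral_congr_ae (Filter.Eventually.of_forall hpt),
        MeasureTheory.integral_indicator_const (1:ℝ) hB, measureReal_def,
        block_law μ ξ hξmeas hξindep hξid j k]
      have hid : (fun w (t : Fin j) => ξ (0 + (t:ℕ)) w) ⁻¹'
          {v : Fin j → ℕ | ∃ l, l ≤ j ∧ ∑ t ∈ Finset.range l, vext j v t = j}
          = {w | inτ j w} := by
        ext w
        simp only [Set.mem_preimage, Set.mem_setOf_eq, hWcond 0 w, hinτ j w]
        constructor
        · rintro ⟨l, _, h⟩
          refine ⟨l, ?_⟩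
          rw [← h]
          exact Finset.sum_congr rfl fun t _ => by rw [Nat.zero_add]
        · rintro ⟨l, h⟩
          have hSl : Sp ξ l w = j := h
          have hlj : l ≤ j := by have := Sp_le ξ hξpos l w; omega
          refine ⟨l, hlj, ?_⟩
          rw [← hSl]
          exact Finset.sum_congr rfl fun t _ => by rw [Nat.zero_add]
      rw [hid, smul_eq_mul, mul_one, ← hu j]
    exact decorr_step hXY hXint hYint hXYint hEY
  --------------------------------------------------------------------------
  -- decomposition over the position of the last renewal before `i₂`
  --------------------------------------------------------------------------
  have perj : ∀ j ∈ Finset.Icc 1 m,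
      ∫ w, U i₁ w * (Set.indicator {w' | inτ i₂ w'} (fun _ => (1:ℝ)) w *
        (Set.indicator {w' | inτ (i₂+j) w'} (fun _ => (1:ℝ)) w - u j)) ∂μ = 0 := by
    intro j hj
    obtain ⟨hj1, hjm⟩ := Finset.mem_Icc.mp hj
    have hpt : ∀ w, U i₁ w * (Set.indicator {w' | inτ i₂ w'} (fun _ => (1:ℝ)) w *
        (Set.indicator {w' | inτ (i₂+j) w'} (fun _ => (1:ℝ)) w - u j))
        = ∑ k ∈ Finset.range (i₂+1),
            (U i₁ w * (if Sp ξ k w = i₂ then (1:ℝ) else 0)) *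
              ((if ∃ l, l ≤ j ∧ ∑ t ∈ Finset.range l, ξ (k + t) w = j
                then (1:ℝ) else 0) - u j) := by
      intro w
      by_cases hτ : inτ i₂ w
      · obtain ⟨k₀, hk₀⟩ := (hinτ i₂ w).1 hτ
        have hk₀' : Sp ξ k₀ w = i₂ := hk₀
        have hk₀mem : k₀ ∈ Finset.range (i₂+1) := Finset.mem_range.mpr (by
          have := Sp_le ξ hξpos k₀ w; omega)
        rw [Finset.sum_eq_single_of_mem k₀ hk₀mem (fun k _ hne => by
          have hSk : Sp ξ k w ≠ i₂ := fun h =>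
            hne ((Sp_strictMono ξ hξpos w).injective (h.trans hk₀'.symm))
          rw [if_neg hSk, mul_zero, zero_mul])]
        rw [if_pos hk₀', mul_one]
        have hiffτ : inτ (i₂+j) w ↔
            ∃ l, l ≤ j ∧ ∑ t ∈ Finset.range l, ξ (k₀ + t) w = j := by
          constructor
          · intro h
            obtain ⟨l', hl'⟩ := (hinτ _ w).1 h
            have hl'' : Sp ξ l' w = i₂ + j := hl'
            have hk₀l : k₀ < l' := by
              refine (Sp_strictMono ξ hξpos w).lt_iff_lt.mp ?_
              omega
            have hadd := Sp_add ξ k₀ (l' - k₀) w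
            rw [Nat.add_sub_cancel' hk₀l.le] at hadd
            have hge := block_ge ξ hξpos k₀ (l' - k₀) w
            exact ⟨l' - k₀, by omega, by omega⟩
          · rintro ⟨l, hl, hsum⟩
            refine (hinτ _ w).2 ⟨k₀ + l, ?_⟩
            have hadd := Sp_add ξ k₀ l w
            show Sp ξ (k₀ + l) w = i₂ + j
            omega
        have h2 : Set.indicator {w' | inτ i₂ w'} (fun _ => (1:ℝ)) w = 1 :=
          Set.indicator_of_mem hτ _
        have h3 : Set.indicator {w' | inτ (i₂+j) w'} (fun _ => (1:ℝ)) w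
            = (if ∃ l, l ≤ j ∧ ∑ t ∈ Finset.range l, ξ (k₀ + t) w = j
              then (1:ℝ) else 0) := by
          rw [Set.indicator_apply]
          exact if_congr (by simpa [Set.mem_setOf_eq] using hiffτ) rfl rfl
        rw [h2, h3, one_mul]
      · have h2 : Set.indicator {w' | inτ i₂ w'} (fun _ => (1:ℝ)) w = 0 :=
          Set.indicator_of_notMem hτ _
        rw [h2, zero_mul, mul_zero]
        symm
        refine Finset.sum_eq_zero fun k _ => ?_
        have hSk : Sp ξ k w ≠ i₂ := fun h => hτ ((hinτ i₂ w).2 ⟨k, h⟩)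
        rw [if_neg hSk, mul_zero, zero_mul]
    have hintg : ∀ k ∈ Finset.range (i₂+1), Integrable (fun w =>
        (U i₁ w * (if Sp ξ k w = i₂ then (1:ℝ) else 0)) *
          ((if ∃ l, l ≤ j ∧ ∑ t ∈ Finset.range l, ξ (k + t) w = j
            then (1:ℝ) else 0) - u j)) μ := by
      intro k _
      have hAmeas : Measurable (fun w => if Sp ξ k w = i₂ then (1:ℝ) else 0) := by
        refine Measurable.ite ?_ measurable_const measurable_const
        exact (Sp_measurable ξ hξmeas k) (measurableSet_singleton i₂)
      have hYmeas : Measurable (fun w => if ∃ l, l ≤ j ∧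
          ∑ t ∈ Finset.range l, ξ (k + t) w = j then (1:ℝ) else 0) := by
        refine Measurable.ite ?_ measurable_const measurable_const
        have h : {w : Ω | ∃ l, l ≤ j ∧ ∑ t ∈ Finset.range l, ξ (k + t) w = j}
            = ⋃ l, ⋃ (_ : l ≤ j), (fun w => ∑ t ∈ Finset.range l, ξ (k + t) w) ⁻¹' {j} := by
          ext w; simp
        rw [h]
        exact MeasurableSet.iUnion fun l => MeasurableSet.iUnion fun _ =>
          (Finset.measurable_sum _ fun t _ => hξmeas _) (measurableSet_singleton j)
      refine hint _ (((hUmeas i₁).mul hAmeas).mul (hYmeas.sub measurable_const))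
        (C * (1 + |u j|)) fun w => ?_
      rw [abs_mul]
      refine mul_le_mul ?_ ?_ (abs_nonneg _) hCnn
      · rw [abs_mul]
        calc |U i₁ w| * |if Sp ξ k w = i₂ then (1:ℝ) else 0| ≤ C * 1 :=
              mul_le_mul (hUbd i₁ w) abs_ite_le (abs_nonneg _) hCnn
          _ = C := mul_one C
      · calc |(if ∃ l, l ≤ j ∧ ∑ t ∈ Finset.range l, ξ (k + t) w = j
            then (1:ℝ) else 0) - u j|
            ≤ |if ∃ l, l ≤ j ∧ ∑ t ∈ Finset.range l, ξ (k + t) w = j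
              then (1:ℝ) else 0| + |u j| := abs_sub _ _
          _ ≤ 1 + |u j| := by
              have h : |(if ∃ l, l ≤ j ∧ ∑ t ∈ Finset.range l, ξ (k + t) w = j
                  then (1:ℝ) else 0)| ≤ 1 := abs_ite_le
              linarith
    rw [integral_congr_ae (Filter.Eventually.of_forall hpt),
      integral_finset_sum _ hintg]
    exact Finset.sum_eq_zero fun k _ => core j k hj1
  --------------------------------------------------------------------------
  -- assembling
  --------------------------------------------------------------------------
  have hpt0 : ∀ w, U i₁ w * U i₂ w = ∑ j ∈ Finset.Icc 1 m, (j:ℝ)^(-α) *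
      (U i₁ w * (Set.indicator {w' | inτ i₂ w'} (fun _ => (1:ℝ)) w *
        (Set.indicator {w' | inτ (i₂+j) w'} (fun _ => (1:ℝ)) w - u j))) := by
    intro w
    rw [hU i₂ w, Finset.mul_sum, Finset.mul_sum]
    exact Finset.sum_congr rfl fun j _ => by ring
  have hintg0 : ∀ j ∈ Finset.Icc 1 m, Integrable (fun w => (j:ℝ)^(-α) *
      (U i₁ w * (Set.indicator {w' | inτ i₂ w'} (fun _ => (1:ℝ)) w *
        (Set.indicator {w' | inτ (i₂+j) w'} (fun _ => (1:ℝ)) w - u j)))) μ := by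
    intro j _
    refine hint _ (((hUmeas i₁).mul ((measurable_const.indicator (hmeasτ i₂)).mul
      (((measurable_const.indicator (hmeasτ (i₂+j)))).sub measurable_const))).const_mul _)
      ((j:ℝ)^(-α) * (C * (1 + |u j|))) fun w => ?_
    rw [abs_mul, abs_of_nonneg (hrpow_nonneg j)]
    refine mul_le_mul_of_nonneg_left ?_ (hrpow_nonneg j)
    rw [abs_mul]
    refine mul_le_mul (hUbd i₁ w) ?_ (abs_nonneg _) hCnn
    rw [abs_mul]
    have h1 := hind_le {w' | inτ i₂ w'} w
    have h2 := hind_le {w' | inτ (i₂+j) w'} w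
    have h3 : |Set.indicator {w' | inτ (i₂+j) w'} (fun _ => (1:ℝ)) w - u j|
        ≤ 1 + |u j| := by
      calc |Set.indicator {w' | inτ (i₂+j) w'} (fun _ => (1:ℝ)) w - u j|
          ≤ |Set.indicator {w' | inτ (i₂+j) w'} (fun _ => (1:ℝ)) w| + |u j| := abs_sub _ _
        _ ≤ 1 + |u j| := by linarith
    calc |Set.indicator {w' | inτ i₂ w'} (fun _ => (1:ℝ)) w| *
        |Set.indicator {w' | inτ (i₂+j) w'} (fun _ => (1:ℝ)) w - u j|
        ≤ 1 * (1 + |u j|) := mul_le_mul h1 h3 (abs_nonneg _) (by norm_num)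
      _ = 1 + |u j| := one_mul _
  rw [integral_congr_ae (Filter.Eventually.of_forall hpt0),
    integral_finset_sum _ hintg0]
  refine Finset.sum_eq_zero fun j hj => ?_
  rw [integral_const_mul, perj j hj, mul_zero]
end

section
/- Combining the previous two estimates: with U_i as above, Σ_{i_1,i_2=1}^{r} E[U_{i_1} U_{i_2}] ≤ C r^{7α/4} for some constant C and all r ≥ 2. -/
open MeasureTheory ProbabilityTheory Finset Set

set_option linter.unusedSectionVars false
set_option maxHeartbeats 1000000
open MeasureTheory ProbabilityTheory Finset Set

namespace RenewalAux

variable {Ω : Type*} [MeasurableSpace Ω]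

/-- partial sums of the increments -/
def RS (ξ : ℕ → Ω → ℕ) (k : ℕ) (w : Ω) : ℕ := ∑ m ∈ Finset.range k, ξ m w

lemma RS_add (ξ : ℕ → Ω → ℕ) (k l : ℕ) (w : Ω) :
    RS ξ (k + l) w = RS ξ k w + ∑ m ∈ Finset.range l, ξ (k + m) w :=
  Finset.sum_range_add (fun m => ξ m w) k l

lemma le_sum_shift (ξ : ℕ → Ω → ℕ) (hξpos : ∀ n w, 1 ≤ ξ n w) (k l : ℕ) (w : Ω) :
    l ≤ ∑ m ∈ Finset.range l, ξ (k + m) w := by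
  calc l = ∑ _m ∈ Finset.range l, 1 := by simp
  _ ≤ _ := Finset.sum_le_sum fun i _ => hξpos _ _

lemma RS_strict (ξ : ℕ → Ω → ℕ) (hξpos : ∀ n w, 1 ≤ ξ n w) {k l : ℕ} (h : k < l) (w : Ω) :
    RS ξ k w < RS ξ l w := by
  have : l = k + (l - k) := by omega
  rw [this, RS_add]
  have := le_sum_shift ξ hξpos k (l - k) w
  omega

lemma RS_mono (ξ : ℕ → Ω → ℕ) (hξpos : ∀ n w, 1 ≤ ξ n w) {k l : ℕ} (h : k ≤ l) (w : Ω) :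
    RS ξ k w ≤ RS ξ l w := by
  rcases eq_or_lt_of_le h with rfl | h
  · exact le_rfl
  · exact (RS_strict ξ hξpos h w).le

lemma le_RS (ξ : ℕ → Ω → ℕ) (hξpos : ∀ n w, 1 ≤ ξ n w) (k : ℕ) (w : Ω) :
    k ≤ RS ξ k w := by
  have := le_sum_shift ξ hξpos 0 k w
  simpa [RS] using this

variable (inτ : ℕ → Ω → Prop)

lemma inτ_iff (ξ : ℕ → Ω → ℕ) (hξpos : ∀ n w, 1 ≤ ξ n w)
    (hinτ : ∀ n w, inτ n w ↔ ∃ k : ℕ, (∑ m' ∈ Finset.range k, ξ m' w) = n)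
    (n : ℕ) (w : Ω) : inτ n w ↔ ∃ k, k ≤ n ∧ RS ξ k w = n := by
  rw [hinτ]
  constructor
  · rintro ⟨k, hk⟩
    exact ⟨k, by have := le_RS ξ hξpos k w; rw [RS] at *; omega, hk⟩
  · rintro ⟨k, _, hk⟩; exact ⟨k, hk⟩

lemma RS_measurable (ξ : ℕ → Ω → ℕ) (hξmeas : ∀ n, Measurable (ξ n)) (k : ℕ) :
    Measurable (RS ξ k) :=
  Finset.measurable_sum _ fun i _ => hξmeas i

lemma inτ_measurableSet (ξ : ℕ → Ω → ℕ) (hξmeas : ∀ n, Measurable (ξ n))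
    (hinτ : ∀ n w, inτ n w ↔ ∃ k : ℕ, (∑ m' ∈ Finset.range k, ξ m' w) = n) (n : ℕ) :
    MeasurableSet {w | inτ n w} := by
  have : {w | inτ n w} = ⋃ k : ℕ, RS ξ k ⁻¹' {n} := by
    ext w; simp [hinτ n w, RS, eq_comm]
  rw [this]
  exact MeasurableSet.iUnion fun k => RS_measurable ξ hξmeas k (measurableSet_singleton n)

/-- decomposition of the renewal indicator according to the index of the renewal epoch -/
lemma indicator_decomp (ξ : ℕ → Ω → ℕ) (hξpos : ∀ n w, 1 ≤ ξ n w)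
    (hinτ : ∀ n w, inτ n w ↔ ∃ k : ℕ, (∑ m' ∈ Finset.range k, ξ m' w) = n)
    (n : ℕ) (w : Ω) :
    Set.indicator {w' | inτ n w'} (fun _ => (1:ℝ)) w
      = ∑ k ∈ Finset.range (n+1), (if RS ξ k w = n then (1:ℝ) else 0) := by
  by_cases h : inτ n w
  · obtain ⟨k, hkn, hk⟩ := (inτ_iff inτ ξ hξpos hinτ n w).mp h
    have hmem : w ∈ {w' | inτ n w'} := h
    rw [Set.indicator_of_mem hmem]
    rw [Finset.sum_eq_single_of_mem k (Finset.mem_range.mpr (by omega))]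
    · simp [hk]
    · intro k' _ hne
      have : RS ξ k' w ≠ n := by
        rcases lt_or_gt_of_ne hne with h' | h'
        · have := RS_strict ξ hξpos h' w; omega
        · have := RS_strict ξ hξpos h' w; omega
      simp [this]
  · have hmem : w ∉ {w' | inτ n w'} := h
    rw [Set.indicator_of_notMem hmem]
    symm
    apply Finset.sum_eq_zero
    intro k _
    have : RS ξ k w ≠ n := fun hc => h ((hinτ n w).mpr ⟨k, hc⟩)
    simp [this]

/-- after a renewal at `n` realized at epoch `k`, being in `τ` at `n+j` is a
condition on the increments `ξ (k+m)` -/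
lemma shifted_inτ (ξ : ℕ → Ω → ℕ) (hξpos : ∀ n w, 1 ≤ ξ n w)
    (hinτ : ∀ n w, inτ n w ↔ ∃ k : ℕ, (∑ m' ∈ Finset.range k, ξ m' w) = n)
    {n j k : ℕ} (hj : 1 ≤ j) {w : Ω} (hk : RS ξ k w = n) :
    inτ (n + j) w ↔ ∃ l, 1 ≤ l ∧ l ≤ j ∧ ∑ m ∈ Finset.range l, ξ (k + m) w = j := by
  constructor
  · intro h
    obtain ⟨k', hk'⟩ := (hinτ _ w).mp h
    have hk' : RS ξ k' w = n + j := hk'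
    have hkk' : k < k' := by
      by_contra hc
      have := RS_mono ξ hξpos (not_lt.mp hc) w
      omega
    refine ⟨k' - k, by omega, ?_, ?_⟩
    · have h1 := le_sum_shift ξ hξpos k (k' - k) w
      have h2 := RS_add ξ k (k' - k) w
      rw [show k + (k' - k) = k' by omega] at h2
      omega
    · have h2 := RS_add ξ k (k' - k) w
      rw [show k + (k' - k) = k' by omega] at h2
      omega
  · rintro ⟨l, _, _, hl⟩
    refine (hinτ _ w).mpr ⟨k + l, ?_⟩
    have h2 := RS_add ξ k l w
    simp only [RS] at h2 hk ⊢
    omega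

end RenewalAux


namespace RenewalAux2

variable {Ω : Type*} [MeasurableSpace Ω] (μ : Measure Ω) [IsProbabilityMeasure μ]
  (ξ : ℕ → Ω → ℕ)

/-- probability of a cylinder event: product of marginals -/
lemma cylinder (hξmeas : ∀ n, Measurable (ξ n))
    (hξindep : iIndepFun ξ μ)
    (hξid : ∀ n, Measure.map (ξ n) μ = Measure.map (ξ 0) μ)
    (k j : ℕ) (v : Fin j → ℕ) :
    μ {w | ∀ i : Fin j, ξ (k + i) w = v i} = ∏ i : Fin j, μ (ξ 0 ⁻¹' {v i}) := by
  classical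
  set v' : ℕ → ℕ := fun m => if h : m - k < j ∧ k ≤ m then v ⟨m - k, h.1⟩ else 0 with hv'
  have hv'' : ∀ i : Fin j, v' (k + i) = v i := by
    intro i
    simp only [hv']
    rw [dif_pos (by simp [i.2])]
    congr 1
    ext
    simp
  have hinj : Function.Injective (fun i : ℕ => k + i) := fun a b h => by simpa using h
  have key := hξindep.measure_inter_preimage_eq_mul
    ((Finset.range j).image (fun i => k + i)) (sets := fun n => {v' n})
    (fun i _ => measurableSet_singleton _)
  have hset : (⋂ n ∈ (Finset.range j).image (fun i => k + i), ξ n ⁻¹' {v' n})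
      = {w | ∀ i : Fin j, ξ (k + i) w = v i} := by
    ext w
    simp only [Set.mem_iInter, Finset.mem_image, Finset.mem_range, Set.mem_preimage,
      Set.mem_singleton_iff, Set.mem_setOf_eq]
    constructor
    · intro h i
      have := h (k + i) ⟨i, i.2, rfl⟩
      rwa [hv'' i] at this
    · rintro h n ⟨i, hi, rfl⟩
      have := h ⟨i, hi⟩
      rwa [hv'' ⟨i, hi⟩]
  have hprod : ∏ n ∈ (Finset.range j).image (fun i => k + i), μ (ξ n ⁻¹' {v' n})
      = ∏ i : Fin j, μ (ξ 0 ⁻¹' {v i}) := by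
    rw [Finset.prod_image (fun a _ b _ h => hinj h),
      ← Fin.prod_univ_eq_prod_range (fun i => μ (ξ (k + i) ⁻¹' {v' (k + i)}))]
    apply Finset.prod_congr rfl
    intro i _
    rw [← Measure.map_apply (hξmeas _) (measurableSet_singleton _),
      ← Measure.map_apply (hξmeas 0) (measurableSet_singleton _), hξid, hv'' i]
  rw [← hset, key, hprod]

lemma tuple_measurable (hξmeas : ∀ n, Measurable (ξ n)) (k j : ℕ) :
    Measurable (fun w (i : Fin j) => ξ (k + i) w) :=
  measurable_pi_lambda _ fun i => hξmeas (k + i)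

/-- shift invariance of the law of a block of increments -/
lemma shift_law (hξmeas : ∀ n, Measurable (ξ n))
    (hξindep : iIndepFun ξ μ)
    (hξid : ∀ n, Measure.map (ξ n) μ = Measure.map (ξ 0) μ)
    (k j : ℕ) (G : Set (Fin j → ℕ)) :
    μ ((fun w (i : Fin j) => ξ (k + i) w) ⁻¹' G)
      = μ ((fun w (i : Fin j) => ξ (i : ℕ) w) ⁻¹' G) := by
  have hmeasG : MeasurableSet G := (Set.to_countable G).measurableSet
  have ht0 : Measurable (fun w (i : Fin j) => ξ (i : ℕ) w) :=
    measurable_pi_lambda _ fun i => hξmeas i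
  rw [← Measure.map_apply (tuple_measurable ξ hξmeas k j) hmeasG,
    ← Measure.map_apply ht0 hmeasG]
  congr 1
  apply MeasureTheory.Measure.ext_of_singleton
  intro v
  rw [Measure.map_apply (tuple_measurable ξ hξmeas k j) (measurableSet_singleton v),
    Measure.map_apply ht0 (measurableSet_singleton v)]
  have h1 : (fun w (i : Fin j) => ξ (k + i) w) ⁻¹' {v} = {w | ∀ i : Fin j, ξ (k + i) w = v i} := by
    ext w; simp [funext_iff]
  have h2 : (fun w (i : Fin j) => ξ (i : ℕ) w) ⁻¹' {v} = {w | ∀ i : Fin j, ξ (0 + i) w = v i} := by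
    ext w; simp [funext_iff]
  rw [h1, h2, cylinder μ ξ hξmeas hξindep hξid, cylinder μ ξ hξmeas hξindep hξid]

end RenewalAux2


namespace RenewalAux3
open RenewalAux RenewalAux2

variable {Ω : Type*} [MeasurableSpace Ω] (μ : Measure Ω) [IsProbabilityMeasure μ]
  (ξ : ℕ → Ω → ℕ) (inτ : ℕ → Ω → Prop)

/-- extension of a finite tuple by zero -/
def vext {j : ℕ} (v : Fin j → ℕ) (m : ℕ) : ℕ := if h : m < j then v ⟨m, h⟩ else 0

lemma vext_tuple {j k : ℕ} (w : Ω) (m : ℕ) (hm : m < j) :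
    vext (fun i : Fin j => ξ (k + i) w) m = ξ (k + m) w := by
  simp [vext, hm]

/-- the key renewal property: a "history" random variable is uncorrelated with the
indicator of a future renewal, conditionally on a renewal at time `n`. -/
theorem key_renewal
    (hξmeas : ∀ n, Measurable (ξ n))
    (hξindep : iIndepFun ξ μ)
    (hξid : ∀ n, Measure.map (ξ n) μ = Measure.map (ξ 0) μ)
    (hξpos : ∀ n w, 1 ≤ ξ n w)
    (hinτ : ∀ n w, inτ n w ↔ ∃ k : ℕ, (∑ m' ∈ Finset.range k, ξ m' w) = n)
    (u : ℕ → ℝ) (hu : ∀ n, u n = (μ {w | inτ n w}).toReal)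
    (n j : ℕ) (hj : 1 ≤ j) (X : Ω → ℝ) (D : ℝ)
    (φ : ∀ k : ℕ, (Fin k → ℕ) → ℝ)
    (hφbd : ∀ k v, |φ k v| ≤ D)
    (hφeq : ∀ k w, X w * (if RS ξ k w = n then (1:ℝ) else 0) = φ k (fun i => ξ i w)) :
    ∫ w, X w * Set.indicator {w' | inτ n w'} (fun _ => (1:ℝ)) w
        * Set.indicator {w' | inτ (n+j) w'} (fun _ => (1:ℝ)) w ∂μ
      = u j * ∫ w, X w * Set.indicator {w' | inτ n w'} (fun _ => (1:ℝ)) w ∂μ := by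
  classical
  set G : Set (Fin j → ℕ) :=
    {v | ∃ l, 1 ≤ l ∧ l ≤ j ∧ ∑ m ∈ Finset.range l, vext v m = j} with hG
  set ψ : (Fin j → ℕ) → ℝ := fun v => if v ∈ G then 1 else 0 with hψ
  -- the sum over the tuple equals the shifted partial sum
  have tuple_sum : ∀ (k l : ℕ) (w : Ω), l ≤ j →
      ∑ m ∈ Finset.range l, vext (fun i : Fin j => ξ (k + i) w) m
        = ∑ m ∈ Finset.range l, ξ (k + m) w := by
    intro k l w hl
    apply Finset.sum_congr rfl
    intro m hm
    exact vext_tuple ξ w m (by have := Finset.mem_range.mp hm; omega)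
  have tuple_sum0 : ∀ (l : ℕ) (w : Ω), l ≤ j →
      ∑ m ∈ Finset.range l, vext (fun i : Fin j => ξ (i : ℕ) w) m
        = ∑ m ∈ Finset.range l, ξ m w := by
    intro l w hl
    apply Finset.sum_congr rfl
    intro m hm
    have hm' : m < j := by have := Finset.mem_range.mp hm; omega
    simp [vext, hm']
  -- fact (a): on the event `RS k = n`, ψ of the shifted tuple is the future indicator
  have fact_a : ∀ (k : ℕ) (w : Ω), RS ξ k w = n →
      ψ (fun i : Fin j => ξ (k + i) w)
        = Set.indicator {w' | inτ (n+j) w'} (fun _ => (1:ℝ)) w := by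
    intro k w hk
    have hmem : (fun i : Fin j => ξ (k + i) w) ∈ G ↔ inτ (n + j) w := by
      rw [hG, shifted_inτ inτ ξ hξpos hinτ hj hk]
      constructor
      · rintro ⟨l, h1, h2, h3⟩
        exact ⟨l, h1, h2, by rwa [tuple_sum k l w h2] at h3⟩
      · rintro ⟨l, h1, h2, h3⟩
        exact ⟨l, h1, h2, by rwa [tuple_sum k l w h2]⟩
    by_cases h : inτ (n + j) w
    · rw [Set.indicator_of_mem (show w ∈ {w' | inτ (n+j) w'} from h)]
      simp [hψ, hmem.mpr h]
    · rw [Set.indicator_of_notMem (show w ∉ {w' | inτ (n+j) w'} from h)]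
      simp only [hψ]
      rw [if_neg (fun hc => h (hmem.mp hc))]
  -- fact (b): the integral of ψ of the shifted tuple is u j
  have fact_b : ∀ k : ℕ, ∫ w, ψ (fun i : Fin j => ξ (k + i) w) ∂μ = u j := by
    intro k
    have hGmeas : MeasurableSet G := (Set.to_countable G).measurableSet
    have hind : (fun w => ψ (fun i : Fin j => ξ (k + i) w))
        = Set.indicator ((fun w (i : Fin j) => ξ (k + i) w) ⁻¹' G) (1 : Ω → ℝ) := by
      funext w
      simp [hψ, Set.indicator_apply, Set.mem_preimage]
    rw [hind, MeasureTheory.integral_indicator_one ((tuple_measurable ξ hξmeas k j) hGmeas),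
      measureReal_def, shift_law μ ξ hξmeas hξindep hξid k j G]
    have hset : (fun w (i : Fin j) => ξ (i : ℕ) w) ⁻¹' G = {w | inτ j w} := by
      ext w
      simp only [Set.mem_preimage, hG, Set.mem_setOf_eq]
      constructor
      · rintro ⟨l, h1, h2, h3⟩
        rw [tuple_sum0 l w h2] at h3
        exact (hinτ j w).mpr ⟨l, h3⟩
      · intro h
        obtain ⟨l, hl, hRS⟩ := (inτ_iff inτ ξ hξpos hinτ j w).mp h
        have hl1 : 1 ≤ l := by
          rcases Nat.eq_zero_or_pos l with rfl | h'
          · simp [RS] at hRS; omega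
          · exact h'
        refine ⟨l, hl1, hl, ?_⟩
        rw [tuple_sum0 l w hl]
        simpa [RS] using hRS
    rw [hset, ← hu j]
  -- integrability and independence per epoch k
  have hD0 : 0 ≤ D := le_trans (abs_nonneg _) (hφbd 0 (fun i => 0))
  have hΦmeas : ∀ k : ℕ, Measurable (fun w => φ k (fun i : Fin k => ξ (i : ℕ) w)) := by
    intro k
    exact (measurable_of_countable (φ k)).comp (measurable_pi_lambda _ fun i => hξmeas i)
  have hΨmeas : ∀ k : ℕ, Measurable (fun w => ψ (fun i : Fin j => ξ (k + i) w)) := by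
    intro k
    exact (measurable_of_countable ψ).comp (tuple_measurable ξ hξmeas k j)
  have hΦint : ∀ k : ℕ, Integrable (fun w => φ k (fun i : Fin k => ξ (i : ℕ) w)) μ := by
    intro k
    refine (integrable_const D).mono' (hΦmeas k).aestronglyMeasurable ?_
    exact Filter.Eventually.of_forall fun w => by simpa using hφbd k _
  have hΨint : ∀ k : ℕ, Integrable (fun w => ψ (fun i : Fin j => ξ (k + i) w)) μ := by
    intro k
    refine (integrable_const (1:ℝ)).mono' (hΨmeas k).aestronglyMeasurable ?_
    refine Filter.Eventually.of_forall fun w => ?_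
    simp only [hψ, Real.norm_eq_abs]
    split <;> simp
  have hindep : ∀ k : ℕ, IndepFun (fun w => φ k (fun i : Fin k => ξ (i : ℕ) w))
      (fun w => ψ (fun i : Fin j => ξ (k + i) w)) μ := by
    intro k
    have hdisj : Disjoint (Finset.range k) (Finset.Ico k (k + j)) := by
      simp only [Finset.disjoint_left, Finset.mem_range, Finset.mem_Ico]
      omega
    have base := hξindep.indepFun_finset (Finset.range k) (Finset.Ico k (k + j)) hdisj hξmeas
    have := base.comp
      (φ := fun q : (↥(Finset.range k) → ℕ) => φ k (fun i : Fin k => q ⟨(i : ℕ), Finset.mem_range.mpr i.2⟩))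
      (ψ := fun q : (↥(Finset.Ico k (k + j)) → ℕ) =>
        ψ (fun i : Fin j => q ⟨k + (i : ℕ), Finset.mem_Ico.mpr (by omega)⟩))
      (measurable_of_countable _) (measurable_of_countable _)
    exact this
  -- the product integral formula
  have fact_c : ∀ k : ℕ,
      ∫ w, φ k (fun i : Fin k => ξ (i : ℕ) w) * ψ (fun i : Fin j => ξ (k + i) w) ∂μ
        = (∫ w, φ k (fun i : Fin k => ξ (i : ℕ) w) ∂μ) * u j := by
    intro k
    have := (hindep k).integral_mul_eq_mul_integral (hΦint k).1 (hΨint k).1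
    rw [← fact_b k]
    exact this
  -- pointwise decomposition of the triple product
  have lhs_eq : ∀ w : Ω,
      X w * Set.indicator {w' | inτ n w'} (fun _ => (1:ℝ)) w
        * Set.indicator {w' | inτ (n+j) w'} (fun _ => (1:ℝ)) w
      = ∑ k ∈ Finset.range (n+1),
          φ k (fun i : Fin k => ξ (i : ℕ) w) * ψ (fun i : Fin j => ξ (k + i) w) := by
    intro w
    rw [indicator_decomp inτ ξ hξpos hinτ n w, Finset.mul_sum, Finset.sum_mul]
    apply Finset.sum_congr rfl
    intro k _
    by_cases h : RS ξ k w = n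
    · rw [← hφeq k w, fact_a k w h]
    · rw [← hφeq k w]
      simp [h]
  have rhs_eq : ∀ w : Ω,
      X w * Set.indicator {w' | inτ n w'} (fun _ => (1:ℝ)) w
      = ∑ k ∈ Finset.range (n+1), φ k (fun i : Fin k => ξ (i : ℕ) w) := by
    intro w
    rw [indicator_decomp inτ ξ hξpos hinτ n w, Finset.mul_sum]
    exact Finset.sum_congr rfl fun k _ => hφeq k w
  calc ∫ w, X w * Set.indicator {w' | inτ n w'} (fun _ => (1:ℝ)) w
        * Set.indicator {w' | inτ (n+j) w'} (fun _ => (1:ℝ)) w ∂μ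
      = ∫ w, ∑ k ∈ Finset.range (n+1),
          φ k (fun i : Fin k => ξ (i : ℕ) w) * ψ (fun i : Fin j => ξ (k + i) w) ∂μ := by
        congr 1; funext w; exact lhs_eq w
    _ = ∑ k ∈ Finset.range (n+1), ∫ w,
          φ k (fun i : Fin k => ξ (i : ℕ) w) * ψ (fun i : Fin j => ξ (k + i) w) ∂μ := by
        apply integral_finset_sum
        intro k _
        refine (integrable_const D).mono'
          ((hΦmeas k).mul (hΨmeas k)).aestronglyMeasurable ?_
        refine Filter.Eventually.of_forall fun w => ?_
        have h2 : |ψ (fun i : Fin j => ξ (k + i) w)| ≤ 1 := by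
          simp only [hψ]; split <;> simp
        calc ‖φ k (fun i : Fin k => ξ (i : ℕ) w) * ψ (fun i : Fin j => ξ (k + i) w)‖
            = |φ k (fun i : Fin k => ξ (i : ℕ) w)| * |ψ (fun i : Fin j => ξ (k + i) w)| :=
              abs_mul _ _
          _ ≤ D * 1 := mul_le_mul (hφbd k _) h2 (abs_nonneg _) hD0
          _ = D := mul_one D
    _ = ∑ k ∈ Finset.range (n+1), (∫ w, φ k (fun i : Fin k => ξ (i : ℕ) w) ∂μ) * u j := by
        exact Finset.sum_congr rfl fun k _ => fact_c k
    _ = u j * ∑ k ∈ Finset.range (n+1), ∫ w, φ k (fun i : Fin k => ξ (i : ℕ) w) ∂μ := by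
        rw [← Finset.sum_mul, mul_comm]
    _ = u j * ∫ w, X w * Set.indicator {w' | inτ n w'} (fun _ => (1:ℝ)) w ∂μ := by
        congr 1
        rw [← integral_finset_sum _ (fun k _ => hΦint k)]
        congr 1; funext w; exact (rhs_eq w).symm

end RenewalAux3

namespace RenewalAux4
open RenewalAux RenewalAux2 RenewalAux3

variable {Ω : Type*} [MeasurableSpace Ω] (μ : Measure Ω) [IsProbabilityMeasure μ]

lemma u_nonneg (inτ : ℕ → Ω → Prop) (u : ℕ → ℝ) (hu : ∀ n, u n = (μ {w | inτ n w}).toReal)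
    (n : ℕ) : 0 ≤ u n := by rw [hu]; exact ENNReal.toReal_nonneg

lemma u_le_one (inτ : ℕ → Ω → Prop) (u : ℕ → ℝ) (hu : ∀ n, u n = (μ {w | inτ n w}).toReal)
    (n : ℕ) : u n ≤ 1 := by
  rw [hu]
  have h := prob_le_one (μ := μ) (s := {w | inτ n w})
  simpa using ENNReal.toReal_mono (by simp) h

lemma abs_term_le (inτ : ℕ → Ω → Prop) (u : ℕ → ℝ) (hu : ∀ n, u n = (μ {w | inτ n w}).toReal)
    (α : ℝ) (hα0 : 0 < α) (j m : ℕ) (hj : 1 ≤ j) (w : Ω) :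
    |(j : ℝ) ^ (-α) * (Set.indicator {w' | inτ m w'} (fun _ => (1:ℝ)) w - u j)| ≤ 1 := by
  classical
  rw [abs_mul]
  have h1 : |(j : ℝ) ^ (-α)| ≤ 1 := by
    rw [abs_of_nonneg (Real.rpow_nonneg (Nat.cast_nonneg j) _)]
    exact Real.rpow_le_one_of_one_le_of_nonpos (by exact_mod_cast hj) (by linarith)
  have h2 : |Set.indicator {w' | inτ m w'} (fun _ => (1:ℝ)) w - u j| ≤ 1 := by
    have hu0 := u_nonneg μ inτ u hu j
    have hu1 := u_le_one μ inτ u hu j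
    rw [Set.indicator_apply]
    split <;> rw [abs_le] <;> constructor <;> linarith
  calc |(j : ℝ) ^ (-α)| * |Set.indicator {w' | inτ m w'} (fun _ => (1:ℝ)) w - u j|
      ≤ 1 * 1 := mul_le_mul h1 h2 (abs_nonneg _) zero_le_one
    _ = 1 := one_mul 1

/-- pointwise bound on `U` -/
lemma U_abs_le (inτ : ℕ → Ω → Prop) (u : ℕ → ℝ) (hu : ∀ n, u n = (μ {w | inτ n w}).toReal)
    (α : ℝ) (hα0 : 0 < α)
    (U : ℕ → ℕ → Ω → ℝ)
    (hU : ∀ r i w, U r i w =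
      Set.indicator {w' | inτ i w'} (fun _ => (1:ℝ)) w *
        ∑ j ∈ Finset.Icc 1 ⌈(r : ℝ) ^ (α / 4)⌉₊, (j : ℝ) ^ (-α) *
          (Set.indicator {w' | inτ (i + j) w'} (fun _ => (1:ℝ)) w - u j))
    (r i : ℕ) (w : Ω) :
    |U r i w| ≤ (⌈(r : ℝ) ^ (α / 4)⌉₊ : ℝ) * Set.indicator {w' | inτ i w'} (fun _ => (1:ℝ)) w := by
  set M := ⌈(r : ℝ) ^ (α / 4)⌉₊
  rw [hU, abs_mul]
  have hind : |Set.indicator {w' | inτ i w'} (fun _ => (1:ℝ)) w|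
      = Set.indicator {w' | inτ i w'} (fun _ => (1:ℝ)) w := by
    rw [abs_of_nonneg]; exact Set.indicator_nonneg (fun _ _ => zero_le_one) w
  rw [hind, mul_comm]
  apply mul_le_mul_of_nonneg_right _ (Set.indicator_nonneg (fun _ _ => zero_le_one) w)
  calc |∑ j ∈ Finset.Icc 1 M, (j : ℝ) ^ (-α) *
          (Set.indicator {w' | inτ (i + j) w'} (fun _ => (1:ℝ)) w - u j)|
      ≤ ∑ j ∈ Finset.Icc 1 M, |(j : ℝ) ^ (-α) *
          (Set.indicator {w' | inτ (i + j) w'} (fun _ => (1:ℝ)) w - u j)| :=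
        Finset.abs_sum_le_sum_abs _ _
    _ ≤ ∑ j ∈ Finset.Icc 1 M, 1 := Finset.sum_le_sum fun j hj =>
        abs_term_le μ inτ u hu α hα0 j (i + j) (Finset.mem_Icc.mp hj).1 w
    _ = (M : ℝ) := by simp

lemma U_measurable (ξ : ℕ → Ω → ℕ) (hξmeas : ∀ n, Measurable (ξ n))
    (inτ : ℕ → Ω → Prop)
    (hinτ : ∀ n w, inτ n w ↔ ∃ k : ℕ, (∑ m' ∈ Finset.range k, ξ m' w) = n)
    (u : ℕ → ℝ) (α : ℝ)
    (U : ℕ → ℕ → Ω → ℝ)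
    (hU : ∀ r i w, U r i w =
      Set.indicator {w' | inτ i w'} (fun _ => (1:ℝ)) w *
        ∑ j ∈ Finset.Icc 1 ⌈(r : ℝ) ^ (α / 4)⌉₊, (j : ℝ) ^ (-α) *
          (Set.indicator {w' | inτ (i + j) w'} (fun _ => (1:ℝ)) w - u j))
    (r i : ℕ) : Measurable (U r i) := by
  have : U r i = fun w =>
      Set.indicator {w' | inτ i w'} (fun _ => (1:ℝ)) w *
        ∑ j ∈ Finset.Icc 1 ⌈(r : ℝ) ^ (α / 4)⌉₊, (j : ℝ) ^ (-α) *
          (Set.indicator {w' | inτ (i + j) w'} (fun _ => (1:ℝ)) w - u j) := by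
    funext w; exact hU r i w
  rw [this]
  apply Measurable.mul
  · exact (measurable_const.indicator (inτ_measurableSet inτ ξ hξmeas hinτ i))
  · apply Finset.measurable_sum
    intro j _
    exact ((measurable_const.indicator (inτ_measurableSet inτ ξ hξmeas hinτ (i + j))).sub
      measurable_const).const_mul _

end RenewalAux4

namespace RenewalAux5
open RenewalAux RenewalAux2 RenewalAux3 RenewalAux4

variable {Ω : Type*} [MeasurableSpace Ω]

/-- vanishing of the covariance for far-apart indices -/
lemma far_zero (μ : Measure Ω) [IsProbabilityMeasure μ]
    (ξ : ℕ → Ω → ℕ) (hξmeas : ∀ n, Measurable (ξ n))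
    (hξindep : iIndepFun ξ μ)
    (hξid : ∀ n, Measure.map (ξ n) μ = Measure.map (ξ 0) μ)
    (hξpos : ∀ n w, 1 ≤ ξ n w)
    (inτ : ℕ → Ω → Prop)
    (hinτ : ∀ n w, inτ n w ↔ ∃ k : ℕ, (∑ m' ∈ Finset.range k, ξ m' w) = n)
    (u : ℕ → ℝ) (hu : ∀ n, u n = (μ {w | inτ n w}).toReal)
    (α : ℝ) (hα0 : 0 < α)
    (U : ℕ → ℕ → Ω → ℝ)
    (hU : ∀ r i w, U r i w =
      Set.indicator {w' | inτ i w'} (fun _ => (1:ℝ)) w *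
        ∑ j ∈ Finset.Icc 1 ⌈(r : ℝ) ^ (α / 4)⌉₊, (j : ℝ) ^ (-α) *
          (Set.indicator {w' | inτ (i + j) w'} (fun _ => (1:ℝ)) w - u j))
    (r i₁ i₂ : ℕ) (hfar : i₁ + ⌈(r : ℝ) ^ (α / 4)⌉₊ ≤ i₂) :
    ∫ w, U r i₁ w * U r i₂ w ∂μ = 0 := by
  classical
  set M := ⌈(r : ℝ) ^ (α / 4)⌉₊ with hM
  set ind : ℕ → Ω → ℝ := fun m w => Set.indicator {w' | inτ m w'} (fun _ => (1:ℝ)) w with hind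
  set X : Ω → ℝ := U r i₁ with hX
  -- the history functions
  set φ : ∀ k : ℕ, (Fin k → ℕ) → ℝ := fun k v =>
    (if (∑ m ∈ Finset.range k, vext v m) = i₂ then (1:ℝ) else 0) *
      ((if ∃ l, l ≤ k ∧ (∑ m ∈ Finset.range l, vext v m) = i₁ then (1:ℝ) else 0) *
        ∑ j' ∈ Finset.Icc 1 M, (j' : ℝ) ^ (-α) *
          ((if ∃ l, l ≤ k ∧ (∑ m ∈ Finset.range l, vext v m) = i₁ + j' then (1:ℝ) else 0)
            - u j')) with hφ
  have hφbd : ∀ (k : ℕ) (v : Fin k → ℕ), |φ k v| ≤ (M : ℝ) := by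
    intro k v
    rw [hφ]
    simp only []
    rw [abs_mul, abs_mul]
    have e1 : |if (∑ m ∈ Finset.range k, vext v m) = i₂ then (1:ℝ) else 0| ≤ 1 := by
      split <;> simp
    have e2 : |if ∃ l, l ≤ k ∧ (∑ m ∈ Finset.range l, vext v m) = i₁ then (1:ℝ) else 0| ≤ 1 := by
      split <;> simp
    have e3 : |∑ j' ∈ Finset.Icc 1 M, (j' : ℝ) ^ (-α) *
        ((if ∃ l, l ≤ k ∧ (∑ m ∈ Finset.range l, vext v m) = i₁ + j' then (1:ℝ) else 0)
          - u j')| ≤ (M : ℝ) := by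
      calc _ ≤ ∑ j' ∈ Finset.Icc 1 M, |(j' : ℝ) ^ (-α) *
          ((if ∃ l, l ≤ k ∧ (∑ m ∈ Finset.range l, vext v m) = i₁ + j' then (1:ℝ) else 0)
            - u j')| := Finset.abs_sum_le_sum_abs _ _
        _ ≤ ∑ j' ∈ Finset.Icc 1 M, 1 := by
          apply Finset.sum_le_sum
          intro j' hj'
          have hj'1 : 1 ≤ j' := (Finset.mem_Icc.mp hj').1
          rw [abs_mul]
          have h1 : |(j' : ℝ) ^ (-α)| ≤ 1 := by
            rw [abs_of_nonneg (Real.rpow_nonneg (Nat.cast_nonneg j') _)]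
            exact Real.rpow_le_one_of_one_le_of_nonpos (by exact_mod_cast hj'1) (by linarith)
          have h2 : |(if ∃ l, l ≤ k ∧ (∑ m ∈ Finset.range l, vext v m) = i₁ + j'
              then (1:ℝ) else 0) - u j'| ≤ 1 := by
            have hu0 := u_nonneg μ inτ u hu j'
            have hu1 := u_le_one μ inτ u hu j'
            split <;> rw [abs_le] <;> constructor <;> linarith
          calc |(j' : ℝ) ^ (-α)| * _ ≤ 1 * 1 := mul_le_mul h1 h2 (abs_nonneg _) zero_le_one
            _ = 1 := one_mul 1
        _ = (M : ℝ) := by simp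
    calc _ ≤ (1 : ℝ) * (1 * (M : ℝ)) := by
          apply mul_le_mul e1 _ (by positivity) zero_le_one
          apply mul_le_mul e2 e3 (abs_nonneg _) zero_le_one
      _ = (M : ℝ) := by ring
  -- the determination property
  have hφeq : ∀ (k : ℕ) (w : Ω),
      X w * (if RS ξ k w = i₂ then (1:ℝ) else 0) = φ k (fun i => ξ (i : ℕ) w) := by
    intro k w
    have hsum : ∀ l : ℕ, l ≤ k → (∑ m ∈ Finset.range l, vext (fun i : Fin k => ξ (i : ℕ) w) m)
        = RS ξ l w := by
      intro l hl
      apply Finset.sum_congr rfl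
      intro m hm
      have hm' : m < k := by have := Finset.mem_range.mp hm; omega
      simp [vext, hm']
    by_cases hk : RS ξ k w = i₂
    · rw [if_pos hk, mul_one, hφ]
      simp only []
      rw [if_pos (by rw [hsum k le_rfl]; exact hk), one_mul]
      -- history indicators agree
      have hhist : ∀ m : ℕ, m ≤ i₂ →
          ind m w = (if ∃ l, l ≤ k ∧ (∑ m' ∈ Finset.range l,
            vext (fun i : Fin k => ξ (i : ℕ) w) m') = m then (1:ℝ) else 0) := by
        intro m hm
        have hiff : inτ m w ↔ ∃ l, l ≤ k ∧ RS ξ l w = m := by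
          rw [hinτ m w]
          constructor
          · rintro ⟨l, hl⟩
            have hl : RS ξ l w = m := hl
            refine ⟨l, ?_, hl⟩
            by_contra hc
            have := RS_strict ξ hξpos (show k < l by omega) w
            omega
          · rintro ⟨l, _, hl⟩; exact ⟨l, hl⟩
        have hiff2 : (∃ l, l ≤ k ∧ (∑ m' ∈ Finset.range l,
            vext (fun i : Fin k => ξ (i : ℕ) w) m') = m) ↔ inτ m w := by
          rw [hiff]
          constructor
          · rintro ⟨l, hl, he⟩; exact ⟨l, hl, by rwa [hsum l hl] at he⟩
          · rintro ⟨l, hl, he⟩; exact ⟨l, hl, by rwa [hsum l hl]⟩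
        rw [hind]
        simp only [Set.indicator_apply, Set.mem_setOf_eq]
        by_cases h : inτ m w
        · rw [if_pos h, if_pos (hiff2.mpr h)]
        · rw [if_neg h, if_neg (fun hc => h (hiff2.mp hc))]
      have hi₁ : i₁ ≤ i₂ := by omega
      rw [hX, hU]
      congr 1
      · rw [← hhist i₁ hi₁, hind]
      · apply Finset.sum_congr rfl
        intro j' hj'
        have hj'M : j' ≤ M := (Finset.mem_Icc.mp hj').2
        congr 1
        rw [← hhist (i₁ + j') (by omega), hind]
    · rw [if_neg hk, mul_zero, hφ]
      simp only []
      rw [if_neg (by rw [hsum k le_rfl]; exact hk), zero_mul]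
  -- measurability and integrability
  have hUmeas : ∀ i, Measurable (U r i) := fun i => U_measurable ξ hξmeas inτ hinτ u α U hU r i
  have hindmeas : ∀ m : ℕ, Measurable (fun w => Set.indicator {w' | inτ m w'} (fun _ => (1:ℝ)) w) :=
    fun m => measurable_const.indicator (inτ_measurableSet inτ ξ hξmeas hinτ m)
  have hind01 : ∀ (m : ℕ) (w : Ω), 0 ≤ Set.indicator {w' | inτ m w'} (fun _ => (1:ℝ)) w ∧
      Set.indicator {w' | inτ m w'} (fun _ => (1:ℝ)) w ≤ 1 := by
    intro m w
    constructor
    · exact Set.indicator_nonneg (fun _ _ => zero_le_one) w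
    · rw [Set.indicator_apply]; split <;> norm_num
  have hXbd : ∀ w, |X w| ≤ (M : ℝ) := by
    intro w
    refine (U_abs_le μ inτ u hu α hα0 U hU r i₁ w).trans ?_
    have h := (hind01 i₁ w).2
    calc (M:ℝ) * Set.indicator {w' | inτ i₁ w'} (fun _ => (1:ℝ)) w ≤ (M:ℝ) * 1 :=
          mul_le_mul_of_nonneg_left h (Nat.cast_nonneg M)
      _ = (M:ℝ) := mul_one _
  have hintA : ∀ j : ℕ, Integrable (fun w => X w *
      Set.indicator {w' | inτ i₂ w'} (fun _ => (1:ℝ)) w *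
      Set.indicator {w' | inτ (i₂ + j) w'} (fun _ => (1:ℝ)) w) μ := by
    intro j
    refine (integrable_const (M:ℝ)).mono'
      ((((hUmeas i₁).mul (hindmeas i₂)).mul (hindmeas (i₂+j))).aestronglyMeasurable) ?_
    refine Filter.Eventually.of_forall fun w => ?_
    rw [Real.norm_eq_abs, abs_mul, abs_mul]
    have h1 := hXbd w
    have h2 := hind01 i₂ w
    have h3 := hind01 (i₂+j) w
    calc |X w| * |Set.indicator {w' | inτ i₂ w'} (fun _ => (1:ℝ)) w| *
          |Set.indicator {w' | inτ (i₂+j) w'} (fun _ => (1:ℝ)) w|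
        ≤ (M:ℝ) * 1 * 1 := by
          apply mul_le_mul _ (by rw [abs_of_nonneg h3.1]; exact h3.2) (abs_nonneg _) (by positivity)
          exact mul_le_mul h1 (by rw [abs_of_nonneg h2.1]; exact h2.2) (abs_nonneg _)
            (Nat.cast_nonneg M)
      _ = (M:ℝ) := by ring
  have hintB : Integrable (fun w => X w *
      Set.indicator {w' | inτ i₂ w'} (fun _ => (1:ℝ)) w) μ := by
    refine (integrable_const (M:ℝ)).mono'
      (((hUmeas i₁).mul (hindmeas i₂)).aestronglyMeasurable) ?_
    refine Filter.Eventually.of_forall fun w => ?_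
    rw [Real.norm_eq_abs, abs_mul]
    have h2 := hind01 i₂ w
    calc |X w| * |Set.indicator {w' | inτ i₂ w'} (fun _ => (1:ℝ)) w|
        ≤ (M:ℝ) * 1 := mul_le_mul (hXbd w) (by rw [abs_of_nonneg h2.1]; exact h2.2)
          (abs_nonneg _) (Nat.cast_nonneg M)
      _ = (M:ℝ) := mul_one _
  -- the renewal identity for each j
  have hkey : ∀ j ∈ Finset.Icc 1 M,
      ∫ w, X w * Set.indicator {w' | inτ i₂ w'} (fun _ => (1:ℝ)) w
          * Set.indicator {w' | inτ (i₂ + j) w'} (fun _ => (1:ℝ)) w ∂μ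
        = u j * ∫ w, X w * Set.indicator {w' | inτ i₂ w'} (fun _ => (1:ℝ)) w ∂μ := by
    intro j hj
    exact key_renewal μ ξ inτ hξmeas hξindep hξid hξpos hinτ u hu i₂ j
      (Finset.mem_Icc.mp hj).1 X (M:ℝ) φ hφbd hφeq
  -- expansion of the product
  have expand : ∀ (a b : ℝ) (g : ℕ → ℝ),
      a * (b * ∑ j ∈ Finset.Icc 1 M, (j:ℝ)^(-α) * (g j - u j))
        = ∑ j ∈ Finset.Icc 1 M, (j:ℝ)^(-α) * (a * b * g j - u j * (a * b)) := by
    intro a b g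
    rw [← mul_assoc, Finset.mul_sum]
    exact Finset.sum_congr rfl fun j _ => by ring
  have hexp : ∀ w, X w * U r i₂ w = ∑ j ∈ Finset.Icc 1 M, (j:ℝ)^(-α) *
      (X w * Set.indicator {w' | inτ i₂ w'} (fun _ => (1:ℝ)) w
          * Set.indicator {w' | inτ (i₂ + j) w'} (fun _ => (1:ℝ)) w
        - u j * (X w * Set.indicator {w' | inτ i₂ w'} (fun _ => (1:ℝ)) w)) := by
    intro w
    rw [hU r i₂ w]
    exact expand (X w) _ _
  calc ∫ w, X w * U r i₂ w ∂μ
      = ∫ w, ∑ j ∈ Finset.Icc 1 M, (j:ℝ)^(-α) *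
        (X w * Set.indicator {w' | inτ i₂ w'} (fun _ => (1:ℝ)) w
            * Set.indicator {w' | inτ (i₂ + j) w'} (fun _ => (1:ℝ)) w
          - u j * (X w * Set.indicator {w' | inτ i₂ w'} (fun _ => (1:ℝ)) w)) ∂μ := by
        congr 1; funext w; exact hexp w
    _ = ∑ j ∈ Finset.Icc 1 M, ∫ w, (j:ℝ)^(-α) *
        (X w * Set.indicator {w' | inτ i₂ w'} (fun _ => (1:ℝ)) w
            * Set.indicator {w' | inτ (i₂ + j) w'} (fun _ => (1:ℝ)) w
          - u j * (X w * Set.indicator {w' | inτ i₂ w'} (fun _ => (1:ℝ)) w)) ∂μ := by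
        refine integral_finset_sum _ fun j _ => ?_
        exact ((hintA j).sub (hintB.const_mul (u j))).const_mul _
    _ = 0 := by
        apply Finset.sum_eq_zero
        intro j hj
        rw [MeasureTheory.integral_const_mul, integral_sub (hintA j) (hintB.const_mul (u j)),
          MeasureTheory.integral_const_mul, hkey j hj, sub_self, mul_zero]


end RenewalAux5

namespace RenewalAux6
open RenewalAux RenewalAux2 RenewalAux3 RenewalAux4 RenewalAux5

variable {Ω : Type*} [MeasurableSpace Ω]

/-- crude bound on the covariance for any pair of indices -/
lemma near_bound (μ : Measure Ω) [IsProbabilityMeasure μ]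
    (ξ : ℕ → Ω → ℕ) (hξmeas : ∀ n, Measurable (ξ n))
    (inτ : ℕ → Ω → Prop)
    (hinτ : ∀ n w, inτ n w ↔ ∃ k : ℕ, (∑ m' ∈ Finset.range k, ξ m' w) = n)
    (u : ℕ → ℝ) (hu : ∀ n, u n = (μ {w | inτ n w}).toReal)
    (α : ℝ) (hα0 : 0 < α)
    (U : ℕ → ℕ → Ω → ℝ)
    (hU : ∀ r i w, U r i w =
      Set.indicator {w' | inτ i w'} (fun _ => (1:ℝ)) w *
        ∑ j ∈ Finset.Icc 1 ⌈(r : ℝ) ^ (α / 4)⌉₊, (j : ℝ) ^ (-α) *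
          (Set.indicator {w' | inτ (i + j) w'} (fun _ => (1:ℝ)) w - u j))
    (r i₁ i₂ : ℕ) :
    ∫ w, U r i₁ w * U r i₂ w ∂μ ≤ ((⌈(r : ℝ) ^ (α / 4)⌉₊ : ℝ))^2 * u i₁ := by
  classical
  set M := ⌈(r : ℝ) ^ (α / 4)⌉₊ with hM
  have hmeas₁ := inτ_measurableSet inτ ξ hξmeas hinτ i₁
  have hg : Integrable (fun w => (M:ℝ)^2 *
      Set.indicator {w' | inτ i₁ w'} (fun _ => (1:ℝ)) w) μ := by
    exact (((integrable_const (1:ℝ)).indicator hmeas₁).const_mul _)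
  have hbound : ∀ w, |U r i₁ w * U r i₂ w| ≤ (M:ℝ)^2 *
      Set.indicator {w' | inτ i₁ w'} (fun _ => (1:ℝ)) w := by
    intro w
    rw [abs_mul]
    have h1 := U_abs_le μ inτ u hu α hα0 U hU r i₁ w
    have h2 := U_abs_le μ inτ u hu α hα0 U hU r i₂ w
    have h2' : |U r i₂ w| ≤ (M:ℝ) := by
      refine h2.trans ?_
      have : Set.indicator {w' | inτ i₂ w'} (fun _ => (1:ℝ)) w ≤ 1 := by
        rw [Set.indicator_apply]; split <;> norm_num
      calc (M:ℝ) * Set.indicator {w' | inτ i₂ w'} (fun _ => (1:ℝ)) w ≤ (M:ℝ) * 1 :=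
            mul_le_mul_of_nonneg_left this (Nat.cast_nonneg M)
        _ = (M:ℝ) := mul_one _
    calc |U r i₁ w| * |U r i₂ w|
        ≤ ((M:ℝ) * Set.indicator {w' | inτ i₁ w'} (fun _ => (1:ℝ)) w) * (M:ℝ) :=
          mul_le_mul h1 h2' (abs_nonneg _)
            (mul_nonneg (Nat.cast_nonneg M) (Set.indicator_nonneg (fun _ _ => zero_le_one) w))
      _ = (M:ℝ)^2 * Set.indicator {w' | inτ i₁ w'} (fun _ => (1:ℝ)) w := by ring
  calc ∫ w, U r i₁ w * U r i₂ w ∂μ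
      ≤ ∫ w, |U r i₁ w * U r i₂ w| ∂μ := by
        refine le_trans (le_abs_self _) ?_
        simpa only [Real.norm_eq_abs] using
          MeasureTheory.norm_integral_le_integral_norm (μ := μ)
            (fun w => U r i₁ w * U r i₂ w)
    _ ≤ ∫ w, (M:ℝ)^2 * Set.indicator {w' | inτ i₁ w'} (fun _ => (1:ℝ)) w ∂μ := by
        apply integral_mono_of_nonneg (Filter.Eventually.of_forall fun w => abs_nonneg _) hg
          (Filter.Eventually.of_forall hbound)
    _ = (M:ℝ)^2 * u i₁ := by
        rw [MeasureTheory.integral_const_mul]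
        congr 1
        rw [hu i₁]
        have : (fun w => Set.indicator {w' | inτ i₁ w'} (fun _ => (1:ℝ)) w)
            = Set.indicator {w' | inτ i₁ w'} (1 : Ω → ℝ) := rfl
        rw [this, MeasureTheory.integral_indicator_one hmeas₁, measureReal_def]

end RenewalAux6

namespace RenewalAux7

/-- single-step estimate `α i^(α-1) ≤ i^α - (i-1)^α` -/
lemma step_est (α : ℝ) (hα0 : 0 < α) (hα1 : α < 1) (i : ℕ) (hi : 1 ≤ i) :
    α * (i:ℝ)^(α-1) ≤ (i:ℝ)^α - ((i-1 : ℕ) : ℝ)^α := by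
  set x : ℝ := (i:ℝ) with hx
  have hx1 : 1 ≤ x := by rw [hx]; exact_mod_cast hi
  have hx0 : 0 < x := by linarith
  have hcast : ((i-1:ℕ):ℝ) = x - 1 := by
    rw [hx]; push_cast [Nat.cast_sub hi]; ring
  rw [hcast]
  have hfrac : -1 ≤ -1/x := by
    rw [neg_div, neg_le_neg_iff]
    exact div_le_one_of_le₀ hx1 hx0.le
  have hb := rpow_one_add_le_one_add_mul_self hfrac hα0.le hα1.le
  have h1x : (0:ℝ) ≤ 1 + -1/x := by
    have : 1/x ≤ 1 := div_le_one_of_le₀ hx1 hx0.le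
    rw [neg_div] at *; linarith
  have hsplit : (x - 1) = x * (1 + -1/x) := by field_simp; ring
  have hmul : (x-1)^α = x^α * (1 + -1/x)^α := by
    rw [hsplit, Real.mul_rpow hx0.le h1x]
  have hxα : (0:ℝ) ≤ x^α := Real.rpow_nonneg hx0.le α
  have h2 : (x-1)^α ≤ x^α * (1 + α * (-1/x)) := by
    rw [hmul]
    exact mul_le_mul_of_nonneg_left hb hxα
  have h3 : x^α * (1 + α * (-1/x)) = x^α - α * (x^α / x) := by ring
  have h4 : x^α / x = x^(α-1) := by
    rw [Real.rpow_sub_one hx0.ne']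
  rw [h3, h4] at h2
  linarith

lemma sum_rpow_le (α : ℝ) (hα0 : 0 < α) (hα1 : α < 1) (r : ℕ) :
    ∑ i ∈ Finset.Icc 1 r, (i:ℝ)^(α-1) ≤ (r:ℝ)^α / α := by
  rw [le_div_iff₀ hα0]
  have htel : ∑ i ∈ Finset.Icc 1 r, ((i:ℝ)^α - ((i-1:ℕ):ℝ)^α) = (r:ℝ)^α := by
    rw [← Finset.Ico_add_one_right_eq_Icc, Finset.sum_Ico_eq_sum_range]
    simp only [Nat.add_sub_cancel]
    have : ∀ m ∈ Finset.range r, ((1+m:ℕ):ℝ)^α - ((1+m-1:ℕ):ℝ)^α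
        = (fun k : ℕ => ((k:ℕ):ℝ)^α) (m+1) - (fun k : ℕ => ((k:ℕ):ℝ)^α) m := by
      intro m _
      have e1 : 1 + m = m + 1 := by omega
      rw [e1, Nat.add_sub_cancel]
    rw [Finset.sum_congr rfl this, Finset.sum_range_sub (fun k : ℕ => ((k:ℕ):ℝ)^α)]
    simp [Real.zero_rpow hα0.ne']
  calc (∑ i ∈ Finset.Icc 1 r, (i:ℝ)^(α-1)) * α = ∑ i ∈ Finset.Icc 1 r, α * (i:ℝ)^(α-1) := by
        rw [Finset.sum_mul]; exact Finset.sum_congr rfl fun i _ => by ring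
    _ ≤ ∑ i ∈ Finset.Icc 1 r, ((i:ℝ)^α - ((i-1:ℕ):ℝ)^α) :=
        Finset.sum_le_sum fun i hi => step_est α hα0 hα1 i (Finset.mem_Icc.mp hi).1
    _ = (r:ℝ)^α := htel

/-- counting near-diagonal pairs -/
lemma counting (r i₁ M : ℕ) (b : ℝ) (hb : 0 ≤ b) :
    ∑ i₂ ∈ Finset.Icc 1 r, (if (i₁ < i₂ + M ∧ i₂ < i₁ + M) then b else 0)
      ≤ (2 * M : ℕ) * b := by
  classical
  rw [← Finset.sum_filter]
  have hsub : (Finset.Icc 1 r).filter (fun i₂ => i₁ < i₂ + M ∧ i₂ < i₁ + M)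
      ⊆ Finset.Ico (i₁ + 1 - M) (i₁ + M) := by
    intro x hx
    obtain ⟨_, h1, h2⟩ := Finset.mem_filter.mp hx
    exact Finset.mem_Ico.mpr (by omega)
  have hcard : ((Finset.Icc 1 r).filter (fun i₂ => i₁ < i₂ + M ∧ i₂ < i₁ + M)).card
      ≤ 2 * M := by
    refine (Finset.card_le_card hsub).trans ?_
    rw [Nat.card_Ico]
    omega
  rw [Finset.sum_const, nsmul_eq_mul]
  exact mul_le_mul_of_nonneg_right (by exact_mod_cast hcard) hb

end RenewalAux7


open RenewalAux RenewalAux2 RenewalAux3 RenewalAux4 RenewalAux5 RenewalAux6 RenewalAux7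


/-- Full covariance sum bound for the renewal fluctuations
`U_i = 1_{i∈τ} Σ_{j=1}^{⌈r^{α/4}⌉} j^{-α}(1_{i+j∈τ} - u(j))`:
if `u(n) ≤ C n^{α-1}` then `Σ_{i₁,i₂=1}^r E[U_{i₁} U_{i₂}] ≤ C' r^{7α/4}`. -/
theorem renewal_fluctuation_covariance_sum
    {Ω : Type*} [MeasurableSpace Ω] (μ : Measure Ω) [IsProbabilityMeasure μ]
    (ξ : ℕ → Ω → ℕ) (hξmeas : ∀ n, Measurable (ξ n))
    (hξindep : iIndepFun ξ μ)
    (hξid : ∀ n, Measure.map (ξ n) μ = Measure.map (ξ 0) μ)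
    (hξpos : ∀ n w, 1 ≤ ξ n w)
    (inτ : ℕ → Ω → Prop)
    (hinτ : ∀ n w, inτ n w ↔ ∃ k : ℕ, (∑ m' ∈ Finset.range k, ξ m' w) = n)
    (u : ℕ → ℝ) (hu : ∀ n, u n = (μ {w | inτ n w}).toReal)
    (α : ℝ) (hα0 : 0 < α) (hα1 : α < 1) (C : ℝ) (hC : 0 < C)
    (hup : ∀ n : ℕ, 1 ≤ n → u n ≤ C * (n : ℝ) ^ (α - 1))
    (U : ℕ → ℕ → Ω → ℝ)
    (hU : ∀ r i w, U r i w =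
      Set.indicator {w' | inτ i w'} (fun _ => (1:ℝ)) w *
        ∑ j ∈ Finset.Icc 1 ⌈(r : ℝ) ^ (α / 4)⌉₊, (j : ℝ) ^ (-α) *
          (Set.indicator {w' | inτ (i + j) w'} (fun _ => (1:ℝ)) w - u j)) :
    ∃ C' > 0, ∀ r : ℕ, 2 ≤ r →
      ∑ i₁ ∈ Finset.Icc 1 r, ∑ i₂ ∈ Finset.Icc 1 r,
        ∫ w, U r i₁ w * U r i₂ w ∂μ
      ≤ C' * (r : ℝ) ^ (7 * α / 4) := by

  classical
  refine ⟨16 * C / α, by positivity, ?_⟩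
  intro r hr
  set M := ⌈(r : ℝ) ^ (α / 4)⌉₊ with hM
  have hr1 : (1:ℝ) ≤ (r:ℝ) := by exact_mod_cast le_trans (by norm_num) hr
  have hr0 : (0:ℝ) < (r:ℝ) := by linarith
  have hx1 : (1:ℝ) ≤ (r:ℝ)^(α/4) := Real.one_le_rpow hr1 (by positivity)
  have hMle : (M:ℝ) ≤ 2 * (r:ℝ)^(α/4) := by
    have h := Nat.ceil_lt_add_one (show (0:ℝ) ≤ (r:ℝ)^(α/4) by positivity)
    rw [hM]; linarith
  have step1 : ∀ i₁ ∈ Finset.Icc 1 r, ∀ i₂ ∈ Finset.Icc 1 r,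
      ∫ w, U r i₁ w * U r i₂ w ∂μ
        ≤ (if (i₁ < i₂ + M ∧ i₂ < i₁ + M) then ((M:ℝ))^2 * u i₁ else 0) := by
    intro i₁ _ i₂ _
    by_cases h : i₁ < i₂ + M ∧ i₂ < i₁ + M
    · rw [if_pos h]
      exact near_bound μ ξ hξmeas inτ hinτ u hu α hα0 U hU r i₁ i₂
    · rw [if_neg h]
      have h' : i₁ + M ≤ i₂ ∨ i₂ + M ≤ i₁ := by omega
      rcases h' with h' | h'
      · exact le_of_eq
          (far_zero μ ξ hξmeas hξindep hξid hξpos inτ hinτ u hu α hα0 U hU r i₁ i₂ h')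
      · have hz := far_zero μ ξ hξmeas hξindep hξid hξpos inτ hinτ u hu α hα0 U hU r i₂ i₁ h'
        have hcomm : ∫ w, U r i₁ w * U r i₂ w ∂μ = ∫ w, U r i₂ w * U r i₁ w ∂μ := by
          congr 1; funext w; ring
        rw [hcomm, hz]
  calc ∑ i₁ ∈ Finset.Icc 1 r, ∑ i₂ ∈ Finset.Icc 1 r, ∫ w, U r i₁ w * U r i₂ w ∂μ
      ≤ ∑ i₁ ∈ Finset.Icc 1 r, ∑ i₂ ∈ Finset.Icc 1 r,
          (if (i₁ < i₂ + M ∧ i₂ < i₁ + M) then ((M:ℝ))^2 * u i₁ else 0) :=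
        Finset.sum_le_sum fun i₁ h₁ => Finset.sum_le_sum fun i₂ h₂ => step1 i₁ h₁ i₂ h₂
    _ ≤ ∑ i₁ ∈ Finset.Icc 1 r, ((2 * M : ℕ) : ℝ) * (((M:ℝ))^2 * u i₁) :=
        Finset.sum_le_sum fun i₁ _ => counting r i₁ M _
          (mul_nonneg (by positivity) (u_nonneg μ inτ u hu i₁))
    _ = 2 * (M:ℝ)^3 * ∑ i₁ ∈ Finset.Icc 1 r, u i₁ := by
        rw [Finset.mul_sum]
        apply Finset.sum_congr rfl
        intro i _
        push_cast
        ring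
    _ ≤ 2 * (M:ℝ)^3 * (C * ((r:ℝ)^α / α)) := by
        apply mul_le_mul_of_nonneg_left _ (by positivity)
        calc ∑ i₁ ∈ Finset.Icc 1 r, u i₁
            ≤ ∑ i₁ ∈ Finset.Icc 1 r, C * (i₁:ℝ)^(α-1) :=
              Finset.sum_le_sum fun i hi => hup i (Finset.mem_Icc.mp hi).1
          _ = C * ∑ i₁ ∈ Finset.Icc 1 r, (i₁:ℝ)^(α-1) := by rw [Finset.mul_sum]
          _ ≤ C * ((r:ℝ)^α / α) :=
              mul_le_mul_of_nonneg_left (sum_rpow_le α hα0 hα1 r) hC.le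
    _ ≤ 2 * (2*(r:ℝ)^(α/4))^3 * (C * ((r:ℝ)^α / α)) := by
        apply mul_le_mul_of_nonneg_right _ (by positivity)
        have h3 : (M:ℝ)^3 ≤ (2*(r:ℝ)^(α/4))^3 :=
          pow_le_pow_left₀ (Nat.cast_nonneg M) hMle 3
        linarith
    _ = 16 * C / α * (((r:ℝ)^(α/4))^(3:ℕ) * (r:ℝ)^α) := by ring
    _ = 16 * C / α * (r : ℝ) ^ (7 * α / 4) := by
        congr 1
        rw [← Real.rpow_natCast ((r:ℝ)^(α/4)) 3, ← Real.rpow_mul hr0.le,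
          ← Real.rpow_add hr0]
        congr 1
        push_cast
        ring
end

section
/- Let τ be a renewal process with inter-arrival distribution K(n) ~ C_K n^{-(1+α)}, α ∈ (0,1), and renewal mass u(n) = P[n∈τ] satisfying u(n) ~ (α sin(πα))/(π C_K) · n^{α-1}. Then there exists a constant C such that for all N ≥ 2 and every bounded non-negative functional F measurable with respect to σ(τ ∩ [0, ⌊N/2⌋]), E[F(τ) | N ∈ τ] ≤ C E[F(τ)]. -/
open MeasureTheory ProbabilityTheory Finset Filter

set_option linter.unusedSectionVars false
namespace RenewalAux

lemma rpow_diff_ge (α : ℝ) (hα0 : 0 < α) (hα1 : α ≤ 1) (n : ℕ) :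
    α * ((n:ℝ)+1) ^ (α - 1) ≤ ((n:ℝ)+1) ^ α - (n:ℝ) ^ α := by
  have hn1 : (0:ℝ) < (n:ℝ) + 1 := by positivity
  set x : ℝ := (n:ℝ) / ((n:ℝ)+1) with hxdef
  have hx : (0:ℝ) ≤ x := by positivity
  have hamgm := Real.geom_mean_le_arith_mean2_weighted (le_of_lt hα0)
    (by linarith : (0:ℝ) ≤ 1 - α) hx zero_le_one (by ring)
  rw [Real.one_rpow, mul_one, mul_one] at hamgm
  -- hamgm : x ^ α ≤ α * x + (1 - α)
  have hmul : ((n:ℝ)+1) ^ α * x ^ α = (n:ℝ) ^ α := by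
    rw [← Real.mul_rpow (le_of_lt hn1) hx, hxdef, mul_div_cancel₀ _ (ne_of_gt hn1)]
  have hpow : ((n:ℝ)+1) ^ α * (1 / ((n:ℝ)+1)) = ((n:ℝ)+1) ^ (α - 1) := by
    rw [Real.rpow_sub hn1, Real.rpow_one]; ring
  have hnn : (0:ℝ) ≤ ((n:ℝ)+1) ^ α := Real.rpow_nonneg (le_of_lt hn1) _
  have h2 : ((n:ℝ)+1) ^ α * x ^ α ≤ ((n:ℝ)+1) ^ α * (α * x + (1 - α)) :=
    mul_le_mul_of_nonneg_left hamgm hnn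
  have hxval : α * x + (1 - α) = 1 - α * (1 / ((n:ℝ)+1)) := by
    rw [hxdef]; field_simp; ring
  rw [hmul, hxval] at h2
  nlinarith [h2, hpow]

lemma sum_rpow_le (α : ℝ) (hα0 : 0 < α) (hα1 : α ≤ 1) (n : ℕ) :
    ∑ j ∈ Finset.Icc 1 n, (j:ℝ) ^ (α - 1) ≤ (n:ℝ) ^ α / α := by
  induction n with
  | zero => simp [Real.zero_rpow (ne_of_gt hα0)]
  | succ n ih =>
    rw [Finset.sum_Icc_succ_top (by omega : 1 ≤ n + 1)]
    have h := rpow_diff_ge α hα0 hα1 n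
    have : ((n:ℕ)+1 : ℝ) = ((n+1 : ℕ) : ℝ) := by push_cast; ring
    rw [this] at h
    have hdiv : ((n+1:ℕ):ℝ) ^ (α-1) ≤ (((n+1:ℕ):ℝ) ^ α - (n:ℝ) ^ α) / α := by
      rw [le_div_iff₀ hα0]; linarith [h]
    calc ∑ j ∈ Finset.Icc 1 n, (j:ℝ) ^ (α - 1) + ((n+1:ℕ):ℝ) ^ (α-1)
        ≤ (n:ℝ) ^ α / α + (((n+1:ℕ):ℝ) ^ α - (n:ℝ) ^ α) / α := by
          exact add_le_add ih hdiv
      _ = ((n+1:ℕ):ℝ) ^ α / α := by ring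



section Cylinders
variable {Ω : Type*} [MeasurableSpace Ω] (ξ : ℕ → Ω → ℕ)

/-- cylinder set determined by a list of values of the first coordinates. -/
def Cyl (a : List ℕ) : Set Ω := {w | ∀ i, i < a.length → ξ i w = a.getD i 0}

/-- partial sum -/
def Sp (j : ℕ) (w : Ω) : ℕ := ∑ m ∈ Finset.range j, ξ m w

variable {ξ}

lemma cyl_eq (a : List ℕ) :
    Cyl ξ a = ⋂ i ∈ Finset.range a.length, ξ i ⁻¹' {a.getD i 0} := by
  ext w; simp [Cyl]

lemma measurableSet_cyl (hm : ∀ n, Measurable (ξ n)) (a : List ℕ) :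
    MeasurableSet (Cyl ξ a) := by
  rw [cyl_eq]
  exact MeasurableSet.biInter (Set.to_countable _)
    (fun i _ => (hm i) (measurableSet_singleton _))

lemma prefix_of_mem_cyl {w : Ω} {a b : List ℕ} (ha : w ∈ Cyl ξ a) (hb : w ∈ Cyl ξ b)
    (hl : a.length ≤ b.length) : a <+: b := by
  rw [List.prefix_iff_eq_take]
  apply List.ext_getElem (by simp [hl])
  intro i h1 h2
  have hia : i < a.length := h1
  have hib : i < b.length := lt_of_lt_of_le hia hl
  have e1 := ha i hia
  have e2 := hb i hib
  rw [List.getD_eq_getElem a 0 hia] at e1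
  rw [List.getD_eq_getElem b 0 hib] at e2
  simp only [List.getElem_take]
  omega

lemma eq_of_prefix_sum {a b : List ℕ} (hab : a <+: b) (hsum : a.sum = b.sum)
    (hpos : ∀ d ∈ b, 1 ≤ d) : a = b := by
  obtain ⟨s, rfl⟩ := hab
  cases s with
  | nil => simp
  | cons d t =>
    exfalso
    have hd : 1 ≤ d := hpos d (by simp)
    rw [List.sum_append, List.sum_cons] at hsum
    omega

lemma Sp_mono (hpos : ∀ n w, 1 ≤ ξ n w) {j j' : ℕ} (h : j ≤ j') (w : Ω) :
    Sp ξ j w ≤ Sp ξ j' w := by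
  unfold Sp
  exact Finset.sum_le_sum_of_subset (Finset.range_subset_range.2 h)

lemma Sp_succ (j : ℕ) (w : Ω) : Sp ξ (j+1) w = Sp ξ j w + ξ j w := by
  simp [Sp, Finset.sum_range_succ]

lemma Sp_strict (hpos : ∀ n w, 1 ≤ ξ n w) {j j' : ℕ} (h : j < j') (w : Ω) :
    Sp ξ j w < Sp ξ j' w := by
  have h1 : Sp ξ (j+1) w ≤ Sp ξ j' w := Sp_mono hpos h w
  have := Sp_succ (ξ := ξ) j w
  have := hpos j w
  omega

lemma le_Sp (hpos : ∀ n w, 1 ≤ ξ n w) (j : ℕ) (w : Ω) : j ≤ Sp ξ j w := by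
  induction j with
  | zero => simp [Sp]
  | succ n ih => have := Sp_succ (ξ := ξ) n w; have := hpos n w; omega

lemma sum_take_of_mem_cyl {w : Ω} {a : List ℕ} (ha : w ∈ Cyl ξ a) :
    ∀ j, j ≤ a.length → Sp ξ j w = (a.take j).sum := by
  intro j
  induction j with
  | zero => intro _; simp [Sp]
  | succ n ih =>
    intro hj
    have hn : n < a.length := by omega
    rw [Sp_succ, ih (by omega), List.sum_take_succ a n hn]
    have := ha n hn
    rw [List.getD_eq_getElem a 0 hn] at this
    omega

lemma sum_of_mem_cyl {w : Ω} {a : List ℕ} (ha : w ∈ Cyl ξ a) :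
    Sp ξ a.length w = a.sum := by
  simpa using sum_take_of_mem_cyl ha a.length le_rfl

/-- the canonical list of the first `j` jumps -/
lemma mem_cyl_ofFn (w : Ω) (j : ℕ) :
    w ∈ Cyl ξ ((List.range j).map (fun i => ξ i w)) := by
  intro i hi
  simp only [List.length_map, List.length_range] at hi
  rw [List.getD_eq_getElem _ 0 (by simpa using hi)]
  simp

lemma length_ofFn (w : Ω) (j : ℕ) :
    ((List.range j).map (fun i => ξ i w)).length = j := by simp

lemma pos_ofFn (hpos : ∀ n w, 1 ≤ ξ n w) (w : Ω) (j : ℕ) :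
    ∀ d ∈ (List.range j).map (fun i => ξ i w), 1 ≤ d := by
  intro d hd
  simp only [List.mem_map] at hd
  obtain ⟨i, _, rfl⟩ := hd
  exact hpos i w

lemma sum_ofFn (w : Ω) (j : ℕ) :
    ((List.range j).map (fun i => ξ i w)).sum = Sp ξ j w := by
  have h := sum_of_mem_cyl (mem_cyl_ofFn (ξ := ξ) w j)
  rw [length_ofFn] at h
  omega

lemma mem_cyl_prefix {w : Ω} {a b : List ℕ} (hab : a <+: b) (hb : w ∈ Cyl ξ b) :
    w ∈ Cyl ξ a := by
  intro i hi
  obtain ⟨s, rfl⟩ := hab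
  have hib : i < (a ++ s).length := by simp; omega
  have := hb i hib
  rw [List.getD_eq_getElem _ 0 hib] at this
  rw [List.getD_eq_getElem _ 0 hi, this, List.getElem_append_left hi]

end Cylinders

lemma list_prod_map_eq {M : Type*} [CommMonoid M] (f : ℕ → M) (a : List ℕ) :
    (a.map f).prod = ∏ i ∈ Finset.range a.length, f (a.getD i 0) := by
  induction a using List.reverseRecOn with
  | nil => simp
  | append_singleton a x ih =>
    rw [List.map_append, List.prod_append, ih]
    simp only [List.length_append, List.length_cons, List.length_nil]
    rw [Finset.prod_range_succ]
    congr 1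
    · apply Finset.prod_congr rfl
      intro i hi
      rw [Finset.mem_range] at hi
      congr 1
      rw [List.getD_append _ _ _ _ hi]
    · congr 1
      rw [List.getD_append_right]
      · simp
      · exact le_rfl

section MeasureLemmas
variable {Ω : Type*} [MeasurableSpace Ω] {μ : Measure Ω} {ξ : ℕ → Ω → ℕ}

/-- single-site marginal -/
noncomputable def Kf (μ : Measure Ω) (ξ : ℕ → Ω → ℕ) (m : ℕ) : ENNReal := μ (ξ 0 ⁻¹' {m})

lemma meas_iInter_range (hind : iIndepFun ξ μ)
    (n : ℕ) (B : ℕ → Set ℕ) :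
    μ (⋂ i ∈ Finset.range n, ξ i ⁻¹' B i) = ∏ i ∈ Finset.range n, μ (ξ i ⁻¹' B i) :=
  (iIndepFun_iff_measure_inter_preimage_eq_mul.mp hind) (Finset.range n)
    (fun _ _ => MeasurableSpace.measurableSet_top)

lemma meas_single (hm : ∀ n, Measurable (ξ n)) (hξid : ∀ n, Measure.map (ξ n) μ = Measure.map (ξ 0) μ)
    (i : ℕ) (B : Set ℕ) : μ (ξ i ⁻¹' B) = μ (ξ 0 ⁻¹' B) := by
  rw [← Measure.map_apply (hm i) MeasurableSpace.measurableSet_top,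
    hξid i, Measure.map_apply (hm 0) MeasurableSpace.measurableSet_top]

lemma meas_cyl (hind : iIndepFun ξ μ)
    (hm : ∀ n, Measurable (ξ n)) (hξid : ∀ n, Measure.map (ξ n) μ = Measure.map (ξ 0) μ)
    (a : List ℕ) : μ (Cyl ξ a) = (a.map (Kf μ ξ)).prod := by
  rw [cyl_eq, meas_iInter_range hind a.length (fun i => {a.getD i 0}),
    list_prod_map_eq (Kf μ ξ) a]
  exact Finset.prod_congr rfl fun i _ => meas_single hm hξid i _

lemma meas_cyl_tail (hind : iIndepFun ξ μ)
    (hm : ∀ n, Measurable (ξ n)) (hξid : ∀ n, Measure.map (ξ n) μ = Measure.map (ξ 0) μ)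
    (a : List ℕ) (t : ℕ) :
    μ (Cyl ξ a ∩ ξ a.length ⁻¹' Set.Ioi t)
      = (a.map (Kf μ ξ)).prod * μ (ξ 0 ⁻¹' Set.Ioi t) := by
  have hset : Cyl ξ a ∩ ξ a.length ⁻¹' Set.Ioi t
      = ⋂ i ∈ Finset.range (a.length + 1),
          ξ i ⁻¹' (if i < a.length then {a.getD i 0} else Set.Ioi t) := by
    ext w
    simp only [Set.mem_inter_iff, Set.mem_iInter, Finset.mem_range, Cyl, Set.mem_setOf_eq,
      Set.mem_preimage]
    constructor
    · rintro ⟨h1, h2⟩ i hi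
      by_cases hia : i < a.length
      · simp [hia, h1 i hia]
      · have : i = a.length := by omega
        simp [hia, this, h2]
    · intro h
      constructor
      · intro i hi
        have := h i (by omega)
        simpa [hi] using this
      · have := h a.length (by omega)
        simpa using this
  rw [hset, meas_iInter_range hind, Finset.prod_range_succ]
  simp only [lt_irrefl, if_neg, if_false]
  rw [meas_single hm hξid a.length, list_prod_map_eq (Kf μ ξ) a]
  congr 1
  apply Finset.prod_congr rfl
  intro i hi
  rw [Finset.mem_range] at hi
  rw [if_pos hi, meas_single hm hξid i]
  rfl

/-- compositions of `r` -/
def CompT (r : ℕ) : Type := {a : List ℕ // (∀ d ∈ a, 1 ≤ d) ∧ a.sum = r}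

instance (r : ℕ) : Countable (CompT r) := by unfold CompT; infer_instance

lemma cyl_disj {a b : List ℕ} (ha : ∀ d ∈ a, 1 ≤ d) (hb : ∀ d ∈ b, 1 ≤ d)
    (hs : a.sum = b.sum) (hne : a ≠ b) : Disjoint (Cyl ξ a) (Cyl ξ b) := by
  rw [Set.disjoint_left]
  intro w hwa hwb
  apply hne
  rcases le_total a.length b.length with h | h
  · exact eq_of_prefix_sum (prefix_of_mem_cyl hwa hwb h) hs hb
  · exact (eq_of_prefix_sum (prefix_of_mem_cyl hwb hwa h) hs.symm ha).symm


section Decomp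
variable {P : ℕ → Ω → Prop}

lemma measurable_Sp (hm : ∀ n, Measurable (ξ n)) (j : ℕ) : Measurable (Sp ξ j) := by
  unfold Sp
  exact Finset.measurable_sum _ (fun i _ => hm i)

lemma measurableSet_inτ (hm : ∀ n, Measurable (ξ n))
    (hP : ∀ n w, P n w ↔ ∃ k, Sp ξ k w = n) (r : ℕ) :
    MeasurableSet {w | P r w} := by
  have : {w | P r w} = ⋃ k : ℕ, (Sp ξ k) ⁻¹' {r} := by
    ext w; simp [hP r w]
  rw [this]
  exact MeasurableSet.iUnion fun k => measurable_Sp hm k (measurableSet_singleton r)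

lemma inτ_set_eq (hP : ∀ n w, P n w ↔ ∃ k, Sp ξ k w = n) (hpos : ∀ n w, 1 ≤ ξ n w) (r : ℕ) :
    {w | P r w} = ⋃ c : CompT r, Cyl ξ c.1 := by
  ext w
  simp only [Set.mem_setOf_eq, Set.mem_iUnion, hP r w]
  constructor
  · rintro ⟨k, hk⟩
    exact ⟨⟨(List.range k).map (fun i => ξ i w),
      pos_ofFn hpos w k, by rw [sum_ofFn]; exact hk⟩, mem_cyl_ofFn w k⟩
  · rintro ⟨c, hw⟩
    exact ⟨c.1.length, by rw [sum_of_mem_cyl hw]; exact c.2.2⟩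

lemma comp_disj (r : ℕ) : Pairwise (Function.onFun Disjoint fun c : CompT r => Cyl ξ c.1) := by
  intro c c' hne
  exact cyl_disj c.2.1 c'.2.1 (c.2.2.trans c'.2.2.symm)
    (fun h => hne (Subtype.ext h))

lemma u_tsum (hind : iIndepFun ξ μ)
    (hm : ∀ n, Measurable (ξ n)) (hξid : ∀ n, Measure.map (ξ n) μ = Measure.map (ξ 0) μ)
    (hP : ∀ n w, P n w ↔ ∃ k, Sp ξ k w = n) (hpos : ∀ n w, 1 ≤ ξ n w) (r : ℕ) :
    μ {w | P r w} = ∑' c : CompT r, (c.1.map (Kf μ ξ)).prod := by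
  rw [inτ_set_eq hP hpos r, measure_iUnion (comp_disj r) (fun c => measurableSet_cyl hm c.1)]
  exact tsum_congr fun c => meas_cyl hind hm hξid c.1

/-- index type of the partition: lists with positive entries and sum at most M -/
def PartL (M : ℕ) : Type := {a : List ℕ // (∀ d ∈ a, 1 ≤ d) ∧ a.sum ≤ M}

instance (M : ℕ) : Countable (PartL M) := by unfold PartL; infer_instance

/-- partition event: the first jumps are given by `l` and the next jump escapes `[0,M]`. -/
def Epart (ξ : ℕ → Ω → ℕ) (M : ℕ) (l : PartL M) : Set Ω :=
  Cyl ξ l.1 ∩ ξ l.1.length ⁻¹' Set.Ioi (M - l.1.sum)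

lemma measurableSet_Epart (hm : ∀ n, Measurable (ξ n)) (M : ℕ) (l : PartL M) :
    MeasurableSet (Epart ξ M l) :=
  (measurableSet_cyl hm l.1).inter ((hm _) MeasurableSpace.measurableSet_top)

lemma meas_Epart (hind : iIndepFun ξ μ)
    (hm : ∀ n, Measurable (ξ n)) (hξid : ∀ n, Measure.map (ξ n) μ = Measure.map (ξ 0) μ)
    (M : ℕ) (l : PartL M) :
    μ (Epart ξ M l) = (l.1.map (Kf μ ξ)).prod * μ (ξ 0 ⁻¹' Set.Ioi (M - l.1.sum)) :=
  meas_cyl_tail hind hm hξid l.1 _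

lemma iUnion_Epart (hpos : ∀ n w, 1 ≤ ξ n w) (M : ℕ) :
    ⋃ l : PartL M, Epart ξ M l = Set.univ := by
  rw [Set.eq_univ_iff_forall]
  intro w
  set Q : ℕ → Prop := fun j => Sp ξ j w ≤ M with hQ
  have hQ0 : Q 0 := by simp [hQ, Sp]
  set k := Nat.findGreatest Q (M+1) with hk
  have hQk : Q k := Nat.findGreatest_spec (Nat.zero_le _) hQ0
  have hQk1 : ¬ Q (k+1) := by
    by_cases hle : k + 1 ≤ M + 1
    · exact Nat.findGreatest_is_greatest (Nat.lt_succ_self k) hle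
    · have hk' : M + 1 ≤ k := by omega
      have := le_Sp hpos (k+1) w
      simp only [hQ]
      omega
  refine Set.mem_iUnion.2 ⟨⟨(List.range k).map (fun i => ξ i w),
    pos_ofFn hpos w k, by rw [sum_ofFn]; exact hQk⟩, mem_cyl_ofFn w k, ?_⟩
  simp only [Set.mem_preimage, Set.mem_Ioi, List.length_map, List.length_range, sum_ofFn]
  have h1 := Sp_succ (ξ := ξ) k w
  simp only [hQ] at hQk hQk1
  omega

lemma Epart_disj (hpos : ∀ n w, 1 ≤ ξ n w) (M : ℕ) :
    Pairwise (Function.onFun Disjoint fun l : PartL M => Epart ξ M l) := by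
  have aux : ∀ l l' : PartL M, l.1.length ≤ l'.1.length → ∀ w,
      w ∈ Epart ξ M l → w ∈ Epart ξ M l' → l.1 = l'.1 := by
    intro l l' hlen w hw hw'
    have hpre : l.1 <+: l'.1 := prefix_of_mem_cyl hw.1 hw'.1 hlen
    obtain ⟨s, hs⟩ := hpre
    cases s with
    | nil => rw [← hs]; simp
    | cons d t =>
      exfalso
      have hd : ξ l.1.length w = d := by
        have hlt : l.1.length < l'.1.length := by rw [← hs]; simp
        have e := hw'.1 l.1.length hlt
        rw [← hs, List.getD_append_right _ _ _ _ le_rfl] at e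
        simpa using e
      have hgt : M - l.1.sum < ξ l.1.length w := hw.2
      have hsum : l.1.sum + d + t.sum = l'.1.sum := by
        rw [← hs]; simp [List.sum_append]; ring
      have := l'.2.2
      have := l.2.2
      omega
  intro l l' hne
  rw [Function.onFun, Set.disjoint_left]
  intro w hw hw'
  apply hne
  apply Subtype.ext
  rcases le_total l.1.length l'.1.length with h | h
  · exact aux l l' h w hw hw'
  · exact (aux l' l h w hw' hw).symm

lemma mem_cyl_append_single {w : Ω} {a : List ℕ} (ha : w ∈ Cyl ξ a) :
    w ∈ Cyl ξ (a ++ [ξ a.length w]) := by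
  intro i hi
  simp only [List.length_append, List.length_cons, List.length_nil] at hi
  by_cases hia : i < a.length
  · rw [List.getD_append _ _ _ _ hia]; exact ha i hia
  · have : i = a.length := by omega
    subst this
    rw [List.getD_append_right _ _ _ _ le_rfl]
    simp

lemma cyl_inter_inτ (hP : ∀ n w, P n w ↔ ∃ k, Sp ξ k w = n) (hpos : ∀ n w, 1 ≤ ξ n w)
    {N : ℕ} (b : List ℕ) (hbs : b.sum ≤ N) :
    Cyl ξ b ∩ {w | P N w} = ⋃ c : CompT (N - b.sum), Cyl ξ (b ++ c.1) := by
  ext w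
  simp only [Set.mem_inter_iff, Set.mem_setOf_eq, Set.mem_iUnion, hP N w]
  constructor
  · rintro ⟨hwb, j, hj⟩
    have hsb := sum_of_mem_cyl hwb
    have hjlen : b.length ≤ j := by
      by_contra hcon
      have := Sp_strict hpos (by omega : j < b.length) w
      omega
    set c : List ℕ := (List.range (j - b.length)).map (fun i => ξ (b.length + i) w) with hc
    have hwc : w ∈ Cyl ξ (b ++ c) := by
      intro i hi
      by_cases hia : i < b.length
      · rw [List.getD_append _ _ _ _ hia]; exact hwb i hia
      · have hib : b.length ≤ i := by omega
        rw [List.getD_append_right _ _ _ _ hib]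
        have hlen : i - b.length < c.length := by
          simp only [hc, List.length_map, List.length_range]
          simp only [List.length_append, hc, List.length_map, List.length_range] at hi
          omega
        rw [List.getD_eq_getElem _ 0 hlen]
        simp only [hc, List.getElem_map, List.getElem_range]
        congr 1
        omega
    have hclen : (b ++ c).length = j := by
      simp only [List.length_append, hc, List.length_map, List.length_range]
      omega
    have hsum : (b ++ c).sum = N := by
      have := sum_of_mem_cyl hwc
      rw [hclen] at this
      omega
    have hcpos : ∀ d ∈ c, 1 ≤ d := by
      intro d hd
      simp only [hc, List.mem_map] at hd
      obtain ⟨i, _, rfl⟩ := hd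
      exact hpos _ w
    refine ⟨⟨c, hcpos, ?_⟩, hwc⟩
    rw [List.sum_append] at hsum
    omega
  · rintro ⟨c, hw⟩
    refine ⟨mem_cyl_prefix ⟨c.1, rfl⟩ hw, (b ++ c.1).length, ?_⟩
    rw [sum_of_mem_cyl hw, List.sum_append, c.2.2]
    omega

lemma meas_cyl_inter_inτ (hind : iIndepFun ξ μ)
    (hm : ∀ n, Measurable (ξ n)) (hξid : ∀ n, Measure.map (ξ n) μ = Measure.map (ξ 0) μ)
    (hP : ∀ n w, P n w ↔ ∃ k, Sp ξ k w = n) (hpos : ∀ n w, 1 ≤ ξ n w)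
    {N : ℕ} (b : List ℕ) (hbpos : ∀ d ∈ b, 1 ≤ d) (hbs : b.sum ≤ N) :
    μ (Cyl ξ b ∩ {w | P N w})
      = (b.map (Kf μ ξ)).prod * μ {w | P (N - b.sum) w} := by
  rw [cyl_inter_inτ hP hpos b hbs]
  have hdisj : Pairwise (Function.onFun Disjoint fun c : CompT (N - b.sum) => Cyl ξ (b ++ c.1)) := by
    intro c c' hne
    apply cyl_disj
    · intro d hd
      rcases List.mem_append.1 hd with h | h
      exacts [hbpos d h, c.2.1 d h]
    · intro d hd
      rcases List.mem_append.1 hd with h | h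
      exacts [hbpos d h, c'.2.1 d h]
    · simp [List.sum_append, c.2.2, c'.2.2]
    · intro h
      exact hne (Subtype.ext (List.append_cancel_left h))
  rw [measure_iUnion hdisj (fun c => measurableSet_cyl hm _)]
  rw [u_tsum hind hm hξid hP hpos, ← ENNReal.tsum_mul_left]
  exact tsum_congr fun c => by
    rw [meas_cyl hind hm hξid, List.map_append, List.prod_append]

lemma Epart_inter_inτ (hP : ∀ n w, P n w ↔ ∃ k, Sp ξ k w = n) (hpos : ∀ n w, 1 ≤ ξ n w)
    {M N : ℕ} (hMN : M < N) (l : PartL M) :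
    Epart ξ M l ∩ {w | P N w}
      = ⋃ m ∈ Finset.Icc (M - l.1.sum + 1) (N - l.1.sum),
          (Cyl ξ (l.1 ++ [m]) ∩ {w | P N w}) := by
  ext w
  simp only [Set.mem_inter_iff, Set.mem_iUnion, Finset.mem_Icc, Set.mem_setOf_eq]
  constructor
  · rintro ⟨⟨hcyl, hioi⟩, hN⟩
    refine ⟨ξ l.1.length w, ⟨?_, ?_⟩, ?_, hN⟩
    · simp only [Set.mem_preimage, Set.mem_Ioi] at hioi; omega
    · -- m ≤ N - sum
      obtain ⟨j, hj⟩ := (hP N w).1 hN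
      have hlen : l.1.length + 1 ≤ j := by
        by_contra hcon
        have hmono := Sp_mono hpos (by omega : j ≤ l.1.length) w
        rw [sum_of_mem_cyl hcyl] at hmono
        have := l.2.2
        omega
      have h1 := Sp_mono hpos hlen w
      rw [Sp_succ, sum_of_mem_cyl hcyl] at h1
      omega
    · exact mem_cyl_append_single hcyl
  · rintro ⟨m, ⟨hm1, hm2⟩, hcyl, hN⟩
    have hval : ξ l.1.length w = m := by
      have hlt : l.1.length < (l.1 ++ [m]).length := by simp
      have := hcyl l.1.length hlt
      rw [List.getD_eq_getElem _ 0 hlt] at this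
      rw [this]
      simp [List.getElem_append_right]
    exact ⟨⟨mem_cyl_prefix ⟨[m], rfl⟩ hcyl, by
      simp only [Set.mem_preimage, Set.mem_Ioi, hval]; omega⟩, hN⟩

lemma meas_Epart_inter_inτ (hind : iIndepFun ξ μ)
    (hm : ∀ n, Measurable (ξ n)) (hξid : ∀ n, Measure.map (ξ n) μ = Measure.map (ξ 0) μ)
    (hP : ∀ n w, P n w ↔ ∃ k, Sp ξ k w = n) (hpos : ∀ n w, 1 ≤ ξ n w)
    {M N : ℕ} (hMN : M < N) (l : PartL M) :
    μ (Epart ξ M l ∩ {w | P N w})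
      = (l.1.map (Kf μ ξ)).prod *
        ∑ m ∈ Finset.Icc (M - l.1.sum + 1) (N - l.1.sum),
          Kf μ ξ m * μ {w | P (N - l.1.sum - m) w} := by
  rw [Epart_inter_inτ hP hpos hMN l]
  rw [measure_biUnion_finset ?disj (fun m _ =>
    ((measurableSet_cyl hm _).inter (measurableSet_inτ hm hP N)))]
  case disj =>
    intro m hm1 m' hm2 hne
    simp only [Function.onFun]
    apply Set.disjoint_left.2
    rintro w ⟨hw1, -⟩ ⟨hw2, -⟩
    apply hne
    have hl1 : l.1.length < (l.1 ++ [m]).length := by simp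
    have hl2 : l.1.length < (l.1 ++ [m']).length := by simp
    have e1 := hw1 l.1.length hl1
    have e2 := hw2 l.1.length hl2
    rw [List.getD_eq_getElem _ 0 hl1] at e1
    rw [List.getD_eq_getElem _ 0 hl2] at e2
    simp only [List.getElem_append_right, le_refl, Nat.sub_self,
      List.getElem_cons_zero] at e1 e2
    omega
  rw [Finset.mul_sum]
  apply Finset.sum_congr rfl
  intro m hmIcc
  simp only [Finset.mem_Icc] at hmIcc
  have hbs : (l.1 ++ [m]).sum ≤ N := by
    simp only [List.sum_append, List.sum_cons, List.sum_nil]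
    omega
  rw [meas_cyl_inter_inτ hind hm hξid hP hpos (l.1 ++ [m]) ?pos hbs]
  case pos =>
    intro d hd
    rcases List.mem_append.1 hd with h | h
    · exact l.2.1 d h
    · simp only [List.mem_singleton] at h
      omega
  rw [List.map_append, List.prod_append]
  simp only [List.map_cons, List.map_nil, List.prod_cons, List.prod_nil, mul_one,
    List.sum_append, List.sum_cons, List.sum_nil, add_zero]
  rw [Nat.sub_sub, mul_assoc]


lemma set_eq_on_Epart (hP : ∀ n w, P n w ↔ ∃ k, Sp ξ k w = n) (hpos : ∀ n w, 1 ≤ ξ n w)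
    (M : ℕ) (l : PartL M) (w : Ω) (hw : w ∈ Epart ξ M l) :
    {i | i ≤ M ∧ P i w} = {i | i ≤ M ∧ ∃ j ≤ l.1.length, (l.1.take j).sum = i} := by
  obtain ⟨hcyl, hioi⟩ := hw
  simp only [Set.mem_preimage, Set.mem_Ioi] at hioi
  have hsl := sum_of_mem_cyl hcyl
  have hsM := l.2.2
  ext i
  simp only [Set.mem_setOf_eq]
  constructor
  · rintro ⟨hi, hPi⟩
    obtain ⟨k, hk⟩ := (hP i w).1 hPi
    have hkl : k ≤ l.1.length := by
      by_contra hcon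
      have h1 : Sp ξ (l.1.length + 1) w ≤ Sp ξ k w := Sp_mono hpos (by omega) w
      have h2 := Sp_succ (ξ := ξ) l.1.length w
      omega
    exact ⟨hi, k, hkl, by rw [← sum_take_of_mem_cyl hcyl k hkl]; exact hk⟩
  · rintro ⟨hi, j, hj, hsum⟩
    refine ⟨hi, (hP i w).2 ⟨j, ?_⟩⟩
    rw [sum_take_of_mem_cyl hcyl j hj]
    exact hsum

lemma per_l_bound (hind : iIndepFun ξ μ)
    (hm : ∀ n, Measurable (ξ n)) (hξid : ∀ n, Measure.map (ξ n) μ = Measure.map (ξ 0) μ)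
    (hP : ∀ n w, P n w ↔ ∃ k, Sp ξ k w = n) (hpos : ∀ n w, 1 ≤ ξ n w)
    [IsProbabilityMeasure μ]
    {M N : ℕ} (hMN : M < N) (l : PartL M) {c : ℝ} (hc : 0 ≤ c)
    (hcore : ∑ m ∈ Finset.Icc (M - l.1.sum + 1) (N - l.1.sum),
        (μ (ξ 0 ⁻¹' {m})).toReal * (μ {w | P (N - l.1.sum - m) w}).toReal
      ≤ c * (μ (ξ 0 ⁻¹' Set.Ioi (M - l.1.sum))).toReal) :
    μ (Epart ξ M l ∩ {w | P N w}) ≤ ENNReal.ofReal c * μ (Epart ξ M l) := by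
  rw [meas_Epart_inter_inτ hind hm hξid hP hpos hMN l, meas_Epart hind hm hξid M l]
  rw [mul_comm (ENNReal.ofReal c), mul_assoc]
  apply mul_le_mul_right
  have htne : μ (ξ 0 ⁻¹' Set.Ioi (M - l.1.sum)) ≠ ⊤ := measure_ne_top μ _
  have hsum_eq : ∑ m ∈ Finset.Icc (M - l.1.sum + 1) (N - l.1.sum),
      Kf μ ξ m * μ {w | P (N - l.1.sum - m) w}
      = ENNReal.ofReal (∑ m ∈ Finset.Icc (M - l.1.sum + 1) (N - l.1.sum),
        (μ (ξ 0 ⁻¹' {m})).toReal * (μ {w | P (N - l.1.sum - m) w}).toReal) := by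
    rw [ENNReal.ofReal_sum_of_nonneg (fun m _ => by positivity)]
    apply Finset.sum_congr rfl
    intro m _
    rw [ENNReal.ofReal_mul ENNReal.toReal_nonneg, ENNReal.ofReal_toReal (measure_ne_top μ _),
      ENNReal.ofReal_toReal (measure_ne_top μ _)]
    rfl
  rw [hsum_eq]
  calc ENNReal.ofReal (∑ m ∈ Finset.Icc (M - l.1.sum + 1) (N - l.1.sum),
        (μ (ξ 0 ⁻¹' {m})).toReal * (μ {w | P (N - l.1.sum - m) w}).toReal)
      ≤ ENNReal.ofReal (c * (μ (ξ 0 ⁻¹' Set.Ioi (M - l.1.sum))).toReal) :=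
        ENNReal.ofReal_le_ofReal hcore
    _ = ENNReal.ofReal c * μ (ξ 0 ⁻¹' Set.Ioi (M - l.1.sum)) := by
        rw [ENNReal.ofReal_mul hc, ENNReal.ofReal_toReal htne]
    _ = μ (ξ 0 ⁻¹' Set.Ioi (M - l.1.sum)) * ENNReal.ofReal c := mul_comm _ _

lemma assemble (hind : iIndepFun ξ μ)
    (hm : ∀ n, Measurable (ξ n)) (hξid : ∀ n, Measure.map (ξ n) μ = Measure.map (ξ 0) μ)
    (hP : ∀ n w, P n w ↔ ∃ k, Sp ξ k w = n) (hpos : ∀ n w, 1 ≤ ξ n w)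
    (M N : ℕ) (C' : ENNReal)
    (hCl : ∀ l : PartL M, μ (Epart ξ M l ∩ {w | P N w}) ≤ C' * μ (Epart ξ M l))
    (f : Ω → ENNReal) (cl : PartL M → ENNReal)
    (hf : ∀ l : PartL M, ∀ w ∈ Epart ξ M l, f w = cl l) :
    ∫⁻ w in {w | P N w}, f w ∂μ ≤ C' * ∫⁻ w, f w ∂μ := by
  have hmeasE : ∀ l : PartL M, MeasurableSet (Epart ξ M l) := measurableSet_Epart hm M
  have hdisjE := Epart_disj (ξ := ξ) hpos M
  have hmeasτ : MeasurableSet {w | P N w} := measurableSet_inτ hm hP N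
  have hsetτ : {w | P N w} = ⋃ l : PartL M, (Epart ξ M l ∩ {w | P N w}) := by
    rw [← Set.iUnion_inter, iUnion_Epart hpos M, Set.univ_inter]
  have hdisj2 : Pairwise (Function.onFun Disjoint fun l : PartL M => Epart ξ M l ∩ {w | P N w}) := by
    intro l l' hne
    exact Set.disjoint_of_subset Set.inter_subset_left Set.inter_subset_left (hdisjE hne)
  have step1 : ∫⁻ w in {w | P N w}, f w ∂μ
      = ∑' l : PartL M, ∫⁻ w in Epart ξ M l ∩ {w | P N w}, f w ∂μ := by
    conv_lhs => rw [hsetτ]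
    exact lintegral_iUnion (fun l => (hmeasE l).inter hmeasτ) hdisj2 f
  have step2 : ∀ l : PartL M, ∫⁻ w in Epart ξ M l ∩ {w | P N w}, f w ∂μ
      = cl l * μ (Epart ξ M l ∩ {w | P N w}) := by
    intro l
    rw [setLIntegral_congr_fun ((hmeasE l).inter hmeasτ)
      (fun w hw => hf l w hw.1)]
    simp [lintegral_const, Measure.restrict_apply MeasurableSet.univ]
  have step3 : ∀ l : PartL M, ∫⁻ w in Epart ξ M l, f w ∂μ
      = cl l * μ (Epart ξ M l) := by
    intro l
    rw [setLIntegral_congr_fun (hmeasE l)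
      (fun w hw => hf l w hw)]
    simp [lintegral_const, Measure.restrict_apply MeasurableSet.univ]
  have step4 : ∫⁻ w, f w ∂μ = ∑' l : PartL M, cl l * μ (Epart ξ M l) := by
    have : ∫⁻ w, f w ∂μ = ∫⁻ w in ⋃ l : PartL M, Epart ξ M l, f w ∂μ := by
      rw [iUnion_Epart hpos M, Measure.restrict_univ]
    rw [this, lintegral_iUnion hmeasE hdisjE f]
    exact tsum_congr step3
  rw [step1, step4, ← ENNReal.tsum_mul_left]
  apply ENNReal.tsum_le_tsum
  intro l
  rw [step2 l]
  calc cl l * μ (Epart ξ M l ∩ {w | P N w})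
      ≤ cl l * (C' * μ (Epart ξ M l)) := mul_le_mul_right (hCl l) _
    _ = C' * (cl l * μ (Epart ξ M l)) := by ring

end Decomp
end MeasureLemmas

lemma sum_rpow_le' (α : ℝ) (hα0 : 0 < α) (hα1 : α ≤ 1) (n : ℕ) :
    ∑ i ∈ Finset.range n, ((i:ℝ)+1) ^ (α - 1) ≤ (n:ℝ) ^ α / α := by
  induction n with
  | zero => simp [Real.zero_rpow (ne_of_gt hα0)]
  | succ n ih =>
    rw [Finset.sum_range_succ]
    have h := rpow_diff_ge α hα0 hα1 n
    have hdiv : ((n:ℝ)+1) ^ (α-1) ≤ (((n:ℝ)+1) ^ α - (n:ℝ) ^ α) / α := by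
      rw [le_div_iff₀ hα0]; linarith [h]
    have hcast : ((n+1:ℕ):ℝ) = (n:ℝ)+1 := by push_cast; ring
    rw [hcast]
    calc ∑ i ∈ Finset.range n, ((i:ℝ)+1) ^ (α - 1) + ((n:ℝ)+1) ^ (α-1)
        ≤ (n:ℝ) ^ α / α + (((n:ℝ)+1) ^ α - (n:ℝ) ^ α) / α := add_le_add ih hdiv
      _ = ((n:ℝ)+1) ^ α / α := by ring

lemma analytic_core (α cK cu cu2 cT : ℝ) (hα0 : 0 < α) (hα1 : α < 1)
    (hcK : 0 < cK) (hcu : 0 < cu) (hcu2 : 0 < cu2) (hcT : 0 < cT)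
    (K u tail : ℕ → ℝ)
    (hKnn : ∀ m, 0 ≤ K m) (hunn : ∀ r, 0 ≤ u r) (htnn : ∀ t, 0 ≤ tail t)
    (hKup : ∀ m : ℕ, 1 ≤ m → K m ≤ cK * ((m:ℝ) ^ (-(1+α))))
    (huup : ∀ r : ℕ, 1 ≤ r → u r ≤ cu * ((r:ℝ) ^ (α-1)))
    (hu1 : ∀ r, u r ≤ 1)
    (hsumtail : ∀ t n : ℕ, ∑ m ∈ Finset.Ioc t n, K m ≤ tail t)
    (htail : ∀ t : ℕ, cT * (((t:ℝ)+1) ^ (-α)) ≤ tail t)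
    (N : ℕ) (hN : 8 ≤ N) (hNlow : cu2 * ((N:ℝ) ^ (α-1)) ≤ u N)
    (g : ℕ) (hg : g ≤ N/2) :
    ∑ m ∈ Finset.Ioc (N/2 - g) (N - g), K m * u (N - g - m)
      ≤ (8*cu/cu2 + 64*cK*(1+cu/α)/(cu2*cT)) * u N * tail (N/2 - g) := by
  have hN0 : (0:ℝ) < N := by
    have : 0 < N := by omega
    exact_mod_cast this
  have hNα : (0:ℝ) ≤ (N:ℝ) ^ (α-1) := Real.rpow_nonneg (le_of_lt hN0) _
  set t := N/2 - g with ht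
  set L := N - g with hL
  set m0 := t + (N - N/2)/2 with hm0
  have htm0 : t ≤ m0 := by omega
  have hm0L : m0 ≤ L := by omega
  have htt : 0 ≤ tail t := htnn t
  have huN : 0 < u N := lt_of_lt_of_le (by positivity) hNlow
  -- the key lower bound on `u N * tail t`
  have hprod : cu2 * cT * (N:ℝ) ^ (-1 : ℝ) ≤ u N * tail t := by
    have h1 : ((N:ℝ)) ^ (-α) ≤ ((t:ℝ)+1) ^ (-α) := by
      apply Real.rpow_le_rpow_of_nonpos (by positivity) ?_ (by linarith)
      have : t + 1 ≤ N := by omega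
      exact_mod_cast this
    have h2 : cT * ((N:ℝ)) ^ (-α) ≤ tail t :=
      le_trans (mul_le_mul_of_nonneg_left h1 (le_of_lt hcT)) (htail t)
    have h3 : (N:ℝ) ^ (α-1) * (N:ℝ) ^ (-α) = (N:ℝ) ^ (-1:ℝ) := by
      rw [← Real.rpow_add hN0]; ring_nf
    calc cu2 * cT * (N:ℝ) ^ (-1:ℝ)
        = (cu2 * (N:ℝ) ^ (α-1)) * (cT * (N:ℝ) ^ (-α)) := by rw [← h3]; ring
      _ ≤ u N * tail t := by
          apply mul_le_mul hNlow h2 (by positivity) (le_of_lt huN)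
  rw [← Finset.sum_Ioc_consecutive _ htm0 hm0L]
  have hS1 : ∑ m ∈ Finset.Ioc t m0, K m * u (L - m)
      ≤ (8*cu/cu2) * u N * tail t := by
    have hbnd : ∀ m ∈ Finset.Ioc t m0, K m * u (L - m)
        ≤ (8 * cu * (N:ℝ) ^ (α-1)) * K m := by
      intro m hm
      rw [Finset.mem_Ioc] at hm
      have hLm1 : 1 ≤ L - m := by omega
      have h8 : N ≤ 8 * (L - m) := by omega
      have hu' : u (L - m) ≤ cu * (((L-m:ℕ)):ℝ) ^ (α-1) := huup _ hLm1
      have hcast : ((N:ℝ))/8 ≤ ((L-m:ℕ):ℝ) := by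
        have : (N:ℝ) ≤ 8 * ((L-m:ℕ):ℝ) := by exact_mod_cast h8
        linarith
      have hmono : (((L-m:ℕ)):ℝ) ^ (α-1) ≤ ((N:ℝ)/8) ^ (α-1) :=
        Real.rpow_le_rpow_of_nonpos (by positivity) hcast (by linarith)
      have hsplit : ((N:ℝ)/8) ^ (α-1) ≤ 8 * (N:ℝ) ^ (α-1) := by
        rw [Real.div_rpow (le_of_lt hN0) (by norm_num : (0:ℝ) ≤ 8)]
        rw [div_eq_mul_inv, ← Real.rpow_neg (by norm_num : (0:ℝ) ≤ 8)]
        have h81 : (8:ℝ) ^ (-(α-1)) ≤ 8 := by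
          calc (8:ℝ) ^ (-(α-1)) ≤ (8:ℝ) ^ (1:ℝ) := by
                apply Real.rpow_le_rpow_of_exponent_le (by norm_num)
                linarith
            _ = 8 := Real.rpow_one 8
        calc (N:ℝ) ^ (α-1) * (8:ℝ) ^ (-(α-1))
            ≤ (N:ℝ) ^ (α-1) * 8 := mul_le_mul_of_nonneg_left h81 hNα
          _ = 8 * (N:ℝ) ^ (α-1) := by ring
      have : u (L - m) ≤ 8 * cu * (N:ℝ) ^ (α-1) := by
        calc u (L - m) ≤ cu * (((L-m:ℕ)):ℝ) ^ (α-1) := hu'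
          _ ≤ cu * (8 * (N:ℝ) ^ (α-1)) := by
              apply mul_le_mul_of_nonneg_left (le_trans hmono hsplit) (le_of_lt hcu)
          _ = 8 * cu * (N:ℝ) ^ (α-1) := by ring
      calc K m * u (L - m) ≤ K m * (8 * cu * (N:ℝ) ^ (α-1)) :=
            mul_le_mul_of_nonneg_left this (hKnn m)
        _ = (8 * cu * (N:ℝ) ^ (α-1)) * K m := by ring
    calc ∑ m ∈ Finset.Ioc t m0, K m * u (L - m)
        ≤ ∑ m ∈ Finset.Ioc t m0, (8 * cu * (N:ℝ) ^ (α-1)) * K m :=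
          Finset.sum_le_sum hbnd
      _ = (8 * cu * (N:ℝ) ^ (α-1)) * ∑ m ∈ Finset.Ioc t m0, K m := by
          rw [Finset.mul_sum]
      _ ≤ (8 * cu * (N:ℝ) ^ (α-1)) * tail t := by
          apply mul_le_mul_of_nonneg_left (hsumtail t m0) (by positivity)
      _ ≤ (8*cu/cu2) * u N * tail t := by
          apply mul_le_mul_of_nonneg_right ?_ htt
          calc 8 * cu * (N:ℝ) ^ (α-1) = (8 * cu / cu2) * (cu2 * (N:ℝ) ^ (α-1)) := by
                field_simp
            _ ≤ (8*cu/cu2) * u N := by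
                apply mul_le_mul_of_nonneg_left hNlow (by positivity)

  have hS2 : ∑ m ∈ Finset.Ioc m0 L, K m * u (L - m)
      ≤ (64*cK*(1+cu/α)/(cu2*cT)) * u N * tail t := by
    have hKbnd : ∀ m ∈ Finset.Ioc m0 L, K m * u (L - m)
        ≤ (64 * cK * (N:ℝ) ^ (-(1+α))) * u (L - m) := by
      intro m hm
      rw [Finset.mem_Ioc] at hm
      have hm1 : 1 ≤ m := by omega
      have h8 : N ≤ 8 * m := by omega
      have hcast : ((N:ℝ))/8 ≤ (m:ℝ) := by
        have : (N:ℝ) ≤ 8 * (m:ℝ) := by exact_mod_cast h8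
        linarith
      have hKm : K m ≤ 64 * cK * (N:ℝ) ^ (-(1+α)) := by
        have h1 : K m ≤ cK * ((m:ℝ) ^ (-(1+α))) := hKup m hm1
        have h2 : (m:ℝ) ^ (-(1+α)) ≤ ((N:ℝ)/8) ^ (-(1+α)) :=
          Real.rpow_le_rpow_of_nonpos (by positivity) hcast (by linarith)
        have h3 : ((N:ℝ)/8) ^ (-(1+α)) ≤ 64 * (N:ℝ) ^ (-(1+α)) := by
          rw [Real.div_rpow (le_of_lt hN0) (by norm_num : (0:ℝ) ≤ 8)]
          rw [div_eq_mul_inv, ← Real.rpow_neg (by norm_num : (0:ℝ) ≤ 8)]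
          have h81 : (8:ℝ) ^ (-(-(1+α))) ≤ 64 := by
            calc (8:ℝ) ^ (-(-(1+α))) ≤ (8:ℝ) ^ (2:ℝ) := by
                  apply Real.rpow_le_rpow_of_exponent_le (by norm_num)
                  linarith
              _ = 64 := by
                  rw [show (2:ℝ) = ((2:ℕ):ℝ) by norm_num, Real.rpow_natCast]
                  norm_num
          calc (N:ℝ) ^ (-(1+α)) * (8:ℝ) ^ (-(-(1+α)))
              ≤ (N:ℝ) ^ (-(1+α)) * 64 :=
                mul_le_mul_of_nonneg_left h81 (Real.rpow_nonneg (le_of_lt hN0) _)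
            _ = 64 * (N:ℝ) ^ (-(1+α)) := by ring
        calc K m ≤ cK * ((m:ℝ) ^ (-(1+α))) := h1
          _ ≤ cK * (64 * (N:ℝ) ^ (-(1+α))) :=
              mul_le_mul_of_nonneg_left (le_trans h2 h3) (le_of_lt hcK)
          _ = 64 * cK * (N:ℝ) ^ (-(1+α)) := by ring
      exact mul_le_mul_of_nonneg_right hKm (hunn _)
    have husum : ∑ m ∈ Finset.Ioc m0 L, u (L - m) ≤ 1 + cu / α * (N:ℝ) ^ α := by
      have himg : ∑ m ∈ Finset.Ioc m0 L, u (L - m)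
          = ∑ j ∈ (Finset.Ioc m0 L).image (fun m => L - m), u j := by
        rw [Finset.sum_image]
        intro x hx y hy hxy
        simp only [Finset.coe_Ioc, Set.mem_Ioc] at hx hy hxy
        omega
      rw [himg]
      have hsub : (Finset.Ioc m0 L).image (fun m => L - m) ⊆ Finset.range (N+1) := by
        intro j hj
        rw [Finset.mem_image] at hj
        obtain ⟨m, hm, rfl⟩ := hj
        rw [Finset.mem_range]
        omega
      calc ∑ j ∈ (Finset.Ioc m0 L).image (fun m => L - m), u j
          ≤ ∑ j ∈ Finset.range (N+1), u j :=
            Finset.sum_le_sum_of_subset_of_nonneg hsub (fun j _ _ => hunn j)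
        _ = (∑ i ∈ Finset.range N, u (i+1)) + u 0 := Finset.sum_range_succ' u N
        _ ≤ (∑ i ∈ Finset.range N, cu * (((i:ℝ))+1) ^ (α-1)) + 1 := by
            apply add_le_add ?_ (hu1 0)
            apply Finset.sum_le_sum
            intro i _
            have := huup (i+1) (by omega)
            have hcast : (((i+1:ℕ)):ℝ) = (i:ℝ)+1 := by push_cast; ring
            rw [hcast] at this
            exact this
        _ ≤ cu * ((N:ℝ) ^ α / α) + 1 := by
            apply add_le_add_left
            rw [← Finset.mul_sum]
            exact mul_le_mul_of_nonneg_left (sum_rpow_le' α hα0 (le_of_lt hα1) N)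
              (le_of_lt hcu)
        _ = 1 + cu / α * (N:ℝ) ^ α := by ring
    have hNneg : (0:ℝ) ≤ (N:ℝ) ^ (-(1+α)) := Real.rpow_nonneg (le_of_lt hN0) _
    have hstep : (N:ℝ) ^ (-(1+α)) * (1 + cu / α * (N:ℝ) ^ α)
        ≤ (1 + cu/α) * (N:ℝ) ^ (-1:ℝ) := by
      have e1 : (N:ℝ) ^ (-(1+α)) * (N:ℝ) ^ α = (N:ℝ) ^ (-1:ℝ) := by
        rw [← Real.rpow_add hN0]; ring_nf
      have e2 : (N:ℝ) ^ (-(1+α)) ≤ (N:ℝ) ^ (-1:ℝ) := by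
        apply Real.rpow_le_rpow_of_exponent_le ?_ (by linarith)
        have : (1:ℕ) ≤ N := by omega
        exact_mod_cast this
      have hca : 0 ≤ cu / α := by positivity
      calc (N:ℝ) ^ (-(1+α)) * (1 + cu / α * (N:ℝ) ^ α)
          = (N:ℝ) ^ (-(1+α)) + cu/α * ((N:ℝ) ^ (-(1+α)) * (N:ℝ) ^ α) := by ring
        _ = (N:ℝ) ^ (-(1+α)) + cu/α * (N:ℝ) ^ (-1:ℝ) := by rw [e1]
        _ ≤ (N:ℝ) ^ (-1:ℝ) + cu/α * (N:ℝ) ^ (-1:ℝ) := by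
            apply add_le_add_left e2
        _ = (1 + cu/α) * (N:ℝ) ^ (-1:ℝ) := by ring
    have hfin : (N:ℝ) ^ (-1:ℝ) ≤ u N * tail t / (cu2 * cT) := by
      rw [le_div_iff₀ (by positivity)]
      calc (N:ℝ) ^ (-1:ℝ) * (cu2 * cT) = cu2 * cT * (N:ℝ) ^ (-1:ℝ) := by ring
        _ ≤ u N * tail t := hprod
    calc ∑ m ∈ Finset.Ioc m0 L, K m * u (L - m)
        ≤ ∑ m ∈ Finset.Ioc m0 L, (64 * cK * (N:ℝ) ^ (-(1+α))) * u (L - m) :=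
          Finset.sum_le_sum hKbnd
      _ = (64 * cK) * ((N:ℝ) ^ (-(1+α)) * ∑ m ∈ Finset.Ioc m0 L, u (L - m)) := by
          simp only [Finset.mul_sum]
          exact Finset.sum_congr rfl (fun _ _ => by ring)
      _ ≤ (64 * cK) * ((N:ℝ) ^ (-(1+α)) * (1 + cu / α * (N:ℝ) ^ α)) := by
          apply mul_le_mul_of_nonneg_left ?_ (by positivity)
          exact mul_le_mul_of_nonneg_left husum hNneg
      _ ≤ (64 * cK) * ((1 + cu/α) * (N:ℝ) ^ (-1:ℝ)) := by
          apply mul_le_mul_of_nonneg_left hstep (by positivity)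
      _ ≤ (64 * cK) * ((1 + cu/α) * (u N * tail t / (cu2 * cT))) := by
          apply mul_le_mul_of_nonneg_left ?_ (by positivity)
          apply mul_le_mul_of_nonneg_left hfin (by positivity)
      _ = (64*cK*(1+cu/α)/(cu2*cT)) * u N * tail t := by
          field_simp
    done
  calc (∑ m ∈ Finset.Ioc t m0, K m * u (L - m))
        + ∑ m ∈ Finset.Ioc m0 L, K m * u (L - m)
      ≤ (8*cu/cu2) * u N * tail t + (64*cK*(1+cu/α)/(cu2*cT)) * u N * tail t :=
        add_le_add hS1 hS2
    _ = (8*cu/cu2 + 64*cK*(1+cu/α)/(cu2*cT)) * u N * tail t := by ring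

end RenewalAux

open RenewalAux in
/-- Absolute continuity of the renewal bridge on its first half: if
`K(n) ~ C_K n^{-(1+α)}` and `u(n) ~ (α sin(πα))/(π C_K) n^{α-1}`, there is a
constant `C` such that for all `N ≥ 2` and every bounded non-negative functional
`F` measurable with respect to `σ(τ ∩ [0, ⌊N/2⌋])`,
`E[F(τ) | N ∈ τ] ≤ C E[F(τ)]`. -/
theorem renewal_bridge_absolute_continuity
    {Ω : Type*} [MeasurableSpace Ω] (μ : Measure Ω) [IsProbabilityMeasure μ]
    (ξ : ℕ → Ω → ℕ) (hξmeas : ∀ n, Measurable (ξ n))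
    (hξindep : iIndepFun ξ μ)
    (hξid : ∀ n, Measure.map (ξ n) μ = Measure.map (ξ 0) μ)
    (hξpos : ∀ n w, 1 ≤ ξ n w)
    (inτ : ℕ → Ω → Prop)
    (hinτ : ∀ n w, inτ n w ↔ ∃ k : ℕ, (∑ m ∈ Finset.range k, ξ m w) = n)
    (α : ℝ) (hα0 : 0 < α) (hα1 : α < 1) (CK : ℝ) (hCK : 0 < CK)
    (hK : Tendsto (fun n : ℕ => (μ {w | ξ 0 w = n}).toReal * (n : ℝ) ^ (1 + α))
      atTop (nhds CK))
    (hu : Tendsto (fun n : ℕ =>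
        (μ {w | inτ n w}).toReal * (n : ℝ) ^ (1 - α))
      atTop (nhds (α * Real.sin (Real.pi * α) / (Real.pi * CK)))) :
    ∃ C : ℝ, 0 < C ∧ ∀ N : ℕ, 2 ≤ N →
      0 < (μ {w | inτ N w}).toReal →
      ∀ F : Ω → ℝ, Measurable F → (∀ w, 0 ≤ F w) → (∃ B : ℝ, ∀ w, F w ≤ B) →
      (∃ G : Set ℕ → ℝ, ∀ w, F w = G {i | i ≤ N / 2 ∧ inτ i w}) →
      (∫ w in {w | inτ N w}, F w ∂μ) / (μ {w | inτ N w}).toReal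
        ≤ C * ∫ w, F w ∂μ := by
  classical
  have hP : ∀ n w, inτ n w ↔ ∃ k, Sp ξ k w = n := hinτ
  set Kr : ℕ → ℝ := fun m => (μ (ξ 0 ⁻¹' {m})).toReal with hKrdef
  set ur : ℕ → ℝ := fun r => (μ {w | inτ r w}).toReal with hurdef
  set tr : ℕ → ℝ := fun t => (μ (ξ 0 ⁻¹' Set.Ioi t)).toReal with htrdef
  have hKnn : ∀ m, 0 ≤ Kr m := fun m => ENNReal.toReal_nonneg
  have hunn : ∀ r, 0 ≤ ur r := fun r => ENNReal.toReal_nonneg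
  have htnn : ∀ t, 0 ≤ tr t := fun t => ENNReal.toReal_nonneg
  have hu1 : ∀ r, ur r ≤ 1 := by
    intro r
    have h1 : μ {w | inτ r w} ≤ 1 := prob_le_one
    have := ENNReal.toReal_mono ENNReal.one_ne_top h1
    simpa using this
  -- upper bound on K
  obtain ⟨cK0, hcK0⟩ := hK.bddAbove_range
  set cK := max cK0 1 with hcKdef
  have hcKpos : (0:ℝ) < cK := lt_of_lt_of_le one_pos (le_max_right _ _)
  have hKup : ∀ m : ℕ, 1 ≤ m → Kr m ≤ cK * ((m:ℝ) ^ (-(1+α))) := by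
    intro m hm
    have hm0 : (0:ℝ) < m := by exact_mod_cast hm
    have hb : Kr m * (m:ℝ) ^ (1+α) ≤ cK :=
      le_trans (hcK0 ⟨m, rfl⟩) (le_max_left _ _)
    have hid : (m:ℝ) ^ (1+α) * (m:ℝ) ^ (-(1+α)) = 1 := by
      rw [← Real.rpow_add hm0, show (1+α) + -(1+α) = 0 by ring, Real.rpow_zero]
    calc Kr m = Kr m * ((m:ℝ) ^ (1+α) * (m:ℝ) ^ (-(1+α))) := by rw [hid, mul_one]
      _ = (Kr m * (m:ℝ) ^ (1+α)) * (m:ℝ) ^ (-(1+α)) := by ring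
      _ ≤ cK * (m:ℝ) ^ (-(1+α)) :=
          mul_le_mul_of_nonneg_right hb (Real.rpow_nonneg hm0.le _)
  -- upper bound on u
  obtain ⟨cu0, hcu0⟩ := hu.bddAbove_range
  set cu := max cu0 1 with hcudef
  have hcupos : (0:ℝ) < cu := lt_of_lt_of_le one_pos (le_max_right _ _)
  have huup : ∀ r : ℕ, 1 ≤ r → ur r ≤ cu * ((r:ℝ) ^ (α-1)) := by
    intro r hr
    have hr0 : (0:ℝ) < r := by exact_mod_cast hr
    have hb : ur r * (r:ℝ) ^ (1-α) ≤ cu :=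
      le_trans (hcu0 ⟨r, rfl⟩) (le_max_left _ _)
    have hid : (r:ℝ) ^ (1-α) * (r:ℝ) ^ (α-1) = 1 := by
      rw [← Real.rpow_add hr0, show (1-α)+(α-1) = 0 by ring, Real.rpow_zero]
    calc ur r = ur r * ((r:ℝ) ^ (1-α) * (r:ℝ) ^ (α-1)) := by rw [hid, mul_one]
      _ = (ur r * (r:ℝ) ^ (1-α)) * (r:ℝ) ^ (α-1) := by ring
      _ ≤ cu * (r:ℝ) ^ (α-1) :=
          mul_le_mul_of_nonneg_right hb (Real.rpow_nonneg hr0.le _)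
  -- lower bound on u
  have hpi := Real.pi_pos
  have hsin : 0 < Real.sin (Real.pi * α) :=
    Real.sin_pos_of_pos_of_lt_pi (by positivity) (mul_lt_of_lt_one_right hpi hα1)
  set l0 := α * Real.sin (Real.pi * α) / (Real.pi * CK) with hl0def
  have hl0 : 0 < l0 := div_pos (mul_pos hα0 hsin) (mul_pos hpi hCK)
  have hev := hu.eventually (eventually_gt_nhds (by linarith : l0/2 < l0))
  rw [eventually_atTop] at hev
  obtain ⟨N1, hN1⟩ := hev
  set cu2 := l0/2 with hcu2def
  have hcu2 : 0 < cu2 := by positivity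
  have hulow : ∀ n : ℕ, N1 ≤ n → 1 ≤ n → cu2 * (n:ℝ) ^ (α-1) ≤ ur n := by
    intro n h1 h2
    have hn0 : (0:ℝ) < n := by exact_mod_cast h2
    have hb := (hN1 n h1).le
    have hid : (n:ℝ) ^ (1-α) * (n:ℝ) ^ (α-1) = 1 := by
      rw [← Real.rpow_add hn0, show (1-α)+(α-1) = 0 by ring, Real.rpow_zero]
    calc cu2 * (n:ℝ) ^ (α-1) ≤ (ur n * (n:ℝ) ^ (1-α)) * (n:ℝ) ^ (α-1) :=
          mul_le_mul_of_nonneg_right hb (Real.rpow_nonneg hn0.le _)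
      _ = ur n * ((n:ℝ) ^ (1-α) * (n:ℝ) ^ (α-1)) := by ring
      _ = ur n := by rw [hid, mul_one]
  -- lower bound on K, eventually
  have hevK := hK.eventually (eventually_gt_nhds (by linarith : CK/2 < CK))
  rw [eventually_atTop] at hevK
  obtain ⟨M0', hM0'⟩ := hevK
  set M0 := max M0' 1 with hM0def
  have hKlow : ∀ m : ℕ, M0 ≤ m → (CK/2) * (m:ℝ) ^ (-(1+α)) ≤ Kr m := by
    intro m hm
    have hm1 : 1 ≤ m := le_trans (le_max_right _ _) hm
    have hm0 : (0:ℝ) < m := by exact_mod_cast hm1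
    have hb := (hM0' m (le_trans (le_max_left _ _) hm)).le
    have hid : (m:ℝ) ^ (1+α) * (m:ℝ) ^ (-(1+α)) = 1 := by
      rw [← Real.rpow_add hm0, show (1+α) + -(1+α) = 0 by ring, Real.rpow_zero]
    calc (CK/2) * (m:ℝ) ^ (-(1+α)) ≤ (Kr m * (m:ℝ) ^ (1+α)) * (m:ℝ) ^ (-(1+α)) :=
          mul_le_mul_of_nonneg_right hb (Real.rpow_nonneg hm0.le _)
      _ = Kr m * ((m:ℝ) ^ (1+α) * (m:ℝ) ^ (-(1+α))) := by ring
      _ = Kr m := by rw [hid, mul_one]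
  -- sums of K bounded by the tail
  have hsumtailE : ∀ t n : ℕ, ∑ m ∈ Finset.Ioc t n, μ (ξ 0 ⁻¹' {m})
      ≤ μ (ξ 0 ⁻¹' Set.Ioi t) := by
    intro t n
    rw [← measure_biUnion_finset ?disj (fun m _ => (hξmeas 0) (measurableSet_singleton m))]
    case disj =>
      intro a _ b _ hab
      simp only [Function.onFun]
      rw [Set.disjoint_left]
      intro w hwa hwb
      simp only [Set.mem_preimage, Set.mem_singleton_iff] at hwa hwb
      exact hab (hwa ▸ hwb ▸ rfl)
    apply measure_mono
    intro w hw
    simp only [Set.mem_iUnion] at hw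
    obtain ⟨m, hm, hwm⟩ := hw
    simp only [Set.mem_preimage, Set.mem_singleton_iff] at hwm
    simp only [Set.mem_preimage, Set.mem_Ioi]
    rw [Finset.mem_Ioc] at hm
    omega
  have hsumtail : ∀ t n : ℕ, ∑ m ∈ Finset.Ioc t n, Kr m ≤ tr t := by
    intro t n
    calc ∑ m ∈ Finset.Ioc t n, Kr m
        = (∑ m ∈ Finset.Ioc t n, μ (ξ 0 ⁻¹' {m})).toReal :=
          (ENNReal.toReal_sum (fun a _ => measure_ne_top μ _)).symm
      _ ≤ tr t := ENNReal.toReal_mono (measure_ne_top μ _) (hsumtailE t n)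
  have htmono : ∀ t t' : ℕ, t ≤ t' → tr t' ≤ tr t := by
    intro t t' h
    apply ENNReal.toReal_mono (measure_ne_top μ _)
    apply measure_mono
    apply Set.preimage_mono
    intro x hx
    simp only [Set.mem_Ioi] at hx ⊢
    omega
  -- lower bound on the tail
  have hclaimA : ∀ t : ℕ, M0 ≤ t → (CK/8) * ((t:ℝ)+1) ^ (-α) ≤ tr t := by
    intro t ht
    have hT0 : (0:ℝ) < (t:ℝ)+1 := by positivity
    have hcard : (Finset.Ioc t (2*t+2)).card = t + 2 := by rw [Nat.card_Ioc]; omega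
    have hlow : ∀ m ∈ Finset.Ioc t (2*t+2),
        (CK/2) * ((2*(t:ℝ)+2)) ^ (-(1+α)) ≤ Kr m := by
      intro m hm
      rw [Finset.mem_Ioc] at hm
      have h1 : (CK/2) * (m:ℝ) ^ (-(1+α)) ≤ Kr m := hKlow m (by omega)
      have hm0 : (0:ℝ) < m := by
        have : 1 ≤ m := by omega
        exact_mod_cast this
      have hmle : (m:ℝ) ≤ 2*(t:ℝ)+2 := by
        have := hm.2
        push_cast
        exact_mod_cast this
      have h2 : ((2*(t:ℝ)+2)) ^ (-(1+α)) ≤ (m:ℝ) ^ (-(1+α)) :=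
        Real.rpow_le_rpow_of_nonpos hm0 hmle (by linarith)
      exact le_trans (mul_le_mul_of_nonneg_left h2 (by positivity)) h1
    have hsum := Finset.card_nsmul_le_sum _ _ _ hlow
    rw [hcard, nsmul_eq_mul] at hsum
    have h2T : (2*(t:ℝ)+2) ^ (-(1+α)) = (2:ℝ)^(-(1+α)) * ((t:ℝ)+1)^(-(1+α)) := by
      rw [show 2*(t:ℝ)+2 = 2*((t:ℝ)+1) by ring, Real.mul_rpow (by norm_num) hT0.le]
    have h14 : (1/4:ℝ) ≤ (2:ℝ)^(-(1+α)) := by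
      have h1 : (2:ℝ)^(-2:ℝ) ≤ (2:ℝ)^(-(1+α)) :=
        Real.rpow_le_rpow_of_exponent_le (by norm_num) (by linarith)
      have h22 : (2:ℝ)^(-2:ℝ) = 1/4 := by
        rw [show (-2:ℝ) = -((2:ℕ):ℝ) by norm_num, Real.rpow_neg (by norm_num),
          Real.rpow_natCast]
        norm_num
      rw [← h22]; exact h1
    have hTT : ((t:ℝ)+1) * (((t:ℝ)+1)^(-(1+α))) = ((t:ℝ)+1)^(-α) := by
      calc ((t:ℝ)+1) * (((t:ℝ)+1)^(-(1+α)))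
          = ((t:ℝ)+1)^(1:ℝ) * (((t:ℝ)+1)^(-(1+α))) := by rw [Real.rpow_one]
        _ = ((t:ℝ)+1)^(1 + -(1+α)) := (Real.rpow_add hT0 _ _).symm
        _ = ((t:ℝ)+1)^(-α) := by ring_nf
    have hcast2 : ((t+2:ℕ):ℝ) = ((t:ℝ)+1) + 1 := by push_cast; ring
    have hTneg : (0:ℝ) ≤ ((t:ℝ)+1)^(-(1+α)) := Real.rpow_nonneg hT0.le _
    have hchain : (CK/8) * ((t:ℝ)+1) ^ (-α)
        ≤ ((t+2:ℕ):ℝ) * ((CK/2) * ((2*(t:ℝ)+2)) ^ (-(1+α))) := by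
      rw [h2T, hcast2, ← hTT]
      have e1 : (CK/8) * (((t:ℝ)+1) * (((t:ℝ)+1)^(-(1+α))))
          = ((t:ℝ)+1) * ((CK/2) * ((1/4) * (((t:ℝ)+1)^(-(1+α))))) := by ring
      rw [e1]
      have e2 : ((t:ℝ)+1) * ((CK/2) * ((1/4) * (((t:ℝ)+1)^(-(1+α)))))
          ≤ ((t:ℝ)+1) * ((CK/2) * ((2:ℝ)^(-(1+α)) * (((t:ℝ)+1)^(-(1+α))))) := by
        apply mul_le_mul_of_nonneg_left ?_ hT0.le
        apply mul_le_mul_of_nonneg_left ?_ (by positivity)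
        exact mul_le_mul_of_nonneg_right h14 hTneg
      apply le_trans e2
      apply mul_le_mul_of_nonneg_right ?_ (by positivity)
      linarith
    exact le_trans hchain (le_trans hsum (hsumtail t (2*t+2)))
  set cT := (CK/8) * ((M0:ℝ)+1)^(-α) with hcTdef
  have hM01 : (1:ℝ) ≤ (M0:ℝ)+1 := by
    have := Nat.cast_nonneg (α := ℝ) M0
    linarith
  have hcT : 0 < cT := by
    apply mul_pos (by positivity)
    exact Real.rpow_pos_of_pos (by positivity) _
  have htail : ∀ t : ℕ, cT * ((t:ℝ)+1) ^ (-α) ≤ tr t := by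
    intro t
    have ht1 : (1:ℝ) ≤ (t:ℝ)+1 := by
      have := Nat.cast_nonneg (α := ℝ) t
      linarith
    have htle1 : ((t:ℝ)+1)^(-α) ≤ 1 :=
      Real.rpow_le_one_of_one_le_of_nonpos ht1 (by linarith)
    have htpos : (0:ℝ) ≤ ((t:ℝ)+1)^(-α) := Real.rpow_nonneg (by positivity) _
    rcases le_or_gt M0 t with h | h
    · have hA := hclaimA t h
      have hle : cT ≤ CK/8 := by
        rw [hcTdef]
        calc (CK/8) * ((M0:ℝ)+1)^(-α) ≤ (CK/8) * 1 :=
              mul_le_mul_of_nonneg_left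
                (Real.rpow_le_one_of_one_le_of_nonpos hM01 (by linarith))
                (by positivity)
          _ = CK/8 := mul_one _
      exact le_trans (mul_le_mul_of_nonneg_right hle htpos) hA
    · have h1 : tr M0 ≤ tr t := htmono t M0 h.le
      have h2 := hclaimA M0 le_rfl
      calc cT * ((t:ℝ)+1)^(-α) ≤ cT * 1 :=
            mul_le_mul_of_nonneg_left htle1 hcT.le
        _ = (CK/8) * ((M0:ℝ)+1)^(-α) := by rw [mul_one, hcTdef]
        _ ≤ tr M0 := h2
        _ ≤ tr t := h1
  -- the constants
  set C1 := 8*cu/cu2 + 64*cK*(1+cu/α)/(cu2*cT) with hC1def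
  have hC1 : 0 < C1 := by positivity
  set NN := N1 + 8 with hNNdef
  set Cs := (∑ n ∈ Finset.range NN, if 0 < ur n then (ur n)⁻¹ else 0) + 1 with hCsdef
  have hCssum : (0:ℝ) ≤ ∑ n ∈ Finset.range NN, if 0 < ur n then (ur n)⁻¹ else 0 := by
    apply Finset.sum_nonneg
    intro n _
    split_ifs with h
    · positivity
    · exact le_refl 0
  have hCs0 : 0 < Cs := by rw [hCsdef]; linarith
  refine ⟨Cs + C1, by linarith, ?_⟩
  intro N hN2 huNpos F hFmeas hFnn hFbdd hFfac
  obtain ⟨B, hB⟩ := hFbdd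
  obtain ⟨G, hG⟩ := hFfac
  have huN : 0 < ur N := huNpos
  have hFint : Integrable F μ := by
    apply (integrable_const B).mono' hFmeas.aestronglyMeasurable
    apply Filter.Eventually.of_forall
    intro w
    rw [Real.norm_eq_abs, abs_of_nonneg (hFnn w)]
    exact hB w
  have hIntnn : (0:ℝ) ≤ ∫ w, F w ∂μ := integral_nonneg hFnn
  rw [div_le_iff₀ huN]
  by_cases hbig : NN ≤ N
  · -- large N : use the renewal decomposition
    have hM : N/2 < N := by omega
    have hcore : ∀ l : PartL (N/2),
        ∑ m ∈ Finset.Icc (N/2 - l.1.sum + 1) (N - l.1.sum),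
          (μ (ξ 0 ⁻¹' {m})).toReal * (μ {w | inτ (N - l.1.sum - m) w}).toReal
        ≤ (C1 * ur N) * tr (N/2 - l.1.sum) := by
      intro l
      rw [Finset.Icc_add_one_left_eq_Ioc]
      have hh := analytic_core α cK cu cu2 cT hα0 hα1 hcKpos hcupos hcu2 hcT
        Kr ur tr hKnn hunn htnn hKup huup hu1 hsumtail htail
        N (by omega) (hulow N (by omega) (by omega)) l.1.sum l.2.2
      calc ∑ m ∈ Finset.Ioc (N/2 - l.1.sum) (N - l.1.sum),
            (μ (ξ 0 ⁻¹' {m})).toReal * (μ {w | inτ (N - l.1.sum - m) w}).toReal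
          = ∑ m ∈ Finset.Ioc (N/2 - l.1.sum) (N - l.1.sum), Kr m * ur (N - l.1.sum - m) := rfl
        _ ≤ (8*cu/cu2 + 64*cK*(1+cu/α)/(cu2*cT)) * ur N * tr (N/2 - l.1.sum) := hh
        _ = (C1 * ur N) * tr (N/2 - l.1.sum) := by rw [hC1def]
    have hCl : ∀ l : PartL (N/2),
        μ (Epart ξ (N/2) l ∩ {w | inτ N w})
          ≤ ENNReal.ofReal (C1 * ur N) * μ (Epart ξ (N/2) l) := by
      intro l
      exact per_l_bound hξindep hξmeas hξid hP hξpos hM l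
        (by positivity) (hcore l)
    have hassem := assemble hξindep hξmeas hξid hP hξpos (N/2) N
      (ENNReal.ofReal (C1 * ur N)) hCl (fun w => ENNReal.ofReal (F w))
      (fun l => ENNReal.ofReal (G {i | i ≤ N/2 ∧ ∃ j ≤ l.1.length, (l.1.take j).sum = i}))
      (fun l w hw => by
        show ENNReal.ofReal (F w) = _
        rw [hG w, set_eq_on_Epart hP hξpos (N/2) l w hw])
    have hEq1 : ∫ w, F w ∂μ = (∫⁻ w, ENNReal.ofReal (F w) ∂μ).toReal :=
      integral_eq_lintegral_of_nonneg_ae (Filter.Eventually.of_forall hFnn)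
        hFmeas.aestronglyMeasurable
    have hEq2 : ∫ w in {w | inτ N w}, F w ∂μ
        = (∫⁻ w in {w | inτ N w}, ENNReal.ofReal (F w) ∂μ).toReal :=
      integral_eq_lintegral_of_nonneg_ae (Filter.Eventually.of_forall hFnn)
        hFmeas.aestronglyMeasurable
    have hfin : ∫⁻ w, ENNReal.ofReal (F w) ∂μ ≠ ⊤ := by
      apply ne_top_of_le_ne_top ?_ (lintegral_mono
        (fun w => ENNReal.ofReal_le_ofReal (hB w)))
      rw [lintegral_const]
      exact ENNReal.mul_ne_top ENNReal.ofReal_ne_top (measure_ne_top μ _)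
    have hfin2 : ENNReal.ofReal (C1 * ur N) * ∫⁻ w, ENNReal.ofReal (F w) ∂μ ≠ ⊤ :=
      ENNReal.mul_ne_top ENNReal.ofReal_ne_top hfin
    have hreal := ENNReal.toReal_mono hfin2 hassem
    rw [ENNReal.toReal_mul, ENNReal.toReal_ofReal (by positivity)] at hreal
    rw [hEq2, hEq1]
    have h2 : (0:ℝ) ≤ (∫⁻ w, ENNReal.ofReal (F w) ∂μ).toReal := ENNReal.toReal_nonneg
    nlinarith [mul_nonneg (mul_nonneg hCs0.le h2) huN.le]
  · -- small N : trivial bound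
    have hstep : ∫ w in {w | inτ N w}, F w ∂μ ≤ ∫ w, F w ∂μ :=
      setIntegral_le_integral hFint (Filter.Eventually.of_forall hFnn)
    have hCsN : (ur N)⁻¹ ≤ Cs := by
      have hmem : N ∈ Finset.range NN := by rw [Finset.mem_range]; omega
      have hterm := Finset.single_le_sum
        (f := fun n => if 0 < ur n then (ur n)⁻¹ else 0)
        (fun n _ => by
          split_ifs with h
          exacts [inv_nonneg.2 (hunn n), le_refl 0]) hmem
      rw [if_pos huN] at hterm
      rw [hCsdef]
      linarith
    have key : ∫ w, F w ∂μ = ((ur N)⁻¹ * ∫ w, F w ∂μ) * ur N := by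
      field_simp
    calc ∫ w in {w | inτ N w}, F w ∂μ ≤ ∫ w, F w ∂μ := hstep
      _ = ((ur N)⁻¹ * ∫ w, F w ∂μ) * ur N := key
      _ ≤ (Cs * ∫ w, F w ∂μ) * ur N := by
          apply mul_le_mul_of_nonneg_right ?_ huN.le
          exact mul_le_mul_of_nonneg_right hCsN hIntnn
      _ ≤ ((Cs + C1) * ∫ w, F w ∂μ) * ur N := by
          apply mul_le_mul_of_nonneg_right ?_ huN.le
          exact mul_le_mul_of_nonneg_right (by linarith) hIntnn
end
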